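/- arXiv:1502.04605 — 9 statements merged into one kernel-verified Lean document; each statement's English description precedes it below -/
import Mathlib

section
/- If f : [a,b] → ℝ is convex and integrable on [a,b] with a < b, then (2/(b-a)) ∫_a^b f(x) dx ≤ (f(a) + f(b))/2 + f((a+b)/2). -/
open Set intervalIntegral

noncomputable def supOn (a b : ℝ) (f : ℝ → ℝ) : ℝ := ⨆ x : Set.Icc a b, |f x|

def IsC2On (a b : ℝ) (g g' g'' : ℝ → ℝ) : Prop :=
  (∀ x ∈ Set.Icc a b, HasDerivWithinAt g (g' x) (Set.Icc a b) x) ∧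
  (∀ x ∈ Set.Icc a b, HasDerivWithinAt g' (g'' x) (Set.Icc a b) x) ∧
  ContinuousOn g'' (Set.Icc a b)

noncomputable def KF (a b t : ℝ) (f : ℝ → ℝ) : ℝ :=
  sInf {v : ℝ | ∃ g g' g'', IsC2On a b g g' g'' ∧
    v = supOn a b (fun x => f x - g x) + t * supOn a b g''}

noncomputable def bullen (a b : ℝ) (f : ℝ → ℝ) : ℝ :=
  (f a + f b) / 2 + f ((a + b) / 2) - (2 / (b - a)) * ∫ x in a..b, f x

noncomputable def bullenC (a b : ℝ) (n : ℕ) (x : ℕ → ℝ) (f : ℝ → ℝ) : ℝ :=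
  (1 / (b - a)) * ∑ i ∈ Finset.range n, (x (i+1) - x i) *
    ((f (x i) + f (x (i+1))) / 2 + f ((x i + x (i+1)) / 2)
      - (2 / (x (i+1) - x i)) * ∫ t in (x i)..(x (i+1)), f t)

noncomputable def omega1 (a b : ℝ) (f : ℝ → ℝ) (h : ℝ) : ℝ :=
  sSup {v : ℝ | ∃ x ∈ Set.Icc a b, ∃ y ∈ Set.Icc a b, |x - y| ≤ h ∧ v = |f x - f y|}

noncomputable def omega2 (a b : ℝ) (f : ℝ → ℝ) (h : ℝ) : ℝ :=
  sSup {v : ℝ | ∃ x t : ℝ, 0 ≤ t ∧ t ≤ h ∧ x - t ∈ Set.Icc a b ∧ x + t ∈ Set.Icc a b ∧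
    v = |f (x + t) - 2 * f x + f (x - t)|}


lemma trapezoid_bound (a b : ℝ) (hab : a < b) (f : ℝ → ℝ)
    (hconv : ConvexOn ℝ (Set.Icc a b) f)
    (hint : IntervalIntegrable f MeasureTheory.volume a b) :
    ∫ x in a..b, f x ≤ (b - a) * (f a + f b) / 2 := by
  have hba : (0:ℝ) < b - a := by linarith
  have hg : IntervalIntegrable (fun x => ((b - x) * f a + (x - a) * f b) / (b - a))
      MeasureTheory.volume a b := (Continuous.intervalIntegrable (by continuity) a b)
  have hle : ∀ x ∈ Set.Icc a b, f x ≤ ((b - x) * f a + (x - a) * f b) / (b - a) := by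
    intro x hx
    obtain ⟨hax, hxb⟩ := hx
    have h1 : (0:ℝ) ≤ (b - x) / (b - a) := div_nonneg (by linarith) hba.le
    have h2 : (0:ℝ) ≤ (x - a) / (b - a) := div_nonneg (by linarith) hba.le
    have h3 : (b - x) / (b - a) + (x - a) / (b - a) = 1 := by field_simp; ring
    have key := hconv.2 (Set.left_mem_Icc.2 hab.le) (Set.right_mem_Icc.2 hab.le) h1 h2 h3
    simp only [smul_eq_mul] at key
    have hx' : (b - x) / (b - a) * a + (x - a) / (b - a) * b = x := by
      field_simp; ring
    rw [hx'] at key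
    calc f x ≤ (b - x) / (b - a) * f a + (x - a) / (b - a) * f b := key
      _ = ((b - x) * f a + (x - a) * f b) / (b - a) := by ring
  have hmono := intervalIntegral.integral_mono_on hab.le hint hg
      (fun x hx => hle x (by simpa using hx))
  have hcalc : (∫ x in a..b, ((b - x) * f a + (x - a) * f b) / (b - a))
      = (b - a) * (f a + f b) / 2 := by
    have heq : ∀ x : ℝ, ((b - x) * f a + (x - a) * f b) / (b - a)
        = x * ((f b - f a) / (b - a)) + (b * f a - a * f b) / (b - a) := by
      intro x; field_simp; ring
    simp only [heq]
    rw [intervalIntegral.integral_add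
        (Continuous.intervalIntegrable (by continuity) a b)
        intervalIntegrable_const,
      intervalIntegral.integral_mul_const, integral_id,
      integral_const]
    simp only [smul_eq_mul]
    field_simp
    ring
  linarith [hmono, hcalc.le, hcalc.ge]

theorem stmt0 (a b : ℝ) (hab : a < b) (f : ℝ → ℝ)
    (hconv : ConvexOn ℝ (Set.Icc a b) f)
    (hint : IntervalIntegrable f MeasureTheory.volume a b) :
    (2 / (b - a)) * ∫ x in a..b, f x ≤ (f a + f b) / 2 + f ((a + b) / 2) := by
  set m := (a + b) / 2 with hm
  have ham : a < m := by simp [hm]; linarith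
  have hmb : m < b := by simp [hm]; linarith
  have hsub1 : Set.Icc a m ⊆ Set.Icc a b := Set.Icc_subset_Icc le_rfl hmb.le
  have hsub2 : Set.Icc m b ⊆ Set.Icc a b := Set.Icc_subset_Icc ham.le le_rfl
  have hint1 : IntervalIntegrable f MeasureTheory.volume a m :=
    hint.mono_set (by rw [Set.uIcc_of_le ham.le, Set.uIcc_of_le hab.le]; exact hsub1)
  have hint2 : IntervalIntegrable f MeasureTheory.volume m b :=
    hint.mono_set (by rw [Set.uIcc_of_le hmb.le, Set.uIcc_of_le hab.le]; exact hsub2)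
  have h1 := trapezoid_bound a m ham f (hconv.subset hsub1 (convex_Icc a m)) hint1
  have h2 := trapezoid_bound m b hmb f (hconv.subset hsub2 (convex_Icc m b)) hint2
  have hsplit : (∫ x in a..b, f x) = (∫ x in a..m, f x) + ∫ x in m..b, f x :=
    (intervalIntegral.integral_add_adjacent_intervals hint1 hint2).symm
  have hma : m - a = (b - a) / 2 := by simp [hm]; ring
  have hbm : b - m = (b - a) / 2 := by simp [hm]; ring
  have hba : (0:ℝ) < b - a := by linarith
  rw [hsplit, div_mul_eq_mul_div, div_le_iff₀ hba]
  rw [hma] at h1; rw [hbm] at h2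
  nlinarith [h1, h2]
end

section
/- If f : [-1,1] → ℝ is convex and integrable, then (∫_{-1}^{1} f) - 2 f(0) ≤ f(-1) + f(1) - ∫_{-1}^{1} f. -/
open Set intervalIntegral

lemma trapezoid (f : ℝ → ℝ) (a b : ℝ) (hab : a ≤ b)
    (hconv : ConvexOn ℝ (Set.Icc a b) f)
    (hint : IntervalIntegrable f MeasureTheory.volume a b) :
    (∫ x in a..b, f x) ≤ (b - a) * (f a + f b) / 2 := by
  have hconv' : ∀ x ∈ Set.Icc a b,
      f x ≤ f a + (f b - f a) / (b - a) * (x - a) := by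
    intro x hx
    rcases eq_or_lt_of_le hab with h | h
    · have : x = a := le_antisymm (h ▸ hx.2) hx.1
      simp [this]
    · set t : ℝ := (x - a) / (b - a) with ht
      have hba : (0:ℝ) < b - a := by linarith
      have ht0 : 0 ≤ t := div_nonneg (by linarith [hx.1]) hba.le
      have ht1 : t ≤ 1 := by
        rw [div_le_one hba]; linarith [hx.2]
      have hx' : x = (1 - t) * a + t * b := by
        have key : t * (b - a) = x - a := by rw [ht]; exact div_mul_cancel₀ _ hba.ne'
        linear_combination (-1:ℝ) * key
      have := hconv.2 (Set.left_mem_Icc.2 hab) (Set.right_mem_Icc.2 hab)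
        (by linarith : (0:ℝ) ≤ 1 - t) ht0 (by ring)
      rw [smul_eq_mul, smul_eq_mul, smul_eq_mul, smul_eq_mul] at this
      rw [← hx'] at this
      calc f x ≤ (1 - t) * f a + t * f b := this
        _ = f a + (f b - f a) / (b - a) * (x - a) := by
            rw [ht]; ring
  have hgint : IntervalIntegrable (fun x => f a + (f b - f a) / (b - a) * (x - a))
      MeasureTheory.volume a b := by
    apply IntervalIntegrable.add intervalIntegrable_const
    exact (IntervalIntegrable.sub intervalIntegrable_id intervalIntegrable_const).const_mul _
  have hmono := intervalIntegral.integral_mono_on hab hint hgint hconv'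
  have hcalc : (∫ x in a..b, (f a + (f b - f a) / (b - a) * (x - a)))
      = (b - a) * (f a + f b) / 2 := by
    rcases eq_or_lt_of_le hab with h | h
    · simp [h]
    · have hba : (b:ℝ) - a ≠ 0 := by linarith
      rw [intervalIntegral.integral_add intervalIntegrable_const
        ((IntervalIntegrable.sub intervalIntegrable_id intervalIntegrable_const).const_mul _),
        intervalIntegral.integral_const_mul,
        intervalIntegral.integral_sub intervalIntegrable_id intervalIntegrable_const]
      simp only [intervalIntegral.integral_const, integral_id, smul_eq_mul]
      field_simp
      ring
    
  linarith [hcalc ▸ hmono]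

theorem stmt1 (f : ℝ → ℝ)
    (hconv : ConvexOn ℝ (Set.Icc (-1 : ℝ) 1) f)
    (hint : IntervalIntegrable f MeasureTheory.volume (-1) 1) :
    (∫ x in (-1 : ℝ)..1, f x) - 2 * f 0 ≤ f (-1) + f 1 - ∫ x in (-1 : ℝ)..1, f x := by
  have h1 : Set.Icc (-1:ℝ) 0 ⊆ Set.Icc (-1:ℝ) 1 := Set.Icc_subset_Icc le_rfl (by norm_num)
  have h2 : Set.Icc (0:ℝ) 1 ⊆ Set.Icc (-1:ℝ) 1 := Set.Icc_subset_Icc (by norm_num) le_rfl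
  have hi1 : IntervalIntegrable f MeasureTheory.volume (-1) 0 :=
    hint.mono_set (by rw [Set.uIcc_of_le (by norm_num : (-1:ℝ) ≤ 0),
      Set.uIcc_of_le (by norm_num : (-1:ℝ) ≤ 1)]; exact h1)
  have hi2 : IntervalIntegrable f MeasureTheory.volume 0 1 :=
    hint.mono_set (by rw [Set.uIcc_of_le (by norm_num : (0:ℝ) ≤ 1),
      Set.uIcc_of_le (by norm_num : (-1:ℝ) ≤ 1)]; exact h2)
  have t1 := trapezoid f (-1) 0 (by norm_num) (hconv.subset h1 (convex_Icc _ _)) hi1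
  have t2 := trapezoid f 0 1 (by norm_num) (hconv.subset h2 (convex_Icc _ _)) hi2
  have hsplit : (∫ x in (-1:ℝ)..1, f x) = (∫ x in (-1:ℝ)..0, f x) + ∫ x in (0:ℝ)..1, f x :=
    (intervalIntegral.integral_add_adjacent_intervals hi1 hi2).symm
  rw [hsplit]
  norm_num at t1 t2
  linarith
end

section
/- Let f : [a,b] → ℝ be twice differentiable with m ≤ f''(x) ≤ M for all x ∈ [a,b]. Then m (b-a)²/24 ≤ (f(a)+f(b))/2 + f((a+b)/2) - (2/(b-a)) ∫_a^b f(x) dx ≤ M (b-a)²/24. -/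
open Set intervalIntegral

lemma trapezoid_aux (a b : ℝ) (hab : a < b) (g : ℝ → ℝ)
    (hg : ConvexOn ℝ (Icc a b) g) (hcont : ContinuousOn g (Icc a b)) :
    ∫ x in a..b, g x ≤ (g a + g b) * (b - a) / 2 := by
  have hba : (0:ℝ) < b - a := by linarith
  have hne : b - a ≠ 0 := ne_of_gt hba
  have key : ∀ x ∈ Icc a b, g x ≤ g a + (g b - g a) / (b - a) * (x - a) := by
    intro x hx
    have h1 : (0:ℝ) ≤ (b - x) / (b - a) := by
      apply div_nonneg <;> linarith [hx.2]
    have h2 : (0:ℝ) ≤ (x - a) / (b - a) := by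
      apply div_nonneg <;> linarith [hx.1]
    have h3 : (b - x) / (b - a) + (x - a) / (b - a) = 1 := by
      field_simp; ring
    have hcx := hg.2 (left_mem_Icc.2 hab.le) (right_mem_Icc.2 hab.le) h1 h2 h3
    simp only [smul_eq_mul] at hcx
    have hxe : (b - x) / (b - a) * a + (x - a) / (b - a) * b = x := by
      field_simp; ring
    rw [hxe] at hcx
    have e : (b - x) / (b - a) * g a + (x - a) / (b - a) * g b =
        g a + (g b - g a) / (b - a) * (x - a) := by
      field_simp; ring
    linarith [hcx, e.ge]
  have hint : IntervalIntegrable g MeasureTheory.volume a b := by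
    apply ContinuousOn.intervalIntegrable
    rwa [uIcc_of_le hab.le]
  have hle : ∫ x in a..b, g x ≤ ∫ x in a..b, (g a + (g b - g a) / (b - a) * (x - a)) := by
    apply intervalIntegral.integral_mono_on hab.le hint
    · apply IntervalIntegrable.add intervalIntegrable_const
      exact (IntervalIntegrable.sub intervalIntegrable_id intervalIntegrable_const).const_mul _
    · exact key
  refine hle.trans ?_
  have heval : ∫ x in a..b, (g a + (g b - g a) / (b - a) * (x - a)) =
      g a * (b - a) + (g b - g a) / (b - a) * ((b^2 - a^2)/2 - a * (b - a)) := by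
    rw [intervalIntegral.integral_add intervalIntegrable_const
      ((IntervalIntegrable.sub intervalIntegrable_id intervalIntegrable_const).const_mul _)]
    rw [intervalIntegral.integral_const_mul,
      intervalIntegral.integral_sub intervalIntegrable_id intervalIntegrable_const]
    simp [integral_id, smul_eq_mul]
    ring
  rw [heval]
  have h2 : (g b - g a) / (b - a) * ((b^2 - a^2)/2 - a * (b - a)) = (g b - g a) * (b - a) / 2 := by
    field_simp; ring
  rw [h2]; ring_nf; linarith

lemma bullen_nonneg (a b : ℝ) (hab : a < b) (g : ℝ → ℝ)
    (hg : ConvexOn ℝ (Icc a b) g) (hcont : ContinuousOn g (Icc a b)) :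
    2 / (b - a) * ∫ x in a..b, g x ≤ (g a + g b) / 2 + g ((a + b) / 2) := by
  set c := (a + b) / 2 with hc
  have hac : a < c := by rw [hc]; linarith
  have hcb : c < b := by rw [hc]; linarith
  have hs1 : Icc a c ⊆ Icc a b := Icc_subset_Icc le_rfl hcb.le
  have hs2 : Icc c b ⊆ Icc a b := Icc_subset_Icc hac.le le_rfl
  have t1 := trapezoid_aux a c hac g (hg.subset hs1 (convex_Icc a c)) (hcont.mono hs1)
  have t2 := trapezoid_aux c b hcb g (hg.subset hs2 (convex_Icc c b)) (hcont.mono hs2)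
  have hi1 : IntervalIntegrable g MeasureTheory.volume a c := by
    apply ContinuousOn.intervalIntegrable
    rw [uIcc_of_le hac.le]; exact hcont.mono hs1
  have hi2 : IntervalIntegrable g MeasureTheory.volume c b := by
    apply ContinuousOn.intervalIntegrable
    rw [uIcc_of_le hcb.le]; exact hcont.mono hs2
  have hsplit : (∫ x in a..c, g x) + ∫ x in c..b, g x = ∫ x in a..b, g x :=
    intervalIntegral.integral_add_adjacent_intervals hi1 hi2
  have hba : (0:ℝ) < b - a := by linarith
  have hsum : ∫ x in a..b, g x ≤ (g a + g b) / 2 * ((b - a) / 2) + g c * ((b - a) / 2) := by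
    rw [← hsplit]
    have e1 : (g a + g c) * (c - a) / 2 = (g a + g c) * ((b - a) / 4) := by rw [hc]; ring
    have e2 : (g c + g b) * (b - c) / 2 = (g c + g b) * ((b - a) / 4) := by rw [hc]; ring
    nlinarith [t1, t2]
  have h2 : 0 < 2 / (b - a) := by positivity
  calc 2 / (b - a) * ∫ x in a..b, g x
      ≤ 2 / (b - a) * ((g a + g b) / 2 * ((b - a) / 2) + g c * ((b - a) / 2)) :=
        mul_le_mul_of_nonneg_left hsum h2.le
    _ = (g a + g b) / 2 + g c := by field_simp

theorem stmt2 (a b : ℝ) (hab : a < b) (f f' f'' : ℝ → ℝ) (m M : ℝ)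
    (hf' : ∀ x ∈ Set.Icc a b, HasDerivWithinAt f (f' x) (Set.Icc a b) x)
    (hf'' : ∀ x ∈ Set.Icc a b, HasDerivWithinAt f' (f'' x) (Set.Icc a b) x)
    (hm : ∀ x ∈ Set.Icc a b, m ≤ f'' x) (hM : ∀ x ∈ Set.Icc a b, f'' x ≤ M) :
    m * (b - a) ^ 2 / 24 ≤
      (f a + f b) / 2 + f ((a + b) / 2) - (2 / (b - a)) * ∫ x in a..b, f x ∧
    (f a + f b) / 2 + f ((a + b) / 2) - (2 / (b - a)) * ∫ x in a..b, f x ≤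
      M * (b - a) ^ 2 / 24 := by
  have hba : (0:ℝ) < b - a := by linarith
  have hne : b - a ≠ 0 := ne_of_gt hba
  have hcontf : ContinuousOn f (Icc a b) := fun x hx => (hf' x hx).continuousWithinAt
  have hcontf' : ContinuousOn f' (Icc a b) := fun x hx => (hf'' x hx).continuousWithinAt
  have hIf : IntervalIntegrable f MeasureTheory.volume a b := by
    apply ContinuousOn.intervalIntegrable; rwa [uIcc_of_le hab.le]
  have hIq : IntervalIntegrable (fun x : ℝ => x ^ 2) MeasureTheory.volume a b :=
    (continuous_pow 2).intervalIntegrable a b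
  have hq : ∫ x in a..b, x ^ 2 = (b ^ 3 - a ^ 3) / 3 := by
    rw [integral_pow]; norm_num
  have hInt : interior (Icc a b) = Ioo a b := interior_Icc
  -- derivative facts for quadratic
  have hlin : ∀ (k x : ℝ), HasDerivAt (fun y : ℝ => k * y) k x := fun k x => by
    simpa using (hasDerivAt_id x).const_mul k
  have hquad : ∀ (k : ℝ) (x : ℝ), HasDerivAt (fun y : ℝ => k / 2 * y ^ 2) (k * x) x := by
    intro k x
    have := (hasDerivAt_pow 2 x).const_mul (k / 2)
    simpa using this.congr_deriv (by push_cast; ring)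
  -- lower bound via g = f - m/2 x^2
  have conv_lower : ConvexOn ℝ (Icc a b) (fun x => f x - m / 2 * x ^ 2) := by
    apply convexOn_of_hasDerivWithinAt2_nonneg (convex_Icc a b)
      (f' := fun x => f' x - m * x) (f'' := fun x => f'' x - m)
    · exact hcontf.sub ((continuous_pow 2).continuousOn.const_smul (m / 2))
    · intro x hx
      rw [hInt] at *
      exact ((hf' x (Ioo_subset_Icc_self hx)).mono Ioo_subset_Icc_self).sub
        ((hquad m x).hasDerivWithinAt)
    · intro x hx
      rw [hInt] at *
      exact ((hf'' x (Ioo_subset_Icc_self hx)).mono Ioo_subset_Icc_self).sub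
        ((hlin m x).hasDerivWithinAt)
    · intro x hx
      rw [hInt] at hx
      have := hm x (Ioo_subset_Icc_self hx)
      linarith
  have conv_upper : ConvexOn ℝ (Icc a b) (fun x => M / 2 * x ^ 2 - f x) := by
    apply convexOn_of_hasDerivWithinAt2_nonneg (convex_Icc a b)
      (f' := fun x => M * x - f' x) (f'' := fun x => M - f'' x)
    · exact ((continuous_pow 2).continuousOn.const_smul (M / 2)).sub hcontf
    · intro x hx
      rw [hInt] at *
      exact ((hquad M x).hasDerivWithinAt).sub
        ((hf' x (Ioo_subset_Icc_self hx)).mono Ioo_subset_Icc_self)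
    · intro x hx
      rw [hInt] at *
      exact ((hlin M x).hasDerivWithinAt).sub
        ((hf'' x (Ioo_subset_Icc_self hx)).mono Ioo_subset_Icc_self)
    · intro x hx
      rw [hInt] at hx
      have := hM x (Ioo_subset_Icc_self hx)
      linarith
  have hcont_lower : ContinuousOn (fun x => f x - m / 2 * x ^ 2) (Icc a b) :=
    hcontf.sub ((continuous_pow 2).continuousOn.const_smul (m / 2))
  have hcont_upper : ContinuousOn (fun x => M / 2 * x ^ 2 - f x) (Icc a b) :=
    ((continuous_pow 2).continuousOn.const_smul (M / 2)).sub hcontf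
  have hIl : ∫ x in a..b, (f x - m / 2 * x ^ 2) =
      (∫ x in a..b, f x) - m / 2 * ((b ^ 3 - a ^ 3) / 3) := by
    rw [intervalIntegral.integral_sub hIf (hIq.const_mul _),
      intervalIntegral.integral_const_mul, hq]
  have hIu : ∫ x in a..b, (M / 2 * x ^ 2 - f x) =
      M / 2 * ((b ^ 3 - a ^ 3) / 3) - ∫ x in a..b, f x := by
    rw [intervalIntegral.integral_sub (hIq.const_mul _) hIf,
      intervalIntegral.integral_const_mul, hq]
  have h1 := bullen_nonneg a b hab _ conv_lower hcont_lower
  have h2 := bullen_nonneg a b hab _ conv_upper hcont_upper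
  simp only [hIl] at h1
  simp only [hIu] at h2
  have e1 : 2 / (b - a) * ((∫ x in a..b, f x) - m / 2 * ((b ^ 3 - a ^ 3) / 3)) =
      2 / (b - a) * (∫ x in a..b, f x) - m * (a ^ 2 + a * b + b ^ 2) / 3 := by
    field_simp; ring
  have e2 : 2 / (b - a) * (M / 2 * ((b ^ 3 - a ^ 3) / 3) - ∫ x in a..b, f x) =
      M * (a ^ 2 + a * b + b ^ 2) / 3 - 2 / (b - a) * (∫ x in a..b, f x) := by
    field_simp; ring
  rw [e1] at h1
  rw [e2] at h2
  constructor <;> nlinarith [h1, h2]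
end

section
/- With the partition a = x₀ < x₁ < ... < xₙ = b, the composite Bullen functional satisfies |B_c(g)| ≤ (1/(24(b-a))) Σ_{i=0}^{n-1} (x_{i+1}-x_i)³ · ‖g''‖_∞ for all g ∈ C²[a,b]. -/
open Set intervalIntegral

lemma sup_ge (a b : ℝ) (f : ℝ → ℝ) (hf : ContinuousOn f (Set.Icc a b)) :
    ∀ t ∈ Set.Icc a b, |f t| ≤ supOn a b f := by
  intro t ht
  have hbdd : BddAbove (Set.range fun x : Set.Icc a b => |f x|) := by
    have h := (isCompact_Icc.image_of_continuousOn hf.abs).bddAbove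
    rwa [Set.image_eq_range] at h
  exact le_ciSup hbdd ⟨t, ht⟩

lemma kint (α β : ℝ) : (∫ t in α..β, (t - α) * (β - t)) = (β - α) ^ 3 / 6 := by
  have hD : ∀ t ∈ Set.uIcc α β,
      HasDerivAt (fun u : ℝ => -(u ^ 3 / 3) + (α + β) * u ^ 2 / 2 - α * β * u)
        ((t - α) * (β - t)) t := by
    intro t _
    have h1 : HasDerivAt (fun u : ℝ => u ^ 3) (3 * t ^ 2) t := by
      simpa using hasDerivAt_pow 3 t
    have h2 : HasDerivAt (fun u : ℝ => u ^ 2) (2 * t) t := by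
      simpa using hasDerivAt_pow 2 t
    have := (((h1.div_const 3).neg.add ((h2.const_mul (α + β)).div_const 2)).sub
      ((hasDerivAt_id t).const_mul (α * β)))
    refine this.congr_deriv ?_
    ring
  rw [intervalIntegral.integral_eq_sub_of_hasDerivAt hD
    ((Continuous.continuousOn (by fun_prop)).intervalIntegrable)]
  ring

lemma kid (a b α β : ℝ) (hα : a ≤ α) (hβ : β ≤ b) (hαβ : α < β)
    (g g' g'' : ℝ → ℝ) (hg : IsC2On a b g g' g'') :
    (∫ t in α..β, (t - α) * (β - t) * g'' t)
      = (β - α) * (g α + g β) - 2 * ∫ t in α..β, g t := by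
  obtain ⟨hg1, hg2, hg3⟩ := hg
  have hsub : Set.Icc α β ⊆ Set.Icc a b := Set.Icc_subset_Icc hα hβ
  have hgc : ContinuousOn g (Set.Icc a b) := fun t ht => (hg1 t ht).continuousWithinAt
  have hg'c : ContinuousOn g' (Set.Icc a b) := fun t ht => (hg2 t ht).continuousWithinAt
  set D := fun t : ℝ => (t - α) * (β - t) * g' t - (α + β - 2 * t) * g t with hDdef
  have hDc : ContinuousOn D (Set.Icc α β) := by
    apply ContinuousOn.sub
    · exact (Continuous.continuousOn (by fun_prop)).mul (hg'c.mono hsub)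
    · exact (Continuous.continuousOn (by fun_prop)).mul (hgc.mono hsub)
  have hD : ∀ t ∈ Set.Ioo α β,
      HasDerivWithinAt D ((t - α) * (β - t) * g'' t + 2 * g t) (Set.Ioi t) t := by
    intro t ht
    have htab : t ∈ Set.Ioo a b := ⟨lt_of_le_of_lt hα ht.1, lt_of_lt_of_le ht.2 hβ⟩
    have hnhd : Set.Icc a b ∈ nhds t := Icc_mem_nhds htab.1 htab.2
    have htIcc : t ∈ Set.Icc a b := ⟨htab.1.le, htab.2.le⟩
    have hgt : HasDerivAt g (g' t) t := (hg1 t htIcc).hasDerivAt hnhd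
    have hg't : HasDerivAt g' (g'' t) t := (hg2 t htIcc).hasDerivAt hnhd
    have hK : HasDerivAt (fun u : ℝ => (u - α) * (β - u)) (α + β - 2 * t) t := by
      have := ((hasDerivAt_id t).sub_const α).mul ((hasDerivAt_const t β).sub (hasDerivAt_id t))
      refine this.congr_deriv ?_
      simp [Pi.sub_apply]
      ring
    have hK' : HasDerivAt (fun u : ℝ => α + β - 2 * u) (-2) t := by
      have := ((hasDerivAt_id t).const_mul (2:ℝ)).const_sub (α + β)
      simpa using this
    have hd : HasDerivAt D (((α + β - 2 * t) * g' t + (t - α) * (β - t) * g'' t)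
        - ((-2) * g t + (α + β - 2 * t) * g' t)) t := (hK.mul hg't).sub (hK'.mul hgt)
    have hd2 : HasDerivAt D ((t - α) * (β - t) * g'' t + 2 * g t) t := by
      convert hd using 1; ring
    exact hd2.hasDerivWithinAt
  have hintK : IntervalIntegrable (fun t => (t - α) * (β - t) * g'' t)
      MeasureTheory.volume α β := by
    apply ContinuousOn.intervalIntegrable
    rw [Set.uIcc_of_le hαβ.le]
    exact (Continuous.continuousOn (by fun_prop)).mul (hg3.mono hsub)
  have hintg : IntervalIntegrable g MeasureTheory.volume α β := by
    apply ContinuousOn.intervalIntegrable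
    rw [Set.uIcc_of_le hαβ.le]
    exact hgc.mono hsub
  have hint : IntervalIntegrable (fun t => (t - α) * (β - t) * g'' t + 2 * g t)
      MeasureTheory.volume α β := hintK.add (hintg.const_mul 2)
  have hftc := intervalIntegral.integral_eq_sub_of_hasDeriv_right_of_le hαβ.le hDc hD hint
  have hsplit : (∫ t in α..β, ((t - α) * (β - t) * g'' t + 2 * g t))
      = (∫ t in α..β, (t - α) * (β - t) * g'' t) + 2 * ∫ t in α..β, g t := by
    rw [intervalIntegral.integral_add hintK (hintg.const_mul 2),
      intervalIntegral.integral_const_mul]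
  have hDval : D β - D α = (β - α) * (g α + g β) := by
    simp only [hDdef]
    ring
  rw [hsplit, hDval] at hftc
  linarith

lemma kbound (a b α β M : ℝ) (hα : a ≤ α) (hβ : β ≤ b) (hαβ : α ≤ β)
    (g'' : ℝ → ℝ) (hg3 : ContinuousOn g'' (Set.Icc a b))
    (hM : ∀ t ∈ Set.Icc a b, |g'' t| ≤ M) :
    |∫ t in α..β, (t - α) * (β - t) * g'' t| ≤ (β - α) ^ 3 / 6 * M := by
  have hsub : Set.Icc α β ⊆ Set.Icc a b := Set.Icc_subset_Icc hα hβ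
  have h1 : |∫ t in α..β, (t - α) * (β - t) * g'' t|
      ≤ ∫ t in α..β, |(t - α) * (β - t) * g'' t| :=
    intervalIntegral.abs_integral_le_integral_abs hαβ
  have hint1 : IntervalIntegrable (fun t => |(t - α) * (β - t) * g'' t|)
      MeasureTheory.volume α β := by
    apply ContinuousOn.intervalIntegrable
    rw [Set.uIcc_of_le hαβ]
    exact ((Continuous.continuousOn (by fun_prop)).mul (hg3.mono hsub)).abs
  have hint2 : IntervalIntegrable (fun t => (t - α) * (β - t) * M)
      MeasureTheory.volume α β := (Continuous.continuousOn (by fun_prop)).intervalIntegrable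
  have h2 : (∫ t in α..β, |(t - α) * (β - t) * g'' t|)
      ≤ ∫ t in α..β, (t - α) * (β - t) * M := by
    apply intervalIntegral.integral_mono_on hαβ hint1 hint2
    intro t ht
    have hK : 0 ≤ (t - α) * (β - t) :=
      mul_nonneg (by linarith [ht.1]) (by linarith [ht.2])
    rw [abs_mul, abs_of_nonneg hK]
    exact mul_le_mul_of_nonneg_left (hM t (hsub ht)) hK
  have h3 : (∫ t in α..β, (t - α) * (β - t) * M) = (β - α) ^ 3 / 6 * M := by
    rw [intervalIntegral.integral_mul_const, kint]
  linarith

lemma ibound (a b α β M : ℝ) (hα : a ≤ α) (hβ : β ≤ b) (hαβ : α < β)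
    (g g' g'' : ℝ → ℝ) (hg : IsC2On a b g g' g'')
    (hM : ∀ t ∈ Set.Icc a b, |g'' t| ≤ M) :
    |(β - α) * ((g α + g β) / 2 + g ((α + β) / 2)
        - (2 / (β - α)) * ∫ t in α..β, g t)| ≤ (β - α) ^ 3 / 24 * M := by
  set m : ℝ := (α + β) / 2 with hm
  have hm1 : α < m := by rw [hm]; linarith
  have hm2 : m < β := by rw [hm]; linarith
  have hgc : ContinuousOn g (Set.Icc a b) := fun t ht => (hg.1 t ht).continuousWithinAt
  have hint1 : IntervalIntegrable g MeasureTheory.volume α m := by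
    apply ContinuousOn.intervalIntegrable
    rw [Set.uIcc_of_le hm1.le]
    exact hgc.mono (Set.Icc_subset_Icc hα (by linarith))
  have hint2 : IntervalIntegrable g MeasureTheory.volume m β := by
    apply ContinuousOn.intervalIntegrable
    rw [Set.uIcc_of_le hm2.le]
    exact hgc.mono (Set.Icc_subset_Icc (by linarith) hβ)
  have hadj : (∫ t in α..m, g t) + (∫ t in m..β, g t) = ∫ t in α..β, g t :=
    intervalIntegral.integral_add_adjacent_intervals hint1 hint2
  have hk1 := kid a b α m hα (by linarith) hm1 g g' g'' hg
  have hk2 := kid a b m β (by linarith) hβ hm2 g g' g'' hg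
  have hne : β - α ≠ 0 := by linarith
  have hkey : (β - α) * ((g α + g β) / 2 + g m - (2 / (β - α)) * ∫ t in α..β, g t)
      = (∫ t in α..m, (t - α) * (m - t) * g'' t) + ∫ t in m..β, (t - m) * (β - t) * g'' t := by
    rw [hk1, hk2, ← hadj]
    have hma : m - α = (β - α) / 2 := by rw [hm]; ring
    have hbm : β - m = (β - α) / 2 := by rw [hm]; ring
    rw [hma, hbm]
    field_simp
    ring
  have hb1 := kbound a b α m M hα (by linarith) hm1.le g'' hg.2.2 hM
  have hb2 := kbound a b m β M (by linarith) hβ hm2.le g'' hg.2.2 hM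
  have hma : m - α = (β - α) / 2 := by rw [hm]; ring
  have hbm : β - m = (β - α) / 2 := by rw [hm]; ring
  rw [hma] at hb1
  rw [hbm] at hb2
  calc |(β - α) * ((g α + g β) / 2 + g m - (2 / (β - α)) * ∫ t in α..β, g t)|
      = |(∫ t in α..m, (t - α) * (m - t) * g'' t) + ∫ t in m..β, (t - m) * (β - t) * g'' t| := by
        rw [hkey]
    _ ≤ |∫ t in α..m, (t - α) * (m - t) * g'' t| + |∫ t in m..β, (t - m) * (β - t) * g'' t| :=
        abs_add_le _ _
    _ ≤ ((β - α) / 2) ^ 3 / 6 * M + ((β - α) / 2) ^ 3 / 6 * M := add_le_add hb1 hb2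
    _ = (β - α) ^ 3 / 24 * M := by ring

theorem stmt7' (a b : ℝ) (hab : a < b) (n : ℕ) (x : ℕ → ℝ)
    (hx0 : x 0 = a) (hxn : x n = b)
    (hmono : ∀ i < n, x i < x (i + 1))
    (g g' g'' : ℝ → ℝ) (hg : IsC2On a b g g' g'') :
    |(1 / (b - a)) * ∑ i ∈ Finset.range n, (x (i+1) - x i) *
      ((g (x i) + g (x (i+1))) / 2 + g ((x i + x (i+1)) / 2)
        - (2 / (x (i+1) - x i)) * ∫ t in (x i)..(x (i+1)), g t)| ≤
      (1 / (24 * (b - a))) * (∑ i ∈ Finset.range n, (x (i + 1) - x i) ^ 3)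
        * supOn a b g'' := by
  set M := supOn a b g'' with hMdef
  have hM : ∀ t ∈ Set.Icc a b, |g'' t| ≤ M := sup_ge a b g'' hg.2.2
  have hM0 : 0 ≤ M := le_trans (abs_nonneg _) (hM a ⟨le_refl a, hab.le⟩)
  -- monotonicity of partition
  have hle : ∀ j, j ≤ n → ∀ i, i ≤ j → x i ≤ x j := by
    intro j
    induction j with
    | zero =>
        intro _ i hi
        have : i = 0 := Nat.le_zero.mp hi
        rw [this]
    | succ k ih =>
        intro hk i hi
        rcases eq_or_lt_of_le hi with h | h
        · rw [h]
        · exact le_trans (ih (by omega) i (by omega)) (hmono k (by omega)).le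
  have hxm : ∀ i < n, a ≤ x i ∧ x (i + 1) ≤ b := by
    intro i hi
    constructor
    · rw [← hx0]; exact hle i (by omega) 0 (by omega)
    · rw [← hxn]; exact hle n (le_refl n) (i + 1) (by omega)
  have hterm : ∀ i ∈ Finset.range n,
      |(x (i+1) - x i) * ((g (x i) + g (x (i+1))) / 2 + g ((x i + x (i+1)) / 2)
        - (2 / (x (i+1) - x i)) * ∫ t in (x i)..(x (i+1)), g t)|
      ≤ (x (i+1) - x i) ^ 3 / 24 * M := by
    intro i hi
    have hi' : i < n := Finset.mem_range.mp hi
    exact ibound a b (x i) (x (i+1)) M (hxm i hi').1 (hxm i hi').2 (hmono i hi') g g' g'' hg hM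
  have hpos : (0:ℝ) < 1 / (b - a) := by
    have : (0:ℝ) < b - a := by linarith
    positivity
  have hne : b - a ≠ 0 := by linarith
  calc |(1 / (b - a)) * ∑ i ∈ Finset.range n, (x (i+1) - x i) *
      ((g (x i) + g (x (i+1))) / 2 + g ((x i + x (i+1)) / 2)
        - (2 / (x (i+1) - x i)) * ∫ t in (x i)..(x (i+1)), g t)|
      = (1 / (b - a)) * |∑ i ∈ Finset.range n, (x (i+1) - x i) *
        ((g (x i) + g (x (i+1))) / 2 + g ((x i + x (i+1)) / 2)
          - (2 / (x (i+1) - x i)) * ∫ t in (x i)..(x (i+1)), g t)| := by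
        rw [abs_mul, abs_of_pos hpos]
    _ ≤ (1 / (b - a)) * ∑ i ∈ Finset.range n, |(x (i+1) - x i) *
        ((g (x i) + g (x (i+1))) / 2 + g ((x i + x (i+1)) / 2)
          - (2 / (x (i+1) - x i)) * ∫ t in (x i)..(x (i+1)), g t)| :=
        mul_le_mul_of_nonneg_left (Finset.abs_sum_le_sum_abs _ _) hpos.le
    _ ≤ (1 / (b - a)) * ∑ i ∈ Finset.range n, (x (i+1) - x i) ^ 3 / 24 * M :=
        mul_le_mul_of_nonneg_left (Finset.sum_le_sum hterm) hpos.le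
    _ = (1 / (24 * (b - a))) * (∑ i ∈ Finset.range n, (x (i + 1) - x i) ^ 3) * M := by
        rw [show (∑ i ∈ Finset.range n, (x (i+1) - x i) ^ 3 / 24 * M)
            = (∑ i ∈ Finset.range n, (x (i+1) - x i) ^ 3) * (M / 24) by
          rw [← Finset.sum_mul, ← Finset.sum_div]
          ring]
        field_simp

theorem stmt7 (a b : ℝ) (hab : a < b) (n : ℕ) (x : ℕ → ℝ)
    (hx0 : x 0 = a) (hxn : x n = b)
    (hmono : ∀ i < n, x i < x (i + 1))
    (g g' g'' : ℝ → ℝ) (hg : IsC2On a b g g' g'') :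
    |bullenC a b n x g| ≤
      (1 / (24 * (b - a))) * (∑ i ∈ Finset.range n, (x (i + 1) - x i) ^ 3)
        * supOn a b g'' := by
  unfold bullenC
  exact stmt7' a b hab n x hx0 hxn hmono g g' g'' hg
end

section
/- For every f ∈ C[a,b] and partition a = x₀ < ... < xₙ = b, |B_c(f)| ≤ 4 K(f; (1/(96(b-a))) Σ_{i=0}^{n-1} (x_{i+1}-x_i)³), where K(f;t) = inf { ‖f-g‖_∞ + t‖g''‖_∞ : g ∈ C²[a,b] }. -/
open Set intervalIntegral

open MeasureTheory

lemma kernel_integral (a b c d : ℝ) (g g' g'' : ℝ → ℝ) (hg : IsC2On a b g g' g'')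
    (hac : a ≤ c) (hcd : c < d) (hdb : d ≤ b) :
    ∫ s in c..d, (s - c) * (d - s) * g'' s
      = (d - c) * (g c + g d) - 2 * ∫ s in c..d, g s := by
  obtain ⟨hg1, hg2, hg3⟩ := hg
  have hcg : ContinuousOn g (Set.Icc a b) := fun y hy => (hg1 y hy).continuousWithinAt
  have hcg' : ContinuousOn g' (Set.Icc a b) := fun y hy => (hg2 y hy).continuousWithinAt
  have hsub : Set.Icc c d ⊆ Set.Icc a b := Set.Icc_subset_Icc hac hdb
  set G : ℝ → ℝ := fun s => ∫ t in c..s, g t with hG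
  set Φ : ℝ → ℝ := fun s => (s - c) * (d - s) * g' s - (c + d - 2*s) * g s - 2 * G s with hΦ
  have hGcont : ContinuousOn G (Set.Icc c d) := by
    have h1 : MeasureTheory.IntegrableOn g (Set.uIcc c d) := by
      rw [Set.uIcc_of_le hcd.le]
      exact (hcg.mono hsub).integrableOn_Icc
    simpa [Set.uIcc_of_le hcd.le] using intervalIntegral.continuousOn_primitive_interval h1
  have hΦcont : ContinuousOn Φ (Set.Icc c d) := by
    refine ContinuousOn.sub (ContinuousOn.sub ?_ ?_) ?_
    · exact (((continuousOn_id.sub continuousOn_const).mul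
        (continuousOn_const.sub continuousOn_id)).mul (hcg'.mono hsub))
    · exact ((continuousOn_const.sub (continuousOn_const.mul continuousOn_id)).mul
        (hcg.mono hsub))
    · exact continuousOn_const.mul hGcont
  have hderiv : ∀ s ∈ Set.Ioo c d,
      HasDerivWithinAt Φ ((s - c) * (d - s) * g'' s) (Set.Ioi s) s := by
    intro s hs
    have hsab : s ∈ Set.Ioo a b := ⟨lt_of_le_of_lt hac hs.1, lt_of_lt_of_le hs.2 hdb⟩
    have hnhds : Set.Icc a b ∈ nhds s := Icc_mem_nhds hsab.1 hsab.2
    have hsmem : s ∈ Set.Icc a b := ⟨hsab.1.le, hsab.2.le⟩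
    have hgs : HasDerivAt g (g' s) s := (hg1 s hsmem).hasDerivAt hnhds
    have hg's : HasDerivAt g' (g'' s) s := (hg2 s hsmem).hasDerivAt hnhds
    have hGs : HasDerivAt G (g s) s := by
      apply intervalIntegral.integral_hasDerivAt_right
      · apply ContinuousOn.intervalIntegrable
        apply hcg.mono
        rw [Set.uIcc_of_le hs.1.le]
        exact (Set.Icc_subset_Icc_right hs.2.le).trans hsub
      · exact ⟨Set.Icc a b, hnhds, hcg.aestronglyMeasurable measurableSet_Icc⟩
      · exact hcg.continuousAt hnhds
    have hK : HasDerivAt (fun s : ℝ => (s - c) * (d - s)) (c + d - 2*s) s := by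
      have h := ((hasDerivAt_id s).sub_const c).fun_mul ((hasDerivAt_const s d).fun_sub (hasDerivAt_id s))
      simp only [id_eq] at h
      exact h.congr_deriv (by ring)
    have hK' : HasDerivAt (fun s : ℝ => c + d - 2*s) (-2) s := by
      have h := (hasDerivAt_const s (c + d)).fun_sub ((hasDerivAt_id s).const_mul 2)
      simp only [id_eq] at h
      exact h.congr_deriv (by ring)
    have hfull : HasDerivAt Φ ((s - c) * (d - s) * g'' s) s := by
      have h := ((hK.fun_mul hg's).fun_sub (hK'.fun_mul hgs)).fun_sub (hGs.const_mul 2)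
      exact h.congr_deriv (by ring)
    exact hfull.hasDerivWithinAt
  have hint : IntervalIntegrable (fun s => (s - c) * (d - s) * g'' s) volume c d := by
    apply ContinuousOn.intervalIntegrable
    rw [Set.uIcc_of_le hcd.le]
    exact (((continuousOn_id.sub continuousOn_const).mul
      (continuousOn_const.sub continuousOn_id)).mul (hg3.mono hsub))
  have heq := intervalIntegral.integral_eq_sub_of_hasDeriv_right_of_le hcd.le hΦcont hderiv hint
  rw [heq, hΦ]
  have hGc : G c = 0 := intervalIntegral.integral_same
  simp only [hGc]
  ring

lemma kernel_value (c d : ℝ) : ∫ s in c..d, (s - c) * (d - s) = (d - c)^3 / 6 := by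
  have h : ∀ s : ℝ, (s - c) * (d - s) = (c + d) * s - s^2 - c*d := by intro s; ring
  simp_rw [h]
  have h1 : IntervalIntegrable (fun s : ℝ => (c + d) * s) volume c d :=
    (continuous_const.mul continuous_id).intervalIntegrable _ _
  have h2 : IntervalIntegrable (fun s : ℝ => s^2) volume c d :=
    (continuous_pow 2).intervalIntegrable _ _
  have h3 : IntervalIntegrable (fun _ : ℝ => c*d) volume c d :=
    intervalIntegrable_const
  rw [intervalIntegral.integral_sub (h1.sub h2) h3, intervalIntegral.integral_sub h1 h2,
    intervalIntegral.integral_const_mul, integral_id, integral_pow,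
    intervalIntegral.integral_const]
  push_cast
  simp only [smul_eq_mul]
  ring

lemma kernel_bound (a b c d : ℝ) (g'' : ℝ → ℝ) (hg3 : ContinuousOn g'' (Set.Icc a b))
    (M : ℝ) (hM : ∀ y ∈ Set.Icc a b, |g'' y| ≤ M)
    (hac : a ≤ c) (hcd : c < d) (hdb : d ≤ b) :
    |∫ s in c..d, (s - c) * (d - s) * g'' s| ≤ M * (d - c)^3 / 6 := by
  have hsub : Set.Icc c d ⊆ Set.Icc a b := Set.Icc_subset_Icc hac hdb
  have hKc : ContinuousOn (fun s : ℝ => (s - c) * (d - s)) (Set.Icc c d) :=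
    ((continuousOn_id.sub continuousOn_const).mul (continuousOn_const.sub continuousOn_id))
  have hint1 : IntervalIntegrable (fun s => |(s - c) * (d - s) * g'' s|) volume c d := by
    apply ContinuousOn.intervalIntegrable
    rw [Set.uIcc_of_le hcd.le]
    exact (hKc.mul (hg3.mono hsub)).abs
  have hint2 : IntervalIntegrable (fun s => (s - c) * (d - s) * M) volume c d :=
    ((continuous_id.sub continuous_const).mul (continuous_const.sub continuous_id)).mul
      continuous_const |>.intervalIntegrable _ _
  calc |∫ s in c..d, (s - c) * (d - s) * g'' s|
      ≤ ∫ s in c..d, |(s - c) * (d - s) * g'' s| :=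
        intervalIntegral.abs_integral_le_integral_abs hcd.le
    _ ≤ ∫ s in c..d, (s - c) * (d - s) * M := by
        apply intervalIntegral.integral_mono_on hcd.le hint1 hint2
        intro s hs
        have h1 : 0 ≤ (s - c) * (d - s) := mul_nonneg (by linarith [hs.1]) (by linarith [hs.2])
        rw [abs_mul, abs_of_nonneg h1]
        exact mul_le_mul_of_nonneg_left (hM s (hsub hs)) h1
    _ = M * (d - c)^3 / 6 := by
        rw [intervalIntegral.integral_mul_const, kernel_value]
        ring

lemma bullen_c2_bound (a b α β : ℝ) (g g' g'' : ℝ → ℝ) (hg : IsC2On a b g g' g'')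
    (M : ℝ) (hM : ∀ y ∈ Set.Icc a b, |g'' y| ≤ M)
    (hα : a ≤ α) (hβ : β ≤ b) (hαβ : α < β) :
    |bullen α β g| ≤ (β - α)^2 / 24 * M := by
  set m : ℝ := (α + β) / 2 with hm
  have hm1 : α < m := by rw [hm]; linarith
  have hm2 : m < β := by rw [hm]; linarith
  have hcg : ContinuousOn g (Set.Icc a b) := fun y hy => (hg.1 y hy).continuousWithinAt
  have h1 := kernel_integral a b α m g g' g'' hg hα hm1 (le_trans hm2.le hβ)
  have h2 := kernel_integral a b m β g g' g'' hg (le_trans hα hm1.le) hm2 hβ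
  have hb1 := kernel_bound a b α m g'' hg.2.2 M hM hα hm1 (le_trans hm2.le hβ)
  have hb2 := kernel_bound a b m β g'' hg.2.2 M hM (le_trans hα hm1.le) hm2 hβ
  have hintg1 : IntervalIntegrable g volume α m := by
    apply ContinuousOn.intervalIntegrable
    rw [Set.uIcc_of_le hm1.le]
    exact hcg.mono (Set.Icc_subset_Icc hα (le_trans hm2.le hβ))
  have hintg2 : IntervalIntegrable g volume m β := by
    apply ContinuousOn.intervalIntegrable
    rw [Set.uIcc_of_le hm2.le]
    exact hcg.mono (Set.Icc_subset_Icc (le_trans hα hm1.le) hβ)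
  have hadd : (∫ s in α..m, g s) + ∫ s in m..β, g s = ∫ s in α..β, g s :=
    intervalIntegral.integral_add_adjacent_intervals hintg1 hintg2
  have hβα : β - α ≠ 0 := by linarith
  have hkey : bullen α β g = (1 / (β - α)) *
      ((∫ s in α..m, (s - α) * (m - s) * g'' s) + ∫ s in m..β, (s - m) * (β - s) * g'' s) := by
    rw [h1, h2, bullen, ← hadd, ← hm]
    field_simp
    ring
  rw [hkey, abs_mul]
  have habs : |(∫ s in α..m, (s - α) * (m - s) * g'' s) +
      ∫ s in m..β, (s - m) * (β - s) * g'' s| ≤ M * (β - α)^3 / 24 := by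
    have hma : m - α = (β - α) / 2 := by rw [hm]; ring
    have hbm : β - m = (β - α) / 2 := by rw [hm]; ring
    calc |(∫ s in α..m, (s - α) * (m - s) * g'' s) + ∫ s in m..β, (s - m) * (β - s) * g'' s|
        ≤ _ + _ := abs_add_le _ _
      _ ≤ M * (m - α)^3 / 6 + M * (β - m)^3 / 6 := add_le_add hb1 hb2
      _ = M * (β - α)^3 / 24 := by rw [hma, hbm]; ring
  have h1β : |1 / (β - α)| = 1 / (β - α) := abs_of_pos (one_div_pos.2 (by linarith))
  rw [h1β]
  calc (1 / (β - α)) * |_| ≤ (1 / (β - α)) * (M * (β - α)^3 / 24) := by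
        apply mul_le_mul_of_nonneg_left habs (le_of_lt (one_div_pos.2 (by linarith)))
    _ = (β - α)^2 / 24 * M := by field_simp

lemma bullen_sup_bound (a b α β : ℝ) (u : ℝ → ℝ) (C : ℝ)
    (hC : ∀ y ∈ Set.Icc a b, |u y| ≤ C)
    (hα : a ≤ α) (hβ : β ≤ b) (hαβ : α < β) :
    |bullen α β u| ≤ 4 * C := by
  have hsub : Set.Icc α β ⊆ Set.Icc a b := Set.Icc_subset_Icc hα hβ
  have hmem : ∀ y ∈ Set.Icc α β, |u y| ≤ C := fun y hy => hC y (hsub hy)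
  have h1 : |u α| ≤ C := hmem α ⟨le_refl _, hαβ.le⟩
  have h2 : |u β| ≤ C := hmem β ⟨hαβ.le, le_refl _⟩
  have h3 : |u ((α + β)/2)| ≤ C := hmem _ ⟨by linarith, by linarith⟩
  have hI : |∫ t in α..β, u t| ≤ C * |β - α| := by
    rw [← Real.norm_eq_abs]
    apply intervalIntegral.norm_integral_le_of_norm_le_const
    intro y hy
    rw [Real.norm_eq_abs]
    rw [Set.uIoc_of_le hαβ.le] at hy
    exact hmem y ⟨hy.1.le, hy.2⟩
  have hβα : (0:ℝ) < β - α := by linarith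
  have h4 : |2 / (β - α) * ∫ t in α..β, u t| ≤ 2 * C := by
    rw [abs_mul, abs_of_pos (by positivity : (0:ℝ) < 2 / (β - α))]
    calc 2 / (β - α) * |∫ t in α..β, u t| ≤ 2 / (β - α) * (C * |β - α|) := by
          apply mul_le_mul_of_nonneg_left hI (by positivity)
      _ = 2 * C := by
          rw [abs_of_pos hβα]; field_simp
  rw [bullen]
  calc |(u α + u β) / 2 + u ((α + β) / 2) - 2 / (β - α) * ∫ x in α..β, u x|
      ≤ |(u α + u β) / 2 + u ((α + β) / 2)| + |2 / (β - α) * ∫ x in α..β, u x| :=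
        abs_sub _ _
    _ ≤ |(u α + u β) / 2| + |u ((α + β) / 2)| + |2 / (β - α) * ∫ x in α..β, u x| := by
        gcongr; exact abs_add_le _ _
    _ ≤ (C + C)/2 + C + 2*C := by
        refine add_le_add (add_le_add ?_ h3) h4
        rw [abs_div, abs_two]
        exact div_le_div_of_nonneg_right ((abs_add_le _ _).trans (add_le_add h1 h2)) (by norm_num)
    _ ≤ 4 * C := by linarith

lemma le_supOn (a b : ℝ) (hab : a ≤ b) (u : ℝ → ℝ) (hu : ContinuousOn u (Set.Icc a b)) :
    ∀ y ∈ Set.Icc a b, |u y| ≤ supOn a b u := by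
  obtain ⟨C, hC⟩ := isCompact_Icc.exists_bound_of_continuousOn hu
  have hbdd : BddAbove (Set.range fun y : Set.Icc a b => |u y|) := by
    refine ⟨C, ?_⟩
    rintro _ ⟨y, rfl⟩
    simpa [Real.norm_eq_abs] using hC y y.2
  intro y hy
  exact le_ciSup hbdd (⟨y, hy⟩ : Set.Icc a b)

lemma supOn_nonneg (a b : ℝ) (hab : a ≤ b) (u : ℝ → ℝ) (hu : ContinuousOn u (Set.Icc a b)) :
    0 ≤ supOn a b u :=
  le_trans (abs_nonneg (u a)) (le_supOn a b hab u hu a ⟨le_refl _, hab⟩)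

lemma bullenC_eq_sum (a b : ℝ) (n : ℕ) (x : ℕ → ℝ) (u : ℝ → ℝ) :
    bullenC a b n x u = (1 / (b - a)) * ∑ i ∈ Finset.range n,
      (x (i+1) - x i) * bullen (x i) (x (i+1)) u := rfl

lemma bullenC_bound (a b : ℝ) (hab : a < b) (n : ℕ) (x : ℕ → ℝ)
    (hmono : ∀ i < n, x i < x (i + 1)) (u : ℝ → ℝ) (B : ℕ → ℝ)
    (hB : ∀ i < n, |bullen (x i) (x (i+1)) u| ≤ B i) :
    |bullenC a b n x u| ≤ (1 / (b - a)) * ∑ i ∈ Finset.range n, (x (i+1) - x i) * B i := by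
  rw [bullenC_eq_sum, abs_mul, abs_of_pos (one_div_pos.2 (by linarith) : (0:ℝ) < 1/(b-a))]
  apply mul_le_mul_of_nonneg_left _ (le_of_lt (one_div_pos.2 (by linarith)))
  calc |∑ i ∈ Finset.range n, (x (i+1) - x i) * bullen (x i) (x (i+1)) u|
      ≤ ∑ i ∈ Finset.range n, |(x (i+1) - x i) * bullen (x i) (x (i+1)) u| :=
        Finset.abs_sum_le_sum_abs _ _
    _ ≤ ∑ i ∈ Finset.range n, (x (i+1) - x i) * B i := by
        apply Finset.sum_le_sum
        intro i hi
        have hii := hmono i (Finset.mem_range.1 hi)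
        rw [abs_mul, abs_of_pos (by linarith : (0:ℝ) < x (i+1) - x i)]
        exact mul_le_mul_of_nonneg_left (hB i (Finset.mem_range.1 hi)) (by linarith)

theorem stmt8 (a b : ℝ) (hab : a < b) (n : ℕ) (x : ℕ → ℝ)
    (hx0 : x 0 = a) (hxn : x n = b)
    (hmono : ∀ i < n, x i < x (i + 1))
    (f : ℝ → ℝ) (hf : ContinuousOn f (Set.Icc a b)) :
    |bullenC a b n x f| ≤
      4 * KF a b ((1 / (96 * (b - a))) * ∑ i ∈ Finset.range n, (x (i + 1) - x i) ^ 3) f := by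
  have hba : b - a ≠ 0 := by linarith
  have hxmono : ∀ i j, i ≤ j → j ≤ n → x i ≤ x j := by
    intro i j hij hjn
    induction j, hij using Nat.le_induction with
    | base => exact le_refl _
    | succ j hij ih => exact le_trans (ih (by omega)) (hmono j (by omega)).le
  have hxmem : ∀ i ≤ n, x i ∈ Set.Icc a b := fun i hi =>
    ⟨hx0 ▸ hxmono 0 i (Nat.zero_le _) hi, hxn ▸ hxmono i n hi (le_refl _)⟩
  have htel : ∑ i ∈ Finset.range n, (x (i+1) - x i) = b - a := by
    rw [Finset.sum_range_sub (fun i => x i), hx0, hxn]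
  set T := (1 / (96 * (b - a))) * ∑ i ∈ Finset.range n, (x (i + 1) - x i) ^ 3 with hT
  have hKF : |bullenC a b n x f| / 4 ≤ KF a b T f := by
    rw [KF]
    apply le_csInf
    · exact ⟨_, fun _ => (0:ℝ), fun _ => (0:ℝ), fun _ => (0:ℝ),
        ⟨fun y _ => hasDerivWithinAt_const y _ 0, fun y _ => hasDerivWithinAt_const y _ 0,
          continuousOn_const⟩, rfl⟩
    · rintro v ⟨g, g', g'', hg, rfl⟩
      have hgc : ContinuousOn g (Set.Icc a b) := fun y hy => (hg.1 y hy).continuousWithinAt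
      set E := supOn a b (fun y => f y - g y) with hE'
      set M := supOn a b g'' with hM'
      have hE : ∀ y ∈ Set.Icc a b, |f y - g y| ≤ E :=
        le_supOn a b hab.le _ (hf.sub hgc)
      have hMle : ∀ y ∈ Set.Icc a b, |g'' y| ≤ M := le_supOn a b hab.le g'' hg.2.2
      have hbounds : ∀ i < n, a ≤ x i ∧ x (i+1) ≤ b ∧ x i < x (i+1) := by
        intro i hi
        exact ⟨(hxmem i (by omega)).1, (hxmem (i+1) (by omega)).2, hmono i hi⟩
      have hsplit : bullenC a b n x f
          = bullenC a b n x (fun y => f y - g y) + bullenC a b n x g := by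
        rw [bullenC, bullenC, bullenC, ← mul_add, ← Finset.sum_add_distrib]
        congr 1
        apply Finset.sum_congr rfl
        intro i hi
        obtain ⟨h1, h2, h3⟩ := hbounds i (Finset.mem_range.1 hi)
        have hif : IntervalIntegrable f MeasureTheory.volume (x i) (x (i+1)) := by
          apply ContinuousOn.intervalIntegrable
          rw [Set.uIcc_of_le h3.le]
          exact hf.mono (Set.Icc_subset_Icc h1 h2)
        have hig : IntervalIntegrable g MeasureTheory.volume (x i) (x (i+1)) := by
          apply ContinuousOn.intervalIntegrable
          rw [Set.uIcc_of_le h3.le]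
          exact hgc.mono (Set.Icc_subset_Icc h1 h2)
        rw [intervalIntegral.integral_sub hif hig]
        ring
      have hb1 : |bullenC a b n x (fun y => f y - g y)| ≤ 4 * E := by
        have h := bullenC_bound a b hab n x hmono (fun y => f y - g y) (fun _ => 4*E)
          (fun i hi => by
            obtain ⟨h1, h2, h3⟩ := hbounds i hi
            exact bullen_sup_bound a b (x i) (x (i+1)) (fun y => f y - g y) E hE h1 h2 h3)
        have hsum : ∑ i ∈ Finset.range n, (x (i+1) - x i) * (4*E) = (b-a)*(4*E) := by
          rw [← Finset.sum_mul, htel]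
        beta_reduce at h
        rw [hsum] at h
        calc |bullenC a b n x (fun y => f y - g y)| ≤ (1/(b-a)) * ((b-a)*(4*E)) := h
          _ = 4 * E := by field_simp
      have hb2 : |bullenC a b n x g| ≤ 4 * (T * M) := by
        have h := bullenC_bound a b hab n x hmono g (fun i => (x (i+1) - x i)^2/24 * M)
          (fun i hi => by
            obtain ⟨h1, h2, h3⟩ := hbounds i hi
            exact bullen_c2_bound a b (x i) (x (i+1)) g g' g'' hg M hMle h1 h2 h3)
        have hsum : ∑ i ∈ Finset.range n, (x (i+1) - x i) * ((x (i+1) - x i)^2/24 * M)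
            = (∑ i ∈ Finset.range n, (x (i+1) - x i)^3) * (M/24) := by
          have e : ∀ i ∈ Finset.range n, (x (i+1) - x i) * ((x (i+1) - x i)^2/24 * M)
              = (x (i+1) - x i)^3 * (M/24) := fun i _ => by ring
          rw [Finset.sum_congr rfl e, ← Finset.sum_mul]
        beta_reduce at h
        rw [hsum] at h
        calc |bullenC a b n x g|
            ≤ (1/(b-a)) * ((∑ i ∈ Finset.range n, (x (i+1) - x i)^3) * (M/24)) := h
          _ = 4 * (T * M) := by rw [hT]; field_simp; ring
      have hfinal : |bullenC a b n x f| ≤ 4*E + 4*(T*M) := by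
        rw [hsplit]
        exact (abs_add_le _ _).trans (add_le_add hb1 hb2)
      linarith
  linarith
end

section
/- For every f ∈ C[a,b] and every x ∈ [a,b], |(1/2)[(x-a)f(a) + (b-a)f(x) + (b-x)f(b)] - ∫_a^b f(t) dt| ≤ 2(b-a) K(f; ((x-a)³+(b-x)³)/(24(b-a))), where K(f;t) = inf { ‖f-g‖_∞ + t‖g''‖_∞ : g ∈ C²[a,b] }. -/
open Set intervalIntegral

open MeasureTheory

lemma abs_le_supOn {a b : ℝ} (h : ℝ → ℝ) (hh : ContinuousOn h (Set.Icc a b))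
    {t : ℝ} (ht : t ∈ Set.Icc a b) : |h t| ≤ supOn a b h := by
  obtain ⟨C, hC⟩ := isCompact_Icc.exists_bound_of_continuousOn hh
  have hb : BddAbove (Set.range fun y : Set.Icc a b => |h y|) := by
    refine ⟨C, ?_⟩
    rintro v ⟨y, rfl⟩
    simpa [Real.norm_eq_abs] using hC y y.2
  exact le_ciSup hb ⟨t, ht⟩

lemma trap (a b c d : ℝ) (hcd : c ≤ d) (hsub : Set.Icc c d ⊆ Set.Icc a b)
    (g g' g'' : ℝ → ℝ) (hg : IsC2On a b g g' g'') :
    (d - c) * (g c + g d) / 2 - ∫ t in c..d, g t =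
      ∫ t in c..d, (t - c) * (d - t) / 2 * g'' t := by
  obtain ⟨h1, h2, h3⟩ := hg
  have hcm : c ∈ Set.Icc a b := hsub ⟨le_rfl, hcd⟩
  have hdm : d ∈ Set.Icc a b := hsub ⟨hcd, le_rfl⟩
  have hgc : ContinuousOn g (Set.Icc a b) := fun y hy => (h1 y hy).continuousWithinAt
  have hg'c : ContinuousOn g' (Set.Icc a b) := fun y hy => (h2 y hy).continuousWithinAt
  have hpoly : Continuous fun t : ℝ => (t - c) * (d - t) / 2 := by continuity
  have hpoly1 : Continuous fun t : ℝ => (c + d - 2 * t) / 2 := by continuity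
  have hΦcont : ContinuousOn
      (fun t => (t - c) * (d - t) / 2 * g' t - (c + d - 2 * t) / 2 * g t) (Set.Icc c d) :=
    ((hpoly.continuousOn.mul (hg'c.mono hsub)).sub
      (hpoly1.continuousOn.mul (hgc.mono hsub)))
  have hintu : IntervalIntegrable (fun t => (t - c) * (d - t) / 2 * g'' t) volume c d := by
    apply ContinuousOn.intervalIntegrable
    rw [uIcc_of_le hcd]
    exact hpoly.continuousOn.mul (h3.mono hsub)
  have hintg : IntervalIntegrable g volume c d := by
    apply ContinuousOn.intervalIntegrable
    rw [uIcc_of_le hcd]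
    exact hgc.mono hsub
  have hderiv : ∀ t ∈ Set.Ioo c d,
      HasDerivWithinAt (fun t => (t - c) * (d - t) / 2 * g' t - (c + d - 2 * t) / 2 * g t)
        ((t - c) * (d - t) / 2 * g'' t + g t) (Set.Ioi t) t := by
    intro t ht
    have htab : t ∈ Set.Icc a b := hsub ⟨ht.1.le, ht.2.le⟩
    have hnhd : Set.Icc a b ∈ nhds t :=
      Icc_mem_nhds (lt_of_le_of_lt hcm.1 ht.1) (lt_of_lt_of_le ht.2 hdm.2)
    have hg1 : HasDerivAt g (g' t) t := (h1 t htab).hasDerivAt hnhd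
    have hg2 : HasDerivAt g' (g'' t) t := (h2 t htab).hasDerivAt hnhd
    have hu : HasDerivAt (fun t => (t - c) * (d - t) / 2) ((c + d - 2 * t) / 2) t := by
      have := (((hasDerivAt_id t).sub_const c).mul
        ((hasDerivAt_const t d).sub (hasDerivAt_id t))).div_const 2
      refine this.congr_deriv ?_
      first
      | (simp only [Pi.sub_apply, id_eq]; ring)
      | ring
      | norm_num
    have hu1 : HasDerivAt (fun t => (c + d - 2 * t) / 2) (-1) t := by
      have := ((hasDerivAt_const t (c + d)).sub ((hasDerivAt_id t).const_mul 2)).div_const 2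
      refine this.congr_deriv ?_
      first
      | (simp only [id_eq]; ring)
      | ring
      | norm_num
    have h' : HasDerivAt
        (fun t => (t - c) * (d - t) / 2 * g' t - (c + d - 2 * t) / 2 * g t)
        ((t - c) * (d - t) / 2 * g'' t + g t) t := by
      refine ((hu.mul hg2).sub (hu1.mul hg1)).congr_deriv ?_
      ring
    exact h'.hasDerivWithinAt
  have key := intervalIntegral.integral_eq_sub_of_hasDeriv_right_of_le hcd hΦcont hderiv
    (hintu.add hintg)
  have hsplit := intervalIntegral.integral_add hintu hintg
  have hval : ((d - c) * (d - d) / 2 * g' d - (c + d - 2 * d) / 2 * g d) -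
      ((c - c) * (d - c) / 2 * g' c - (c + d - 2 * c) / 2 * g c) =
      (d - c) * (g c + g d) / 2 := by ring
  rw [hsplit] at key
  linarith

lemma kernel_integral_s11 (c d : ℝ) :
    ∫ t in c..d, (t - c) * (d - t) / 2 = (d - c) ^ 3 / 12 := by
  have hd : ∀ t ∈ Set.uIcc c d, HasDerivAt
      (fun t : ℝ => -(t ^ 3) / 6 + (c + d) * t ^ 2 / 4 - c * d * t / 2)
      ((t - c) * (d - t) / 2) t := by
    intro t _
    have := (((hasDerivAt_pow 3 t).neg.div_const 6).add
      (((hasDerivAt_pow 2 t).const_mul (c + d)).div_const 4)).sub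
      (((hasDerivAt_id t).const_mul (c * d)).div_const 2)
    refine this.congr_deriv ?_
    first
    | (simp only [id_eq]; ring)
    | ring
    | norm_num
  have hint : IntervalIntegrable (fun t : ℝ => (t - c) * (d - t) / 2) volume c d :=
    (by continuity : Continuous fun t : ℝ => (t - c) * (d - t) / 2).intervalIntegrable c d
  rw [intervalIntegral.integral_eq_sub_of_hasDerivAt hd hint]
  ring

lemma trap_bound (a b c d : ℝ) (hcd : c ≤ d) (hsub : Set.Icc c d ⊆ Set.Icc a b)
    (g'' : ℝ → ℝ) (hcont : ContinuousOn g'' (Set.Icc a b)) (M : ℝ)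
    (hM : ∀ t ∈ Set.Icc a b, |g'' t| ≤ M) :
    |∫ t in c..d, (t - c) * (d - t) / 2 * g'' t| ≤ (d - c) ^ 3 / 12 * M := by
  have hpoly : Continuous fun t : ℝ => (t - c) * (d - t) / 2 := by continuity
  have hint1 : IntervalIntegrable (fun t => |(t - c) * (d - t) / 2 * g'' t|) volume c d := by
    apply ContinuousOn.intervalIntegrable
    rw [uIcc_of_le hcd]
    exact (hpoly.continuousOn.mul (hcont.mono hsub)).abs
  have hint2 : IntervalIntegrable (fun t => (t - c) * (d - t) / 2 * M) volume c d :=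
    (hpoly.mul continuous_const).intervalIntegrable c d
  have h1 : |∫ t in c..d, (t - c) * (d - t) / 2 * g'' t| ≤
      ∫ t in c..d, |(t - c) * (d - t) / 2 * g'' t| :=
    intervalIntegral.abs_integral_le_integral_abs hcd
  have h2 : (∫ t in c..d, |(t - c) * (d - t) / 2 * g'' t|) ≤
      ∫ t in c..d, (t - c) * (d - t) / 2 * M := by
    apply intervalIntegral.integral_mono_on hcd hint1 hint2
    intro t ht
    have hu : 0 ≤ (t - c) * (d - t) / 2 :=
      div_nonneg (mul_nonneg (by linarith [ht.1]) (by linarith [ht.2])) (by norm_num)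
    rw [abs_mul, abs_of_nonneg hu]
    exact mul_le_mul_of_nonneg_left (hM t (hsub ht)) hu
  have h3 : (∫ t in c..d, (t - c) * (d - t) / 2 * M) = (d - c) ^ 3 / 12 * M := by
    rw [intervalIntegral.integral_mul_const, kernel_integral_s11, mul_comm]
  linarith

theorem stmt11 (a b : ℝ) (hab : a < b) (f : ℝ → ℝ)
    (hf : ContinuousOn f (Set.Icc a b)) (x : ℝ) (hx : x ∈ Set.Icc a b) :
    |(1 / 2) * ((x - a) * f a + (b - a) * f x + (b - x) * f b) - ∫ t in a..b, f t| ≤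
      2 * (b - a) * KF a b (((x - a) ^ 3 + (b - x) ^ 3) / (24 * (b - a))) f := by
  set t0 : ℝ := ((x - a) ^ 3 + (b - x) ^ 3) / (24 * (b - a)) with ht0
  have hba : (0:ℝ) < b - a := by linarith
  have hpos : (0:ℝ) < 2 * (b - a) := by linarith
  -- the set is nonempty
  have hzero : IsC2On a b (fun _ => 0) (fun _ => 0) (fun _ => 0) :=
    ⟨fun y _ => hasDerivWithinAt_const y _ 0, fun y _ => hasDerivWithinAt_const y _ 0,
      continuousOn_const⟩
  have hne : {v : ℝ | ∃ g g' g'', IsC2On a b g g' g'' ∧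
      v = supOn a b (fun y => f y - g y) + t0 * supOn a b g''}.Nonempty :=
    ⟨_, (fun _ => 0), (fun _ => 0), (fun _ => 0), hzero, rfl⟩
  rw [← div_le_iff₀' hpos]
  apply le_csInf hne
  rintro v ⟨g, g', g'', hC2, rfl⟩
  rw [div_le_iff₀' hpos]
  obtain ⟨h1, h2, h3⟩ := hC2
  have hgc : ContinuousOn g (Set.Icc a b) := fun y hy => (h1 y hy).continuousWithinAt
  set M1 : ℝ := supOn a b (fun y => f y - g y) with hM1
  set M2 : ℝ := supOn a b g'' with hM2
  have hDc : ContinuousOn (fun y => f y - g y) (Set.Icc a b) := hf.sub hgc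
  have hDbound : ∀ t ∈ Set.Icc a b, |f t - g t| ≤ M1 := fun t ht => abs_le_supOn _ hDc ht
  have hM2bound : ∀ t ∈ Set.Icc a b, |g'' t| ≤ M2 := fun t ht => abs_le_supOn _ h3 ht
  -- integrability
  have hfint : IntervalIntegrable f volume a b := by
    apply ContinuousOn.intervalIntegrable; rwa [uIcc_of_le hab.le]
  have hgint : IntervalIntegrable g volume a b := by
    apply ContinuousOn.intervalIntegrable; rwa [uIcc_of_le hab.le]
  -- trapezoid identities on [a,x] and [x,b]
  have hsub1 : Set.Icc a x ⊆ Set.Icc a b := Set.Icc_subset_Icc le_rfl hx.2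
  have hsub2 : Set.Icc x b ⊆ Set.Icc a b := Set.Icc_subset_Icc hx.1 le_rfl
  have hT1 := trap a b a x hx.1 hsub1 g g' g'' ⟨h1, h2, h3⟩
  have hT2 := trap a b x b hx.2 hsub2 g g' g'' ⟨h1, h2, h3⟩
  have hB1 := trap_bound a b a x hx.1 hsub1 g'' h3 M2 hM2bound
  have hB2 := trap_bound a b x b hx.2 hsub2 g'' h3 M2 hM2bound
  -- split ∫ g over [a,x] and [x,b]
  have hg1int : IntervalIntegrable g volume a x := by
    apply ContinuousOn.intervalIntegrable
    rw [uIcc_of_le hx.1]; exact hgc.mono hsub1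
  have hg2int : IntervalIntegrable g volume x b := by
    apply ContinuousOn.intervalIntegrable
    rw [uIcc_of_le hx.2]; exact hgc.mono hsub2
  have hsplit : (∫ t in a..x, g t) + ∫ t in x..b, g t = ∫ t in a..b, g t :=
    intervalIntegral.integral_add_adjacent_intervals hg1int hg2int
  -- bound for |Q g - ∫ g|
  have hQg : |(1 / 2) * ((x - a) * g a + (b - a) * g x + (b - x) * g b) - ∫ t in a..b, g t| ≤
      ((x - a) ^ 3 + (b - x) ^ 3) / 12 * M2 := by
    have heq : (1 / 2) * ((x - a) * g a + (b - a) * g x + (b - x) * g b) - (∫ t in a..b, g t) =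
        ((x - a) * (g a + g x) / 2 - ∫ t in a..x, g t) +
        ((b - x) * (g x + g b) / 2 - ∫ t in x..b, g t) := by
      rw [← hsplit]; ring
    rw [heq, hT1, hT2]
    calc |(∫ t in a..x, (t - a) * (x - t) / 2 * g'' t) +
            ∫ t in x..b, (t - x) * (b - t) / 2 * g'' t| ≤
        |∫ t in a..x, (t - a) * (x - t) / 2 * g'' t| +
          |∫ t in x..b, (t - x) * (b - t) / 2 * g'' t| := abs_add_le _ _
      _ ≤ (x - a) ^ 3 / 12 * M2 + (b - x) ^ 3 / 12 * M2 := add_le_add hB1 hB2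
      _ = ((x - a) ^ 3 + (b - x) ^ 3) / 12 * M2 := by ring
  -- bound for the (f - g) part
  have hQD : |(1 / 2) * ((x - a) * (f a - g a) + (b - a) * (f x - g x) + (b - x) * (f b - g b))|
      ≤ (b - a) * M1 := by
    have ha' : |f a - g a| ≤ M1 := hDbound a ⟨le_rfl, hab.le⟩
    have hx' : |f x - g x| ≤ M1 := hDbound x hx
    have hb' : |f b - g b| ≤ M1 := hDbound b ⟨hab.le, le_rfl⟩
    have h0a := abs_nonneg (f a - g a)
    have hxa : 0 ≤ x - a := by linarith [hx.1]
    have hbx : 0 ≤ b - x := by linarith [hx.2]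
    calc |(1 / 2) * ((x - a) * (f a - g a) + (b - a) * (f x - g x) + (b - x) * (f b - g b))|
        ≤ (1 / 2) * ((x - a) * |f a - g a| + (b - a) * |f x - g x| + (b - x) * |f b - g b|) := by
          rw [abs_mul]
          rw [abs_of_nonneg (by norm_num : (0:ℝ) ≤ 1/2)]
          apply mul_le_mul_of_nonneg_left _ (by norm_num : (0:ℝ) ≤ 1/2)
          calc |(x - a) * (f a - g a) + (b - a) * (f x - g x) + (b - x) * (f b - g b)|
              ≤ |(x - a) * (f a - g a) + (b - a) * (f x - g x)| + |(b - x) * (f b - g b)| :=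
                abs_add_le _ _
            _ ≤ |(x - a) * (f a - g a)| + |(b - a) * (f x - g x)| + |(b - x) * (f b - g b)| := by
                linarith [abs_add_le ((x - a) * (f a - g a)) ((b - a) * (f x - g x))]
            _ ≤ (x - a) * |f a - g a| + (b - a) * |f x - g x| + (b - x) * |f b - g b| := by
                rw [abs_mul, abs_mul, abs_mul, abs_of_nonneg hxa, abs_of_nonneg hba.le,
                  abs_of_nonneg hbx]
      _ ≤ (1 / 2) * ((x - a) * M1 + (b - a) * M1 + (b - x) * M1) := by
          have := mul_le_mul_of_nonneg_left ha' hxa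
          have := mul_le_mul_of_nonneg_left hx' hba.le
          have := mul_le_mul_of_nonneg_left hb' hbx
          linarith
      _ = (b - a) * M1 := by ring
  have hID : |∫ t in a..b, (f t - g t)| ≤ (b - a) * M1 := by
    have := intervalIntegral.norm_integral_le_of_norm_le_const
      (C := M1) (f := fun t => f t - g t) (a := a) (b := b) ?_
    · rw [Real.norm_eq_abs] at this
      calc |∫ t in a..b, (f t - g t)| ≤ M1 * |b - a| := this
        _ = (b - a) * M1 := by rw [abs_of_nonneg hba.le]; ring
    · intro y hy
      rw [Set.uIoc_of_le hab.le] at hy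
      exact hDbound y ⟨hy.1.le, hy.2⟩
  -- combine
  have hIsub : (∫ t in a..b, (f t - g t)) = (∫ t in a..b, f t) - ∫ t in a..b, g t :=
    intervalIntegral.integral_sub hfint hgint
  have hkey : |(1 / 2) * ((x - a) * f a + (b - a) * f x + (b - x) * f b) - ∫ t in a..b, f t| ≤
      2 * (b - a) * M1 + ((x - a) ^ 3 + (b - x) ^ 3) / 12 * M2 := by
    have hdecomp : (1 / 2) * ((x - a) * f a + (b - a) * f x + (b - x) * f b) -
        (∫ t in a..b, f t) =
        ((1 / 2) * ((x - a) * (f a - g a) + (b - a) * (f x - g x) + (b - x) * (f b - g b)) -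
          ∫ t in a..b, (f t - g t)) +
        ((1 / 2) * ((x - a) * g a + (b - a) * g x + (b - x) * g b) - ∫ t in a..b, g t) := by
      rw [hIsub]; ring
    rw [hdecomp]
    calc |_ + _| ≤ _ := abs_add_le _ _
      _ ≤ ((b - a) * M1 + (b - a) * M1) + ((x - a) ^ 3 + (b - x) ^ 3) / 12 * M2 := by
          have := abs_sub (( 1 / 2) * ((x - a) * (f a - g a) + (b - a) * (f x - g x) +
            (b - x) * (f b - g b))) (∫ t in a..b, (f t - g t))
          have habs : |(1 / 2) * ((x - a) * (f a - g a) + (b - a) * (f x - g x) +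
              (b - x) * (f b - g b)) - ∫ t in a..b, (f t - g t)| ≤ (b - a) * M1 + (b - a) * M1 := by
            calc _ ≤ |(1 / 2) * ((x - a) * (f a - g a) + (b - a) * (f x - g x) +
                  (b - x) * (f b - g b))| + |∫ t in a..b, (f t - g t)| := abs_sub _ _
              _ ≤ (b - a) * M1 + (b - a) * M1 := add_le_add hQD hID
          exact add_le_add habs hQg
      _ = 2 * (b - a) * M1 + ((x - a) ^ 3 + (b - x) ^ 3) / 12 * M2 := by ring
  have ht0eq : 2 * (b - a) * t0 = ((x - a) ^ 3 + (b - x) ^ 3) / 12 := by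
    rw [ht0]; field_simp; ring
  calc |(1 / 2) * ((x - a) * f a + (b - a) * f x + (b - x) * f b) - ∫ t in a..b, f t|
      ≤ 2 * (b - a) * M1 + ((x - a) ^ 3 + (b - x) ^ 3) / 12 * M2 := hkey
    _ = 2 * (b - a) * M1 + 2 * (b - a) * t0 * M2 := by rw [ht0eq]
    _ = 2 * (b - a) * (M1 + t0 * M2) := by ring
end

section
/- For every g ∈ C²[a,b] and every x ∈ [a,b], |(1/2)[(x-a)g(a) + (b-a)g(x) + (b-x)g(b)] - ∫_a^b g(t) dt| ≤ (((x-a)³+(b-x)³)/12) ‖g''‖_∞. -/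
open Set intervalIntegral

lemma sup_bound (a b : ℝ) (g'' : ℝ → ℝ) (hc : ContinuousOn g'' (Set.Icc a b)) :
    ∀ t ∈ Set.Icc a b, |g'' t| ≤ supOn a b g'' := by
  intro t ht
  have himg : BddAbove ((fun s => |g'' s|) '' Set.Icc a b) :=
    (isCompact_Icc.image_of_continuousOn hc.abs).bddAbove
  have hbdd : BddAbove (Set.range fun s : Set.Icc a b => |g'' s.1|) := by
    apply himg.mono
    rintro _ ⟨⟨s, hs⟩, rfl⟩; exact ⟨s, hs, rfl⟩
  exact le_ciSup hbdd (⟨t, ht⟩ : Set.Icc a b)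

lemma poly_int (u v : ℝ) :
    ∫ t in u..v, (t - u) * (v - t) / 2 = (v - u) ^ 3 / 12 := by
  have hQ : ∀ t : ℝ, HasDerivAt (fun t => ((t - u) ^ 2 * (v - u) / 2 - (t - u) ^ 3 / 3) / 2)
      ((t - u) * (v - t) / 2) t := by
    intro t
    have h1 : HasDerivAt (fun t : ℝ => t - u) 1 t := (hasDerivAt_id t).sub_const u
    have h2 : HasDerivAt (fun t : ℝ => (t - u) ^ 2) (2 * (t - u) ^ 1 * 1) t := h1.pow 2
    have h3 : HasDerivAt (fun t : ℝ => (t - u) ^ 3) (3 * (t - u) ^ 2 * 1) t := h1.pow 3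
    have := (((h2.mul_const (v - u)).div_const 2).sub (h3.div_const 3)).div_const 2
    exact this.congr_deriv (by ring)
  have hint : IntervalIntegrable (fun t => (t - u) * (v - t) / 2) MeasureTheory.volume u v := by
    apply Continuous.intervalIntegrable
    continuity
  rw [intervalIntegral.integral_eq_sub_of_hasDerivAt (fun t _ => hQ t) hint]
  ring

lemma part_id (a b u v : ℝ) (hu : a ≤ u) (huv : u ≤ v) (hv : v ≤ b)
    (g g' g'' : ℝ → ℝ) (hg : IsC2On a b g g' g'') :
    ∫ t in u..v, ((t - u) * (v - t) / 2 * g'' t + g t) = (v - u) * (g u + g v) / 2 := by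
  have hsub : Set.Icc u v ⊆ Set.Icc a b := Set.Icc_subset_Icc hu hv
  have hgc : ContinuousOn g (Set.Icc a b) := fun s hs => (hg.1 s hs).continuousWithinAt
  have hg'c : ContinuousOn g' (Set.Icc a b) := fun s hs => (hg.2.1 s hs).continuousWithinAt
  set F : ℝ → ℝ := fun t => (t - u) * (v - t) / 2 * g' t - (u + v - 2 * t) / 2 * g t with hF
  have hFc : ContinuousOn F (Set.Icc u v) := by
    apply ContinuousOn.sub
    · exact (((continuousOn_id.sub continuousOn_const).mul
        ((continuousOn_const.sub continuousOn_id))).div_const 2).mul (hg'c.mono hsub)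
    · exact (((continuousOn_const.sub (continuousOn_const.mul continuousOn_id))).div_const 2).mul
        (hgc.mono hsub)
  have hderiv : ∀ t ∈ Set.Ioo u v,
      HasDerivAt F ((t - u) * (v - t) / 2 * g'' t + g t) t := by
    intro t ht
    have htab : Set.Icc a b ∈ nhds t :=
      Icc_mem_nhds (lt_of_le_of_lt hu ht.1) (lt_of_lt_of_le ht.2 hv)
    have htm : t ∈ Set.Icc a b := mem_of_mem_nhds htab
    have hgt : HasDerivAt g (g' t) t := (hg.1 t htm).hasDerivAt htab
    have hg't : HasDerivAt g' (g'' t) t := (hg.2.1 t htm).hasDerivAt htab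
    have hp : HasDerivAt (fun t => (t - u) * (v - t) / 2)
        ((1 * (v - t) + (t - u) * (0 - 1)) / 2) t :=
      (((hasDerivAt_id t).sub_const u).mul ((hasDerivAt_const t v).sub (hasDerivAt_id t))).div_const 2
    have hq : HasDerivAt (fun t => (u + v - 2 * t) / 2)
        ((0 - 2 * 1) / 2) t := by
      exact (((hasDerivAt_const t (u + v)).sub ((hasDerivAt_id t).const_mul 2)).div_const 2)
    have := (hp.mul hg't).sub (hq.mul hgt)
    exact this.congr_deriv (by ring)
  have hintg : IntervalIntegrable g MeasureTheory.volume u v := by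
    rw [intervalIntegrable_iff_integrableOn_Icc_of_le huv]
    exact (hgc.mono hsub).integrableOn_compact isCompact_Icc
  have hintp : IntervalIntegrable (fun t => (t - u) * (v - t) / 2 * g'' t)
      MeasureTheory.volume u v := by
    rw [intervalIntegrable_iff_integrableOn_Icc_of_le huv]
    apply ContinuousOn.integrableOn_compact isCompact_Icc
    exact (((continuousOn_id.sub continuousOn_const).mul
      ((continuousOn_const.sub continuousOn_id))).div_const 2).mul (hg.2.2.mono hsub)
  have hint : IntervalIntegrable (fun t => (t - u) * (v - t) / 2 * g'' t + g t)
      MeasureTheory.volume u v := hintp.add hintg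
  have hderiv' : ∀ t ∈ Set.Ioo u v, HasDerivWithinAt F
      ((t - u) * (v - t) / 2 * g'' t + g t) (Set.Ioi t) t :=
    fun t ht => (hderiv t ht).hasDerivWithinAt
  rw [intervalIntegral.integral_eq_sub_of_hasDeriv_right_of_le huv hFc hderiv' hint]
  simp only [hF]
  ring

theorem stmt12 (a b : ℝ) (hab : a < b) (g g' g'' : ℝ → ℝ)
    (hg : IsC2On a b g g' g'') (x : ℝ) (hx : x ∈ Set.Icc a b) :
    |(1 / 2) * ((x - a) * g a + (b - a) * g x + (b - x) * g b) - ∫ t in a..b, g t| ≤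
      (((x - a) ^ 3 + (b - x) ^ 3) / 12) * supOn a b g'' := by
  obtain ⟨hax, hxb⟩ := hx
  have hgc : ContinuousOn g (Set.Icc a b) := fun s hs => (hg.1 s hs).continuousWithinAt
  have hM := sup_bound a b g'' hg.2.2
  -- integrability pieces
  have hintg : ∀ u v : ℝ, a ≤ u → u ≤ v → v ≤ b →
      IntervalIntegrable g MeasureTheory.volume u v := by
    intro u v hu huv hv
    rw [intervalIntegrable_iff_integrableOn_Icc_of_le huv]
    exact (hgc.mono (Set.Icc_subset_Icc hu hv)).integrableOn_compact isCompact_Icc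
  have hintp : ∀ u v : ℝ, a ≤ u → u ≤ v → v ≤ b →
      IntervalIntegrable (fun t => (t - u) * (v - t) / 2 * g'' t) MeasureTheory.volume u v := by
    intro u v hu huv hv
    rw [intervalIntegrable_iff_integrableOn_Icc_of_le huv]
    apply ContinuousOn.integrableOn_compact isCompact_Icc
    exact (((continuousOn_id.sub continuousOn_const).mul
      ((continuousOn_const.sub continuousOn_id))).div_const 2).mul
      (hg.2.2.mono (Set.Icc_subset_Icc hu hv))
  -- isolate each piece
  have key : ∀ u v : ℝ, a ≤ u → u ≤ v → v ≤ b →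
      (v - u) * (g u + g v) / 2 - (∫ t in u..v, g t)
        = ∫ t in u..v, (t - u) * (v - t) / 2 * g'' t := by
    intro u v hu huv hv
    have := part_id a b u v hu huv hv g g' g'' hg
    rw [intervalIntegral.integral_add (hintp u v hu huv hv) (hintg u v hu huv hv)] at this
    linarith
  have bound : ∀ u v : ℝ, a ≤ u → u ≤ v → v ≤ b →
      |∫ t in u..v, (t - u) * (v - t) / 2 * g'' t| ≤ (v - u) ^ 3 / 12 * supOn a b g'' := by
    intro u v hu huv hv
    have hMnn : 0 ≤ supOn a b g'' :=
      le_trans (abs_nonneg _) (hM u ⟨hu, le_trans huv hv⟩)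
    have h1 : |∫ t in u..v, (t - u) * (v - t) / 2 * g'' t|
        ≤ ∫ t in u..v, |(t - u) * (v - t) / 2 * g'' t| := by
      exact intervalIntegral.abs_integral_le_integral_abs huv
    have h2 : ∫ t in u..v, |(t - u) * (v - t) / 2 * g'' t|
        ≤ ∫ t in u..v, (t - u) * (v - t) / 2 * supOn a b g'' := by
      apply intervalIntegral.integral_mono_on huv ((hintp u v hu huv hv).abs)
      · apply Continuous.intervalIntegrable; continuity
      · intro t ht
        have hpnn : 0 ≤ (t - u) * (v - t) / 2 := by
          have : 0 ≤ (t - u) * (v - t) :=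
            mul_nonneg (by linarith [ht.1]) (by linarith [ht.2])
          linarith
        rw [abs_mul, abs_of_nonneg hpnn]
        exact mul_le_mul_of_nonneg_left (hM t ⟨le_trans hu ht.1, le_trans ht.2 hv⟩) hpnn
    have h3 : ∫ t in u..v, (t - u) * (v - t) / 2 * supOn a b g''
        = (v - u) ^ 3 / 12 * supOn a b g'' := by
      rw [intervalIntegral.integral_mul_const, poly_int]
    linarith
  -- split the integral
  have hsplit : (∫ t in a..b, g t) = (∫ t in a..x, g t) + ∫ t in x..b, g t :=
    (intervalIntegral.integral_add_adjacent_intervals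
      (hintg a x le_rfl hax hxb) (hintg x b hax hxb le_rfl)).symm
  have e1 := key a x le_rfl hax hxb
  have e2 := key x b hax hxb le_rfl
  have b1 := bound a x le_rfl hax hxb
  have b2 := bound x b hax hxb le_rfl
  have hMnn : 0 ≤ supOn a b g'' := le_trans (abs_nonneg _) (hM a ⟨le_rfl, le_of_lt hab⟩)
  have decomp : (1 / 2) * ((x - a) * g a + (b - a) * g x + (b - x) * g b) - ∫ t in a..b, g t
      = (∫ t in a..x, (t - a) * (x - t) / 2 * g'' t)
        + ∫ t in x..b, (t - x) * (b - t) / 2 * g'' t := by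
    rw [hsplit, ← e1, ← e2]; ring
  rw [decomp]
  calc |(∫ t in a..x, (t - a) * (x - t) / 2 * g'' t)
        + ∫ t in x..b, (t - x) * (b - t) / 2 * g'' t|
      ≤ |∫ t in a..x, (t - a) * (x - t) / 2 * g'' t|
        + |∫ t in x..b, (t - x) * (b - t) / 2 * g'' t| := abs_add_le _ _
    _ ≤ (x - a) ^ 3 / 12 * supOn a b g'' + (b - x) ^ 3 / 12 * supOn a b g'' := by linarith
    _ = (((x - a) ^ 3 + (b - x) ^ 3) / 12) * supOn a b g'' := by ring
end

section
/- Suppose H : C[a,b] → F, with F a normed space, satisfies: (a) ‖H(f+g)‖ ≤ γ(‖Hf‖+‖Hg‖) for all f,g ∈ C[a,b]; (b) ‖Hf‖ ≤ α‖f‖_∞ for all f ∈ C[a,b]; (c) ‖Hg‖ ≤ β₀‖g‖_∞ + β₁‖g'‖_∞ + β₂‖g''‖_∞ for all g ∈ C²[a,b]. Then for all f ∈ C[a,b] and 0 < h ≤ (b-a)/2: ‖Hf‖ ≤ γ{ β₀‖f‖_∞ + (2β₁/h) ω₁(f;h) + (3/4)(α + β₀ + 2β₁/h + 2β₂/h²)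 ω₂(f;h) }, where ω₁ and ω₂ are the first and second moduli of smoothness on [a,b]. -/
open Set intervalIntegral

set_option maxHeartbeats 1600000

namespace S16

variable {a b s : ℝ} {f : ℝ → ℝ}

lemma f_bound (hf : ContinuousOn f (Icc a b)) :
    ∃ M : ℝ, 0 ≤ M ∧ ∀ x ∈ Icc a b, |f x| ≤ M := by
  obtain ⟨M, hM⟩ := (isCompact_Icc (a := a) (b := b)).exists_bound_of_continuousOn hf
  exact ⟨max M 0, le_max_right _ _, fun x hx => by
    have := hM x hx
    rw [Real.norm_eq_abs] at this
    exact this.trans (le_max_left _ _)⟩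

lemma omega2_bdd (hf : ContinuousOn f (Icc a b)) :
    BddAbove {v : ℝ | ∃ x t : ℝ, 0 ≤ t ∧ t ≤ s ∧ x - t ∈ Set.Icc a b ∧ x + t ∈ Set.Icc a b ∧
      v = |f (x + t) - 2 * f x + f (x - t)|} := by
  obtain ⟨M, hM0, hM⟩ := f_bound hf
  refine ⟨4 * M, fun v hv => ?_⟩
  obtain ⟨x, t, ht0, hts, hxt1, hxt2, rfl⟩ := hv
  have hx : x ∈ Icc a b := by
    constructor
    · linarith [hxt1.1]
    · linarith [hxt2.2]
  have h1 := hM _ hxt2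
  have h2 := hM _ hx
  have h3 := hM _ hxt1
  have hA := abs_le.mp h1
  have hB := abs_le.mp h2
  have hC := abs_le.mp h3
  rw [abs_le]
  constructor <;> [skip; skip] <;> nlinarith [hA.1, hA.2, hB.1, hB.2, hC.1, hC.2]

lemma sd_le (hf : ContinuousOn f (Icc a b)) {x t : ℝ} (ht0 : 0 ≤ t) (hts : t ≤ s)
    (h1 : a ≤ x - t) (h2 : x + t ≤ b) :
    |f (x + t) - 2 * f x + f (x - t)| ≤ omega2 a b f s := by
  apply le_csSup (omega2_bdd hf)
  exact ⟨x, t, ht0, hts, ⟨h1, by linarith⟩, ⟨by linarith, h2⟩, rfl⟩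

lemma omega2_nonneg (hab : a ≤ b) (hs : 0 ≤ s) (hf : ContinuousOn f (Icc a b)) :
    0 ≤ omega2 a b f s := by
  have h := sd_le (s := s) hf (x := a) (t := 0) le_rfl hs (by simp) (by simpa)
  exact le_trans (abs_nonneg _) h

lemma omega1_bdd (hf : ContinuousOn f (Icc a b)) :
    BddAbove {v : ℝ | ∃ x ∈ Set.Icc a b, ∃ y ∈ Set.Icc a b, |x - y| ≤ s ∧ v = |f x - f y|} := by
  obtain ⟨M, hM0, hM⟩ := f_bound hf
  refine ⟨2 * M, fun v hv => ?_⟩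
  obtain ⟨x, hx, y, hy, hxy, rfl⟩ := hv
  have h1 := hM _ hx
  have h2 := hM _ hy
  calc |f x - f y| ≤ |f x| + |f y| := abs_sub _ _
    _ ≤ 2 * M := by linarith

lemma od_le (hf : ContinuousOn f (Icc a b)) {x y : ℝ} (hx : x ∈ Icc a b) (hy : y ∈ Icc a b)
    (hxy : |x - y| ≤ s) : |f x - f y| ≤ omega1 a b f s :=
  le_csSup (omega1_bdd hf) ⟨x, hx, y, hy, hxy, rfl⟩

lemma omega1_nonneg (hab : a ≤ b) (hs : 0 ≤ s) (hf : ContinuousOn f (Icc a b)) :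
    0 ≤ omega1 a b f s := by
  have h := od_le (s := s) hf (x := a) (y := a) (by simp [hab]) (by simp [hab]) (by simpa)
  simpa using le_trans (abs_nonneg _) h

/-- The chord (two-point interpolation) lemma: on any subinterval of length ≤ 2s,
f deviates from the chord by at most ω₂(f;s). -/
lemma chord_le (hab : a ≤ b) (hf : ContinuousOn f (Icc a b))
    {p q : ℝ} (hpa : a ≤ p) (hpq : p < q) (hqb : q ≤ b) (hlen : q - p ≤ 2 * s)
    {w : ℝ} (hw : w ∈ Icc p q) :
    |f w - (f p + (w - p) * ((f q - f p) / (q - p)))| ≤ omega2 a b f s := by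
  set L : ℝ → ℝ := fun y => f p + (y - p) * ((f q - f p) / (q - p)) with hL
  have hsub : Icc p q ⊆ Icc a b := Icc_subset_Icc hpa hqb
  have hcont : ContinuousOn (fun y => |f y - L y|) (Icc p q) := by
    apply ContinuousOn.abs
    apply ContinuousOn.sub (hf.mono hsub)
    fun_prop
  obtain ⟨z, hz, hzmax⟩ := isCompact_Icc.exists_isMaxOn (nonempty_Icc.mpr hpq.le) hcont
  have hmax : ∀ y ∈ Icc p q, |f y - L y| ≤ |f z - L z| := fun y hy => hzmax hy
  refine le_trans (hmax w hw) ?_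
  have hLp : L p = f p := by simp [hL]
  have hne : q - p ≠ 0 := sub_ne_zero.mpr hpq.ne'
  have hLq : L q = f q := by
    simp only [hL]
    field_simp
    ring
  have hLaff : ∀ y t : ℝ, L (y + t) - 2 * L y + L (y - t) = 0 := by
    intro y t; simp only [hL]; ring
  rcases le_or_gt z ((p + q) / 2) with hhalf | hhalf
  · -- reflect at p
    set t := z - p with htdef
    have ht0 : 0 ≤ t := by simp [htdef]; linarith [hz.1]
    have hts : t ≤ s := by simp [htdef]; linarith
    have hzt : z - t = p := by simp [htdef]
    have hztq : z + t ≤ q := by simp [htdef]; linarith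
    have key : |f (z + t) - 2 * f z + f (z - t)| ≤ omega2 a b f s :=
      sd_le hf ht0 hts (by rw [hzt]; exact hpa) (by linarith)
    have hid : 2 * (f z - L z) =
        ((f (z + t) - L (z + t)) + (f (z - t) - L (z - t)))
          - (f (z + t) - 2 * f z + f (z - t)) := by
      have := hLaff z t; linarith
    have hz1 : |f (z + t) - L (z + t)| ≤ |f z - L z| :=
      hmax _ ⟨by linarith, hztq⟩
    have hz2 : f (z - t) - L (z - t) = 0 := by rw [hzt, hLp]; ring
    have : 2 * |f z - L z| ≤ |f z - L z| + omega2 a b f s := by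
      calc 2 * |f z - L z| = |2 * (f z - L z)| := by rw [abs_mul]; norm_num
        _ ≤ |(f (z + t) - L (z + t)) + (f (z - t) - L (z - t))|
              + |f (z + t) - 2 * f z + f (z - t)| := by rw [hid]; exact abs_sub _ _
        _ ≤ (|f (z + t) - L (z + t)| + |f (z - t) - L (z - t)|)
              + omega2 a b f s := by
            gcongr
            exact abs_add_le _ _
        _ ≤ |f z - L z| + omega2 a b f s := by
            rw [hz2]; simp; linarith [hz1]
    linarith
  · -- reflect at q
    set t := q - z with htdef
    have ht0 : 0 ≤ t := by simp [htdef]; linarith [hz.2]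
    have hts : t ≤ s := by simp [htdef]; linarith
    have hzt : z + t = q := by simp [htdef]
    have hztp : p ≤ z - t := by simp [htdef]; linarith
    have key : |f (z + t) - 2 * f z + f (z - t)| ≤ omega2 a b f s :=
      sd_le hf ht0 hts (by linarith) (by rw [hzt]; exact hqb)
    have hid : 2 * (f z - L z) =
        ((f (z + t) - L (z + t)) + (f (z - t) - L (z - t)))
          - (f (z + t) - 2 * f z + f (z - t)) := by
      have := hLaff z t; linarith
    have hz1 : |f (z - t) - L (z - t)| ≤ |f z - L z| :=
      hmax _ ⟨hztp, by linarith [hz.2]⟩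
    have hz2 : f (z + t) - L (z + t) = 0 := by rw [hzt, hLq]; ring
    have : 2 * |f z - L z| ≤ |f z - L z| + omega2 a b f s := by
      calc 2 * |f z - L z| = |2 * (f z - L z)| := by rw [abs_mul]; norm_num
        _ ≤ |(f (z + t) - L (z + t)) + (f (z - t) - L (z - t))|
              + |f (z + t) - 2 * f z + f (z - t)| := by rw [hid]; exact abs_sub _ _
        _ ≤ (|f (z + t) - L (z + t)| + |f (z - t) - L (z - t)|)
              + omega2 a b f s := by
            gcongr
            exact abs_add_le _ _
        _ ≤ |f z - L z| + omega2 a b f s := by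
            rw [hz2]; simp; linarith [hz1]
    linarith



lemma whitney (hab : a ≤ b) (hf : ContinuousOn f (Icc a b)) (hs : 0 < s)
    {c : ℝ} (hca : a ≤ c) (hcb : c + 2 * s ≤ b) :
    ∃ u v : ℝ, ∀ x ∈ Icc c (c + 2 * s), |f x - (u + v * x)| ≤ omega2 a b f s / 2 := by
  set ω := omega2 a b f s with hωdef
  have hω0 : 0 ≤ ω := omega2_nonneg hab hs.le hf
  set e := c + 2 * s with he
  have hce : c < e := by rw [he]; linarith
  set K : ℝ → Set (ℝ × ℝ) := fun x => {w : ℝ × ℝ | |f x - (w.1 + w.2 * x)| ≤ ω / 2} with hK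
  have hKconv : ∀ x, Convex ℝ (K x) := by
    intro x w1 h1 w2 h2 p q hp hq hpq
    simp only [hK, mem_setOf_eq] at h1 h2 ⊢
    have hid : f x - ((p • w1 + q • w2).1 + (p • w1 + q • w2).2 * x)
        = p * (f x - (w1.1 + w1.2 * x)) + q * (f x - (w2.1 + w2.2 * x)) := by
      simp only [Prod.fst_add, Prod.snd_add, Prod.smul_fst, Prod.smul_snd, smul_eq_mul]
      linear_combination (f x) * hpq.symm
    rw [hid]
    calc |p * (f x - (w1.1 + w1.2 * x)) + q * (f x - (w2.1 + w2.2 * x))|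
        ≤ |p * (f x - (w1.1 + w1.2 * x))| + |q * (f x - (w2.1 + w2.2 * x))| := abs_add_le _ _
      _ = p * |f x - (w1.1 + w1.2 * x)| + q * |f x - (w2.1 + w2.2 * x)| := by
          rw [abs_mul, abs_mul, abs_of_nonneg hp, abs_of_nonneg hq]
      _ ≤ p * (ω / 2) + q * (ω / 2) := by gcongr
      _ = ω / 2 := by linear_combination (ω / 2) * hpq
  have hKclosed : ∀ x, IsClosed (K x) := by
    intro x
    have : K x = (fun w : ℝ × ℝ => |f x - (w.1 + w.2 * x)|) ⁻¹' (Iic (ω / 2)) := rfl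
    rw [this]
    apply IsClosed.preimage ?_ isClosed_Iic
    fun_prop
  have hIccsub : Icc c e ⊆ Icc a b := Icc_subset_Icc hca (by rw [he]; linarith)
  -- sorted triple feasibility
  have htriple : ∀ x₁ x₂ x₃, c ≤ x₁ → x₁ ≤ x₂ → x₂ ≤ x₃ → x₃ ≤ e →
      ∃ w : ℝ × ℝ, w ∈ K x₁ ∧ w ∈ K x₂ ∧ w ∈ K x₃ := by
    intro x₁ x₂ x₃ h1 h2 h3 h4
    rcases eq_or_lt_of_le (h2.trans h3) with heq | hlt
    · have e2 : x₂ = x₁ := le_antisymm (heq ▸ h3) h2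
      have e3 : x₃ = x₁ := heq.symm
      refine ⟨(f x₁, 0), ?_, ?_, ?_⟩ <;>
        simp [hK, e2, e3, hω0] <;> positivity
    · have hne : x₃ - x₁ ≠ 0 := sub_ne_zero.mpr hlt.ne'
      set sl := (f x₃ - f x₁) / (x₃ - x₁) with hsl
      have hmle : |f x₂ - (f x₁ + (x₂ - x₁) * sl)| ≤ ω := by
        rw [hsl]
        exact chord_le hab hf (by linarith) hlt (by linarith [he ▸ hcb]) (by linarith)
          ⟨h2, h3⟩
      set m := f x₂ - (f x₁ + (x₂ - x₁) * sl) with hm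
      have habs : |m / 2| ≤ ω / 2 := by
        rw [abs_div]
        have : |(2:ℝ)| = 2 := by norm_num
        rw [this]
        linarith
      have hslc : sl * (x₃ - x₁) = f x₃ - f x₁ := by
        rw [hsl]; field_simp
      refine ⟨(f x₁ - sl * x₁ + m / 2, sl), ?_, ?_, ?_⟩ <;> simp only [hK, mem_setOf_eq]
      · have : f x₁ - ((f x₁ - sl * x₁ + m / 2) + sl * x₁) = -(m / 2) := by ring
        rw [this, abs_neg]; exact habs
      · have : f x₂ - ((f x₁ - sl * x₁ + m / 2) + sl * x₂) = m / 2 := by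
          rw [hm]; ring
        rw [this]; exact habs
      · have : f x₃ - ((f x₁ - sl * x₁ + m / 2) + sl * x₃)
            = (f x₃ - f x₁ - sl * (x₃ - x₁)) - m / 2 := by ring
        rw [this, hslc]
        have : f x₃ - f x₁ - (f x₃ - f x₁) - m / 2 = -(m / 2) := by ring
        rw [this, abs_neg]; exact habs
  -- unsorted triple feasibility
  have htriple' : ∀ x₁ x₂ x₃, x₁ ∈ Icc c e → x₂ ∈ Icc c e → x₃ ∈ Icc c e →
      ∃ w : ℝ × ℝ, w ∈ K x₁ ∧ w ∈ K x₂ ∧ w ∈ K x₃ := by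
    intro x₁ x₂ x₃ h1 h2 h3
    rcases le_total x₁ x₂ with h12 | h12 <;> rcases le_total x₂ x₃ with h23 | h23 <;>
      rcases le_total x₁ x₃ with h13 | h13
    · obtain ⟨w, a1, a2, a3⟩ := htriple x₁ x₂ x₃ h1.1 h12 h23 h3.2; exact ⟨w, a1, a2, a3⟩
    · obtain ⟨w, a1, a2, a3⟩ := htriple x₁ x₂ x₃ h1.1 h12 h23 h3.2; exact ⟨w, a1, a2, a3⟩
    · obtain ⟨w, a1, a2, a3⟩ := htriple x₁ x₃ x₂ h1.1 h13 h23 h2.2; exact ⟨w, a1, a3, a2⟩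
    · obtain ⟨w, a1, a2, a3⟩ := htriple x₃ x₁ x₂ h3.1 h13 h12 h2.2; exact ⟨w, a2, a3, a1⟩
    · obtain ⟨w, a1, a2, a3⟩ := htriple x₂ x₁ x₃ h2.1 h12 h13 h3.2; exact ⟨w, a2, a1, a3⟩
    · obtain ⟨w, a1, a2, a3⟩ := htriple x₂ x₃ x₁ h2.1 h23 h13 h1.2; exact ⟨w, a3, a1, a2⟩
    · obtain ⟨w, a1, a2, a3⟩ := htriple x₃ x₂ x₁ h3.1 h23 h12 h1.2; exact ⟨w, a3, a2, a1⟩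
    · obtain ⟨w, a1, a2, a3⟩ := htriple x₃ x₂ x₁ h3.1 h23 h12 h1.2; exact ⟨w, a3, a2, a1⟩
  have hrank : Module.finrank ℝ (ℝ × ℝ) = 2 := by
    rw [Module.finrank_prod, Module.finrank_self]
  -- finite families
  have hfin : ∀ I : Finset ℝ, ↑I ⊆ Icc c e → (⋂ x ∈ I, K x).Nonempty := by
    intro I hI
    apply Convex.helly_theorem' (𝕜 := ℝ) (fun i _ => hKconv i)
    intro J hJ hJcard
    rw [hrank] at hJcard
    have hJI : (↑J : Set ℝ) ⊆ Icc c e := (Finset.coe_subset.mpr hJ).trans hI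
    rcases J.eq_empty_or_nonempty with rfl | hne
    · simp
    set x₁ := J.min' hne with hx1
    set x₃ := J.max' hne with hx3
    have hx1m : x₁ ∈ J := J.min'_mem hne
    have hx3m : x₃ ∈ J := J.max'_mem hne
    have hx1I : x₁ ∈ Icc c e := hJI hx1m
    have hx3I : x₃ ∈ Icc c e := hJI hx3m
    rcases eq_or_lt_of_le (J.min'_le x₃ hx3m) with heq13 | hlt13
    · -- all elements equal x₁
      obtain ⟨w, w1, _, _⟩ := htriple' x₁ x₁ x₁ hx1I hx1I hx1I
      refine ⟨w, mem_iInter₂.mpr fun x hx => ?_⟩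
      have : x = x₁ := le_antisymm (by rw [hx1, heq13]; exact J.le_max' x hx) (J.min'_le x hx)
      rwa [this]
    · by_cases hJ2 : J.card ≤ 2
      · have hsub2 : ({x₁, x₃} : Finset ℝ) ⊆ J := by
          intro y hy
          simp only [Finset.mem_insert, Finset.mem_singleton] at hy
          rcases hy with rfl | rfl
          exacts [hx1m, hx3m]
        have hcard2 : ({x₁, x₃} : Finset ℝ).card = 2 := by
          rw [Finset.card_insert_of_notMem (by simp; exact hlt13.ne), Finset.card_singleton]
        have hJeq : ({x₁, x₃} : Finset ℝ) = J :=
          Finset.eq_of_subset_of_card_le hsub2 (by omega)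
        obtain ⟨w, w1, _, w3⟩ := htriple' x₁ x₁ x₃ hx1I hx1I hx3I
        refine ⟨w, mem_iInter₂.mpr fun x hx => ?_⟩
        rw [← hJeq] at hx
        simp only [Finset.mem_insert, Finset.mem_singleton] at hx
        rcases hx with rfl | rfl
        exacts [w1, w3]
      · have hJ3 : J.card = 3 := by omega
        have hmid : (J \ {x₁, x₃}).Nonempty := by
          rw [← Finset.card_pos]
          have h1 := Finset.le_card_sdiff ({x₁, x₃} : Finset ℝ) J
          have h2 : ({x₁, x₃} : Finset ℝ).card = 2 := by
            rw [Finset.card_insert_of_notMem (by simp; exact hlt13.ne), Finset.card_singleton]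
          omega
        obtain ⟨x₂, hx2⟩ := hmid
        rw [Finset.mem_sdiff] at hx2
        obtain ⟨hx2J, hx2ne⟩ := hx2
        simp only [Finset.mem_insert, Finset.mem_singleton, not_or] at hx2ne
        have hx2I : x₂ ∈ Icc c e := hJI hx2J
        obtain ⟨w, w1, w2, w3⟩ := htriple' x₁ x₂ x₃ hx1I hx2I hx3I
        have hsub3 : ({x₁, x₂, x₃} : Finset ℝ) ⊆ J := by
          intro y hy
          simp only [Finset.mem_insert, Finset.mem_singleton] at hy
          rcases hy with rfl | rfl | rfl
          exacts [hx1m, hx2J, hx3m]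
        have hne12 : x₁ ≠ x₂ := Ne.symm hx2ne.1
        have hne23 : x₂ ≠ x₃ := hx2ne.2
        have hne13 : x₁ ≠ x₃ := hlt13.ne
        have hcard3 : ({x₁, x₂, x₃} : Finset ℝ).card = 3 := by
          rw [Finset.card_insert_of_notMem (by simp [hne12, hne13]),
            Finset.card_insert_of_notMem (by simp [hne23]), Finset.card_singleton]
        have hJeq : ({x₁, x₂, x₃} : Finset ℝ) = J :=
          Finset.eq_of_subset_of_card_le hsub3 (by omega)
        refine ⟨w, mem_iInter₂.mpr fun x hx => ?_⟩
        rw [← hJeq] at hx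
        simp only [Finset.mem_insert, Finset.mem_singleton] at hx
        rcases hx with rfl | rfl | rfl
        exacts [w1, w2, w3]
  -- compactness of the two-point constraint set
  set S : Set (ℝ × ℝ) := K c ∩ K e with hS
  have hSbd : ∀ w : ℝ × ℝ, w ∈ S → ‖w‖ ≤ (|f c| + ω / 2)
      + (|f c| + |f e| + ω) / (2 * s) * |c| + (|f c| + |f e| + ω) / (2 * s) := by
    intro w hw
    obtain ⟨hwc, hwe⟩ := hw
    simp only [hK, mem_setOf_eq] at hwc hwe
    have hAc := abs_le.mp hwc
    have hAe := abs_le.mp hwe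
    have hA : |w.1 + w.2 * c| ≤ |f c| + ω / 2 := by
      rw [abs_le]
      constructor <;> [nlinarith [neg_abs_le (f c), le_abs_self (f c)];
        nlinarith [neg_abs_le (f c), le_abs_self (f c)]]
    have hB : |w.1 + w.2 * e| ≤ |f e| + ω / 2 := by
      rw [abs_le]
      constructor <;> [nlinarith [neg_abs_le (f e), le_abs_self (f e)];
        nlinarith [neg_abs_le (f e), le_abs_self (f e)]]
    have h2s : (0:ℝ) < 2 * s := by linarith
    have hv : |w.2| ≤ (|f c| + |f e| + ω) / (2 * s) := by
      rw [le_div_iff₀ h2s]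
      have hid : w.2 * (2 * s) = (w.1 + w.2 * e) - (w.1 + w.2 * c) := by
        rw [he]; ring
      calc |w.2| * (2 * s) = |w.2 * (2 * s)| := by
            rw [abs_mul, abs_of_pos h2s]
        _ = |(w.1 + w.2 * e) - (w.1 + w.2 * c)| := by rw [hid]
        _ ≤ |w.1 + w.2 * e| + |w.1 + w.2 * c| := abs_sub _ _
        _ ≤ |f c| + |f e| + ω := by linarith
    have hu : |w.1| ≤ (|f c| + ω / 2) + (|f c| + |f e| + ω) / (2 * s) * |c| := by
      have : w.1 = (w.1 + w.2 * c) - w.2 * c := by ring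
      rw [this]
      calc |(w.1 + w.2 * c) - w.2 * c| ≤ |w.1 + w.2 * c| + |w.2 * c| := abs_sub _ _
        _ ≤ (|f c| + ω / 2) + (|f c| + |f e| + ω) / (2 * s) * |c| := by
            rw [abs_mul]
            have := abs_nonneg c
            have := mul_le_mul_of_nonneg_right hv (abs_nonneg c)
            linarith
    rw [norm_prod_le_iff]
    have hvn : (0:ℝ) ≤ (|f c| + |f e| + ω) / (2 * s) := le_trans (abs_nonneg _) hv
    have hun : (0:ℝ) ≤ |f c| + ω / 2 := by positivity
    constructor
    · rw [Real.norm_eq_abs]; linarith [hvn]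
    · rw [Real.norm_eq_abs]
      linarith [hun, mul_nonneg hvn (abs_nonneg c), hv]
  have hScomp : IsCompact S := by
    apply Metric.isCompact_of_isClosed_isBounded ((hKclosed c).inter (hKclosed e))
    rw [isBounded_iff_forall_norm_le]
    exact ⟨_, hSbd⟩
  have hmain : (S ∩ ⋂ x : Icc c e, K ↑x).Nonempty := by
    apply hScomp.inter_iInter_nonempty
    · intro i; exact hKclosed _
    · intro I
      have hsubI : ↑(insert c (insert e (I.image Subtype.val))) ⊆ Icc c e := by
        intro y hy
        simp only [Finset.coe_insert, mem_insert_iff, Finset.coe_image, mem_image,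
          Finset.mem_coe] at hy
        rcases hy with rfl | rfl | ⟨z, _, rfl⟩
        · exact ⟨le_rfl, hce.le⟩
        · exact ⟨hce.le, le_rfl⟩
        · exact z.2
      obtain ⟨w, hw⟩ := hfin (insert c (insert e (I.image Subtype.val))) hsubI
      have hw' := mem_iInter₂.mp hw
      refine ⟨w, ⟨hw' c (Finset.mem_insert_self _ _),
        hw' e (Finset.mem_insert_of_mem (Finset.mem_insert_self _ _))⟩,
        mem_iInter₂.mpr fun i hi => ?_⟩
      exact hw' ↑i (Finset.mem_insert_of_mem (Finset.mem_insert_of_mem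
        (Finset.mem_image_of_mem _ hi)))
  obtain ⟨w, _, hwI⟩ := hmain
  refine ⟨w.1, w.2, fun x hx => ?_⟩
  have := mem_iInter.mp hwI ⟨x, hx⟩
  simpa [hK] using this


/-- Zhuk-type continuous extension of `f` beyond `[a,b]`, using near-best approximating
lines `uL + vL*x`, `uR + vR*x` with continuity ramps of width `δ`. -/
noncomputable def ext (a b δ uL vL uR vR : ℝ) (f : ℝ → ℝ) : ℝ → ℝ := fun y =>
  f (max a (min b y)) + vL * (min y a - a)
    + (min 1 (max 0 ((a - y) / δ))) * (uL + vL * a - f a)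
    + vR * (max y b - b) + (min 1 (max 0 ((y - b) / δ))) * (uR + vR * b - f b)

section Ext

variable {δ ε uL vL uR vR : ℝ}

lemma ext_continuous (hab : a ≤ b) (hf : ContinuousOn f (Icc a b)) :
    Continuous (ext a b δ uL vL uR vR f) := by
  unfold ext
  have hclamp : Continuous fun y : ℝ => max a (min b y) := by fun_prop
  have hmem : ∀ y : ℝ, max a (min b y) ∈ Icc a b := fun y =>
    ⟨le_max_left _ _, max_le hab (min_le_left _ _)⟩
  have h1 : Continuous fun y => f (max a (min b y)) :=
    hf.comp_continuous hclamp hmem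
  have hA : Continuous fun y : ℝ => vL * (min y a - a) := by fun_prop
  have hB : Continuous fun y : ℝ => (min 1 (max 0 ((a - y) / δ))) * (uL + vL * a - f a) := by
    fun_prop
  have hC : Continuous fun y : ℝ => vR * (max y b - b) := by fun_prop
  have hD : Continuous fun y : ℝ => (min 1 (max 0 ((y - b) / δ))) * (uR + vR * b - f b) := by
    fun_prop
  exact (((h1.add hA).add hB).add hC).add hD

lemma ext_eq (hab : a ≤ b) (hδ : 0 < δ) {y : ℝ} (hy : y ∈ Icc a b) :
    ext a b δ uL vL uR vR f y = f y := by
  unfold ext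
  rw [min_eq_right hy.2, max_eq_right hy.1, min_eq_right hy.1, max_eq_right hy.2,
    max_eq_left (div_nonpos_of_nonpos_of_nonneg (by linarith [hy.1]) hδ.le),
    max_eq_left (div_nonpos_of_nonpos_of_nonneg (by linarith [hy.2]) hδ.le),
    min_eq_right (by norm_num : (0:ℝ) ≤ 1)]
  ring

lemma ext_left (hab : a ≤ b) (hδ : 0 < δ) {y : ℝ} (hy : y < a) :
    ext a b δ uL vL uR vR f y
      = f a + vL * (y - a) + (min 1 ((a - y) / δ)) * (uL + vL * a - f a) := by
  unfold ext
  rw [min_eq_right (by linarith : y ≤ b), max_eq_left hy.le, min_eq_left hy.le,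
    max_eq_right (by linarith : y ≤ b),
    max_eq_right (div_nonneg (by linarith) hδ.le),
    max_eq_left (div_nonpos_of_nonpos_of_nonneg (by linarith) hδ.le),
    min_eq_right (by norm_num : (0:ℝ) ≤ 1)]
  ring

lemma ext_right (hab : a ≤ b) (hδ : 0 < δ) {y : ℝ} (hy : b < y) :
    ext a b δ uL vL uR vR f y
      = f b + vR * (y - b) + (min 1 ((y - b) / δ)) * (uR + vR * b - f b) := by
  unfold ext
  rw [min_eq_left (by linarith : b ≤ y), max_eq_right hab, min_eq_right (by linarith : a ≤ y),
    max_eq_left (by linarith : b ≤ y),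
    max_eq_left (div_nonpos_of_nonpos_of_nonneg (by linarith) hδ.le),
    max_eq_right (div_nonneg (by linarith) hδ.le),
    min_eq_right (by norm_num : (0:ℝ) ≤ 1)]
  ring

/-- The central second-difference estimate for the extension. -/
lemma delta_bound (hab : a ≤ b) (hf : ContinuousOn f (Icc a b)) (hs : 0 < s)
    (hs2 : 2 * s ≤ b - a) (hδ : 0 < δ) (hε : 0 ≤ ε)
    (hδf : ∀ p ∈ Icc a b, ∀ q ∈ Icc a b, |p - q| ≤ δ → |f p - f q| ≤ ε)
    (hL : ∀ x ∈ Icc a (a + 2 * s), |f x - (uL + vL * x)| ≤ omega2 a b f s / 2)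
    (hR : ∀ x ∈ Icc (b - 2 * s) b, |f x - (uR + vR * x)| ≤ omega2 a b f s / 2)
    {x t : ℝ} (hx : x ∈ Icc a b) (ht0 : 0 ≤ t) (hts : t ≤ s) :
    |ext a b δ uL vL uR vR f (x + t) - 2 * f x + ext a b δ uL vL uR vR f (x - t)|
      ≤ 3 / 2 * omega2 a b f s + ε + (|vL| + |vR|) * δ := by
  set ω := omega2 a b f s with hω
  have hω0 : 0 ≤ ω := omega2_nonneg hab hs.le hf
  have hvL : 0 ≤ |vL| * δ := mul_nonneg (abs_nonneg _) hδ.le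
  have hvR : 0 ≤ |vR| * δ := mul_nonneg (abs_nonneg _) hδ.le
  by_cases hl : x - t < a
  · -- left boundary case
    have hxtb : x + t ≤ b := by linarith
    have hxta : a ≤ x + t := by linarith [hx.1]
    have hEt : ext a b δ uL vL uR vR f (x + t) = f (x + t) := ext_eq hab hδ ⟨hxta, hxtb⟩
    have hEy := ext_left (f := f) (uL := uL) (vL := vL) (uR := uR) (vR := vR) hab hδ hl
    have hxI1 : x ∈ Icc a (a + 2 * s) := ⟨hx.1, by linarith⟩
    have hxtI1 : x + t ∈ Icc a (a + 2 * s) := ⟨hxta, by linarith⟩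
    have d1 := hL _ hxtI1
    have d2 := hL _ hxI1
    have hΔ1 : |f (x + t) - 2 * f x + (uL + vL * (x - t))| ≤ 3 / 2 * ω := by
      have hid : f (x + t) - 2 * f x + (uL + vL * (x - t))
          = (f (x + t) - (uL + vL * (x + t))) - 2 * (f x - (uL + vL * x)) := by ring
      rw [hid]
      have h1 := abs_le.mp d1
      have h2 := abs_le.mp d2
      rw [abs_le]; constructor <;> linarith [h1.1, h1.2, h2.1, h2.2]
    rcases le_or_gt 1 ((a - (x - t)) / δ) with h1 | h1
    · -- η = 1 : pure line
      have : min 1 ((a - (x - t)) / δ) = 1 := min_eq_left h1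
      rw [hEt, hEy, this]
      have hval : f a + vL * (x - t - a) + 1 * (uL + vL * a - f a) = uL + vL * (x - t) := by
        ring
      rw [show f (x + t) - 2 * f x + (f a + vL * (x - t - a) + 1 * (uL + vL * a - f a))
        = f (x + t) - 2 * f x + (uL + vL * (x - t)) by ring]
      linarith [hΔ1]
    · -- mixed case
      set η := min 1 ((a - (x - t)) / δ) with hηdef
      have hη1 : η ≤ 1 := min_le_left _ _
      have hη0 : 0 ≤ η := le_min (by norm_num) (div_nonneg (by linarith) hδ.le)
      have hηv : η = (a - (x - t)) / δ := min_eq_right h1.le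
      have hay : a - (x - t) < δ := by
        have h1' := (div_lt_one hδ).mp h1
        linarith
      set r := x - a with hr
      have hr0 : 0 ≤ r := by simp [hr]; linarith [hx.1]
      have hrt : r < t := by simp [hr]; linarith
      have hΔ2 : |f (x + t) - 2 * f x + (f a + vL * ((x - t) - a))| ≤ ε + ω + |vL| * δ := by
        have hfa : f a = f (x - r) := by rw [hr]; ring_nf
        have hid : f (x + t) - 2 * f x + (f a + vL * ((x - t) - a))
            = (f (x + t) - f (x + r)) + (f (x + r) - 2 * f x + f (x - r))
              + vL * ((x - t) - a) := by rw [hfa]; ring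
        rw [hid]
        have e1 : |f (x + t) - f (x + r)| ≤ ε := by
          apply hδf _ ⟨by linarith, hxtb⟩ _ ⟨by linarith, by linarith⟩
          rw [abs_of_nonneg (by linarith : (0:ℝ) ≤ x + t - (x + r))]
          linarith
        have e2 : |f (x + r) - 2 * f x + f (x - r)| ≤ ω :=
          sd_le hf hr0 (by linarith) (by simp [hr]) (by linarith)
        have e3 : |vL * ((x - t) - a)| ≤ |vL| * δ := by
          rw [abs_mul]
          apply mul_le_mul_of_nonneg_left _ (abs_nonneg _)
          rw [abs_of_nonpos (by linarith)]
          linarith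
        calc |f (x + t) - f (x + r) + (f (x + r) - 2 * f x + f (x - r)) + vL * (x - t - a)|
            ≤ |f (x + t) - f (x + r) + (f (x + r) - 2 * f x + f (x - r))| + |vL * (x - t - a)| :=
              abs_add_le _ _
          _ ≤ |f (x + t) - f (x + r)| + |f (x + r) - 2 * f x + f (x - r)|
              + |vL * (x - t - a)| := by linarith [abs_add_le (f (x + t) - f (x + r)) (f (x + r) - 2 * f x + f (x - r))]
          _ ≤ ε + ω + |vL| * δ := by linarith
      -- combine
      have hsplit : f (x + t) - 2 * f x + ext a b δ uL vL uR vR f (x - t)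
          = η * (f (x + t) - 2 * f x + (uL + vL * (x - t)))
            + (1 - η) * (f (x + t) - 2 * f x + (f a + vL * ((x - t) - a))) := by
        rw [hEy]; ring
      rw [hEt, hsplit]
      set A := f (x + t) - 2 * f x + (uL + vL * (x - t))
      set B := f (x + t) - 2 * f x + (f a + vL * ((x - t) - a))
      have hK' : |A| ≤ 3/2*ω + ε + (|vL| + |vR|) * δ := by linarith
      have hK'' : |B| ≤ 3/2*ω + ε + (|vL| + |vR|) * δ := by
        have : (0:ℝ) ≤ ω / 2 := by linarith
        linarith
      calc |η * A + (1 - η) * B| ≤ |η * A| + |(1 - η) * B| := abs_add_le _ _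
        _ = η * |A| + (1 - η) * |B| := by
            rw [abs_mul, abs_mul, abs_of_nonneg hη0, abs_of_nonneg (by linarith : (0:ℝ) ≤ 1 - η)]
        _ ≤ η * (3/2*ω + ε + (|vL| + |vR|) * δ) + (1 - η) * (3/2*ω + ε + (|vL| + |vR|) * δ) := by
            have h1' := mul_le_mul_of_nonneg_left hK' hη0
            have h2' := mul_le_mul_of_nonneg_left hK'' (by linarith : (0:ℝ) ≤ 1 - η)
            linarith
        _ = 3/2*ω + ε + (|vL| + |vR|) * δ := by ring
  · by_cases hrr : b < x + t
    · -- right boundary case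
      have hxta : a ≤ x - t := not_lt.mp hl
      have hxtb : x - t ≤ b := by linarith [hx.2]
      have hEt : ext a b δ uL vL uR vR f (x - t) = f (x - t) := ext_eq hab hδ ⟨hxta, hxtb⟩
      have hEy := ext_right (f := f) (uL := uL) (vL := vL) (uR := uR) (vR := vR) hab hδ hrr
      have hxI1 : x ∈ Icc (b - 2 * s) b := ⟨by linarith, hx.2⟩
      have hxtI1 : x - t ∈ Icc (b - 2 * s) b := ⟨by linarith, hxtb⟩
      have d1 := hR _ hxtI1
      have d2 := hR _ hxI1
      have hΔ1 : |(uR + vR * (x + t)) - 2 * f x + f (x - t)| ≤ 3 / 2 * ω := by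
        rw [show (uR + vR * (x + t)) - 2 * f x + f (x - t)
          = (f (x - t) - (uR + vR * (x - t))) - 2 * (f x - (uR + vR * x)) by ring, abs_le]
        have h1' := abs_le.mp d1
        have h2' := abs_le.mp d2
        constructor <;> linarith [h1'.1, h1'.2, h2'.1, h2'.2]
      rcases le_or_gt 1 (((x + t) - b) / δ) with h1 | h1
      · have hmin : min 1 ((x + t - b) / δ) = 1 := min_eq_left h1
        rw [hEt, hEy, hmin,
          show (f b + vR * (x + t - b) + 1 * (uR + vR * b - f b)) - 2 * f x + f (x - t)
            = (uR + vR * (x + t)) - 2 * f x + f (x - t) by ring]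
        linarith [hΔ1]
      · set η := min 1 ((x + t - b) / δ) with hηdef
        have hη1 : η ≤ 1 := min_le_left _ _
        have hη0 : 0 ≤ η := le_min (by norm_num) (div_nonneg (by linarith) hδ.le)
        have hay : x + t - b < δ := by
          have h1' := (div_lt_one hδ).mp h1
          linarith
        set r := b - x with hr
        have hr0 : 0 ≤ r := by simp [hr]; linarith [hx.2]
        have hrt : r < t := by simp [hr]; linarith
        have hΔ2 : |(f b + vR * ((x + t) - b)) - 2 * f x + f (x - t)| ≤ ε + ω + |vR| * δ := by
          have hfb : f b = f (x + r) := by rw [hr]; ring_nf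
          have hid : (f b + vR * ((x + t) - b)) - 2 * f x + f (x - t)
              = (f (x - t) - f (x - r)) + (f (x + r) - 2 * f x + f (x - r))
                + vR * ((x + t) - b) := by rw [hfb]; ring
          rw [hid]
          have e1 : |f (x - t) - f (x - r)| ≤ ε := by
            apply hδf _ ⟨hxta, hxtb⟩ _ ⟨by linarith, by linarith⟩
            rw [abs_of_nonpos (by linarith : x - t - (x - r) ≤ 0)]
            linarith
          have e2 : |f (x + r) - 2 * f x + f (x - r)| ≤ ω :=
            sd_le hf hr0 (by linarith) (by linarith) (by simp [hr])
          have e3 : |vR * ((x + t) - b)| ≤ |vR| * δ := by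
            rw [abs_mul]
            apply mul_le_mul_of_nonneg_left _ (abs_nonneg _)
            rw [abs_of_nonneg (by linarith)]
            linarith
          calc |f (x - t) - f (x - r) + (f (x + r) - 2 * f x + f (x - r)) + vR * (x + t - b)|
              ≤ |f (x - t) - f (x - r) + (f (x + r) - 2 * f x + f (x - r))|
                + |vR * (x + t - b)| := abs_add_le _ _
            _ ≤ |f (x - t) - f (x - r)| + |f (x + r) - 2 * f x + f (x - r)|
                + |vR * (x + t - b)| := by
                  linarith [abs_add_le (f (x - t) - f (x - r)) (f (x + r) - 2 * f x + f (x - r))]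
            _ ≤ ε + ω + |vR| * δ := by linarith
        have hsplit : ext a b δ uL vL uR vR f (x + t) - 2 * f x + f (x - t)
            = η * ((uR + vR * (x + t)) - 2 * f x + f (x - t))
              + (1 - η) * ((f b + vR * ((x + t) - b)) - 2 * f x + f (x - t)) := by
          rw [hEy]; ring
        rw [hEt, hsplit]
        set A := (uR + vR * (x + t)) - 2 * f x + f (x - t)
        set B := (f b + vR * ((x + t) - b)) - 2 * f x + f (x - t)
        have hK' : |A| ≤ 3/2*ω + ε + (|vL| + |vR|) * δ := by linarith
        have hK'' : |B| ≤ 3/2*ω + ε + (|vL| + |vR|) * δ := by linarith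
        calc |η * A + (1 - η) * B| ≤ |η * A| + |(1 - η) * B| := abs_add_le _ _
          _ = η * |A| + (1 - η) * |B| := by
              rw [abs_mul, abs_mul, abs_of_nonneg hη0,
                abs_of_nonneg (by linarith : (0:ℝ) ≤ 1 - η)]
          _ ≤ η * (3/2*ω + ε + (|vL| + |vR|) * δ)
              + (1 - η) * (3/2*ω + ε + (|vL| + |vR|) * δ) := by
              have h1' := mul_le_mul_of_nonneg_left hK' hη0
              have h2' := mul_le_mul_of_nonneg_left hK'' (by linarith : (0:ℝ) ≤ 1 - η)
              linarith
          _ = 3/2*ω + ε + (|vL| + |vR|) * δ := by ring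
    · -- interior
      have h1 : a ≤ x - t := not_lt.mp hl
      have h2 : x + t ≤ b := not_lt.mp hrr
      rw [ext_eq hab hδ ⟨h1, by linarith [hx.2]⟩, ext_eq hab hδ ⟨by linarith [hx.1], h2⟩]
      have := sd_le hf ht0 hts h1 h2
      linarith


/-- First-difference estimate for the extension (used for the g' bound). -/
lemma pair_bound (hab : a ≤ b) (hf : ContinuousOn f (Icc a b)) (hs : 0 < s)
    (hs2 : 2 * s ≤ b - a) (hδ : 0 < δ) (hε : 0 ≤ ε)
    (hδf : ∀ p ∈ Icc a b, ∀ q ∈ Icc a b, |p - q| ≤ δ → |f p - f q| ≤ ε)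
    (hL : ∀ x ∈ Icc a (a + 2 * s), |f x - (uL + vL * x)| ≤ omega2 a b f s / 2)
    (hR : ∀ x ∈ Icc (b - 2 * s) b, |f x - (uR + vR * x)| ≤ omega2 a b f s / 2)
    {x t : ℝ} (hx : x ∈ Icc a b) (ht0 : 0 ≤ t) (hts : t ≤ s) :
    |ext a b δ uL vL uR vR f (x + t) - ext a b δ uL vL uR vR f (x - t)|
      ≤ 2 * omega1 a b f s + (3 / 2 * omega2 a b f s + ε + (|vL| + |vR|) * δ) := by
  have hd := delta_bound hab hf hs hs2 hδ hε hδf hL hR hx ht0 hts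
  by_cases hl : x - t < a
  · have hxtb : x + t ≤ b := by linarith
    have hEt : ext a b δ uL vL uR vR f (x + t) = f (x + t) :=
      ext_eq hab hδ ⟨by linarith [hx.1], hxtb⟩
    have h1 : |f (x + t) - f x| ≤ omega1 a b f s := by
      apply od_le hf ⟨by linarith [hx.1], hxtb⟩ hx
      rw [show x + t - x = t by ring, abs_of_nonneg ht0]
      exact hts
    have hid : ext a b δ uL vL uR vR f (x + t) - ext a b δ uL vL uR vR f (x - t)
        = 2 * (f (x + t) - f x)
          - (ext a b δ uL vL uR vR f (x + t) - 2 * f x + ext a b δ uL vL uR vR f (x - t)) := by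
      rw [hEt]; ring
    rw [hid]
    calc |2 * (f (x + t) - f x)
          - (ext a b δ uL vL uR vR f (x + t) - 2 * f x + ext a b δ uL vL uR vR f (x - t))|
        ≤ |2 * (f (x + t) - f x)|
          + |ext a b δ uL vL uR vR f (x + t) - 2 * f x + ext a b δ uL vL uR vR f (x - t)| :=
          abs_sub _ _
      _ ≤ 2 * omega1 a b f s + (3 / 2 * omega2 a b f s + ε + (|vL| + |vR|) * δ) := by
          rw [abs_mul, abs_of_nonneg (by norm_num : (0:ℝ) ≤ 2)]
          linarith
  · have hxta : a ≤ x - t := not_lt.mp hl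
    have hEt : ext a b δ uL vL uR vR f (x - t) = f (x - t) :=
      ext_eq hab hδ ⟨hxta, by linarith [hx.2]⟩
    have h1 : |f x - f (x - t)| ≤ omega1 a b f s := by
      apply od_le hf hx ⟨hxta, by linarith [hx.2]⟩
      rw [show x - (x - t) = t by ring, abs_of_nonneg ht0]
      exact hts
    have hid : ext a b δ uL vL uR vR f (x + t) - ext a b δ uL vL uR vR f (x - t)
        = (ext a b δ uL vL uR vR f (x + t) - 2 * f x + ext a b δ uL vL uR vR f (x - t))
          + 2 * (f x - f (x - t)) := by
      rw [hEt]; ring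
    rw [hid]
    calc |(ext a b δ uL vL uR vR f (x + t) - 2 * f x + ext a b δ uL vL uR vR f (x - t))
          + 2 * (f x - f (x - t))|
        ≤ |ext a b δ uL vL uR vR f (x + t) - 2 * f x + ext a b δ uL vL uR vR f (x - t)|
          + |2 * (f x - f (x - t))| := abs_add_le _ _
      _ ≤ 2 * omega1 a b f s + (3 / 2 * omega2 a b f s + ε + (|vL| + |vR|) * δ) := by
          rw [abs_mul, abs_of_nonneg (by norm_num : (0:ℝ) ≤ 2)]
          linarith


noncomputable def P1 (E : ℝ → ℝ) (c₀ : ℝ) : ℝ → ℝ := fun y => ∫ σ in c₀..y, E σ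
noncomputable def P2 (E : ℝ → ℝ) (c₀ : ℝ) : ℝ → ℝ := fun y => ∫ σ in c₀..y, P1 E c₀ σ

variable {E : ℝ → ℝ} {c₀ : ℝ}

lemma P1_hasDeriv (hE : Continuous E) (y : ℝ) : HasDerivAt (P1 E c₀) (E y) y :=
  intervalIntegral.integral_hasDerivAt_right (hE.intervalIntegrable _ _)
    (hE.stronglyMeasurable.stronglyMeasurableAtFilter) hE.continuousAt

lemma P1_cont (hE : Continuous E) : Continuous (P1 E c₀) :=
  Differentiable.continuous (fun y => (P1_hasDeriv hE y).differentiableAt)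

lemma P2_hasDeriv (hE : Continuous E) (y : ℝ) : HasDerivAt (P2 E c₀) (P1 E c₀ y) y :=
  intervalIntegral.integral_hasDerivAt_right ((P1_cont hE).intervalIntegrable _ _)
    ((P1_cont hE).stronglyMeasurable.stronglyMeasurableAtFilter) (P1_cont hE).continuousAt

lemma P1_diff (hE : Continuous E) (p q : ℝ) :
    P1 E c₀ q - P1 E c₀ p = ∫ σ in p..q, E σ := by
  have h1 := integral_add_adjacent_intervals (μ := MeasureTheory.volume)
    (hE.intervalIntegrable c₀ p) (hE.intervalIntegrable p q)
  unfold P1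
  linarith

lemma P2_diff (hE : Continuous E) (p q : ℝ) :
    P2 E c₀ q - P2 E c₀ p = ∫ σ in p..q, P1 E c₀ σ := by
  have h1 := integral_add_adjacent_intervals (μ := MeasureTheory.volume)
    ((P1_cont (c₀ := c₀) hE).intervalIntegrable c₀ p)
    ((P1_cont (c₀ := c₀) hE).intervalIntegrable p q)
  unfold P2
  linarith

lemma shift_int (hE : Continuous E) (x w : ℝ) :
    ∫ σ in (0:ℝ)..w, E (x + σ) = P1 E c₀ (x + w) - P1 E c₀ x := by
  rw [integral_comp_add_left E x, P1_diff hE]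
  norm_num

lemma shift_neg (hE : Continuous E) (x w : ℝ) :
    ∫ σ in (0:ℝ)..w, E (x - σ) = P1 E c₀ x - P1 E c₀ (x - w) := by
  rw [integral_comp_sub_left E x, P1_diff hE]
  norm_num

lemma shift_int2 (hE : Continuous E) (x w : ℝ) :
    ∫ σ in (0:ℝ)..w, P1 E c₀ (x + σ) = P2 E c₀ (x + w) - P2 E c₀ x := by
  rw [integral_comp_add_left (P1 E c₀) x, P2_diff hE]
  norm_num

lemma shift_neg2 (hE : Continuous E) (x w : ℝ) :
    ∫ σ in (0:ℝ)..w, P1 E c₀ (x - σ) = P2 E c₀ x - P2 E c₀ (x - w) := by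
  rw [integral_comp_sub_left (P1 E c₀) x, P2_diff hE]
  norm_num

/-- The full smoothing construction: a C² function `g` with quantitative bounds. -/
lemma steklov (a b s K W : ℝ) (f : ℝ → ℝ) (hs : 0 < s)
    (hE : Continuous E) (hEeq : ∀ y ∈ Icc a b, E y = f y)
    (hKd : ∀ x ∈ Icc a b, ∀ t : ℝ, 0 ≤ t → t ≤ s → |E (x + t) - 2 * f x + E (x - t)| ≤ K)
    (hKp : ∀ x ∈ Icc a b, ∀ t : ℝ, 0 ≤ t → t ≤ s → |E (x + t) - E (x - t)| ≤ W) :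
    ∃ g g1 g2 : ℝ → ℝ,
      (∀ x, HasDerivAt g (g1 x) x) ∧ (∀ x, HasDerivAt g1 (g2 x) x) ∧
      Continuous g2 ∧ Continuous g ∧
      (∀ x ∈ Icc a b, |f x - g x| ≤ K / 2) ∧
      (∀ x ∈ Icc a b, |g1 x| ≤ W / s) ∧
      (∀ x ∈ Icc a b, |g2 x| ≤ K / s ^ 2) := by
  have hs2 : (0:ℝ) < s ^ 2 := by positivity
  set Q1 := P1 E 0 with hQ1
  set Q2 := P2 E 0 with hQ2
  refine ⟨fun x => (Q2 (x + s) - 2 * Q2 x + Q2 (x - s)) / s ^ 2,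
    fun x => (Q1 (x + s) - 2 * Q1 x + Q1 (x - s)) / s ^ 2,
    fun x => (E (x + s) - 2 * E x + E (x - s)) / s ^ 2, ?_, ?_, ?_, ?_, ?_, ?_, ?_⟩
  · intro x
    have h1 : HasDerivAt (fun x => Q2 (x + s)) (Q1 (x + s)) x := by
      have := (P2_hasDeriv (c₀ := (0:ℝ)) hE (x + s)).comp x
        ((hasDerivAt_id x).add_const s)
      rw [mul_one] at this; exact this
    have h2 : HasDerivAt (fun x => Q2 x) (Q1 x) x := P2_hasDeriv hE x
    have h3 : HasDerivAt (fun x => Q2 (x - s)) (Q1 (x - s)) x := by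
      have := (P2_hasDeriv (c₀ := (0:ℝ)) hE (x - s)).comp x
        ((hasDerivAt_id x).sub_const s)
      rw [mul_one] at this; exact this
    exact ((h1.sub (h2.const_mul 2)).add h3).div_const (s ^ 2)
  · intro x
    have h1 : HasDerivAt (fun x => Q1 (x + s)) (E (x + s)) x := by
      have := (P1_hasDeriv (c₀ := (0:ℝ)) hE (x + s)).comp x
        ((hasDerivAt_id x).add_const s)
      rw [mul_one] at this; exact this
    have h2 : HasDerivAt (fun x => Q1 x) (E x) x := P1_hasDeriv hE x
    have h3 : HasDerivAt (fun x => Q1 (x - s)) (E (x - s)) x := by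
      have := (P1_hasDeriv (c₀ := (0:ℝ)) hE (x - s)).comp x
        ((hasDerivAt_id x).sub_const s)
      rw [mul_one] at this; exact this
    exact ((h1.sub (h2.const_mul 2)).add h3).div_const (s ^ 2)
  · have := hE
    fun_prop
  · have := P1_cont (c₀ := (0:ℝ)) hE
    have h2 : Continuous Q2 :=
      Differentiable.continuous (fun y => (P2_hasDeriv (c₀ := (0:ℝ)) hE y).differentiableAt)
    fun_prop
  · -- |f - g| ≤ K/2
    intro x hx
    set Pf : ℝ → ℝ := fun w => 2 * w * f x - (Q1 (x + w) - Q1 (x - w)) with hPf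
    have hPfc : Continuous Pf := by
      have hq := P1_cont (c₀ := (0:ℝ)) hE
      fun_prop
    have hint1 : ∀ w : ℝ, IntervalIntegrable (fun σ => E (x + σ)) MeasureTheory.volume 0 w :=
      fun w => (hE.comp (continuous_const.add continuous_id)).intervalIntegrable _ _
    have hint2 : ∀ w : ℝ, IntervalIntegrable (fun σ => E (x - σ)) MeasureTheory.volume 0 w :=
      fun w => (hE.comp (continuous_const.sub continuous_id)).intervalIntegrable _ _
    have hrep : ∀ w : ℝ, Pf w = -∫ σ in (0:ℝ)..w, (E (x + σ) - 2 * f x + E (x - σ)) := by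
      intro w
      have hsplit : (fun σ => E (x + σ) - 2 * f x + E (x - σ))
          = fun σ => (E (x + σ) + E (x - σ)) - (fun _ : ℝ => 2 * f x) σ := by
        funext σ; ring
      rw [hsplit, integral_sub ((hint1 w).add (hint2 w)) (intervalIntegrable_const),
        integral_add (hint1 w) (hint2 w), shift_int hE, shift_neg hE,
        integral_const]
      simp only [hPf, smul_eq_mul, sub_zero]
      ring
    have hPfb : ∀ w : ℝ, 0 ≤ w → w ≤ s → |Pf w| ≤ w * K := by
      intro w hw0 hws
      rw [hrep w, abs_neg]
      have := norm_integral_le_of_norm_le_const (a := (0:ℝ)) (b := w) (C := K)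
        (f := fun σ => E (x + σ) - 2 * f x + E (x - σ)) ?_
      · rw [Real.norm_eq_abs] at this
        calc |∫ σ in (0:ℝ)..w, (E (x + σ) - 2 * f x + E (x - σ))| ≤ K * |w - 0| := this
          _ = w * K := by rw [sub_zero, abs_of_nonneg hw0]; ring
      · intro σ hσ
        rw [uIoc_of_le hw0] at hσ
        rw [Real.norm_eq_abs]
        exact hKd x hx σ hσ.1.le (hσ.2.trans hws)
    -- the symmetrized integral identity
    have hkey : ∫ w in (0:ℝ)..s, (Pf w + Pf (s - w))
        = 2 * s ^ 2 * (f x - (Q2 (x + s) - 2 * Q2 x + Q2 (x - s)) / s ^ 2) := by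
      have hrefl : ∫ w in (0:ℝ)..s, Pf (s - w) = ∫ w in (0:ℝ)..s, Pf w := by
        rw [integral_comp_sub_left Pf s, sub_self, sub_zero]
      have hPint : IntervalIntegrable Pf MeasureTheory.volume 0 s :=
        hPfc.intervalIntegrable _ _
      have hPint2 : IntervalIntegrable (fun w => Pf (s - w)) MeasureTheory.volume 0 s :=
        (hPfc.comp (continuous_const.sub continuous_id)).intervalIntegrable _ _
      rw [integral_add hPint hPint2, hrefl]
      have hP1int : ∀ w : ℝ, IntervalIntegrable (fun σ => Q1 (x + σ))
          MeasureTheory.volume 0 w := fun w =>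
        ((P1_cont hE).comp (continuous_const.add continuous_id)).intervalIntegrable _ _
      have hP1int2 : ∀ w : ℝ, IntervalIntegrable (fun σ => Q1 (x - σ))
          MeasureTheory.volume 0 w := fun w =>
        ((P1_cont hE).comp (continuous_const.sub continuous_id)).intervalIntegrable _ _
      have hPfval : ∫ w in (0:ℝ)..s, Pf w
          = s ^ 2 * f x - ((Q2 (x + s) - Q2 x) - (Q2 x - Q2 (x - s))) := by
        have hsplit : Pf = fun w => (2 * f x) * w
            - ((fun w => Q1 (x + w)) w - (fun w => Q1 (x - w)) w) := by
          funext w; simp only [hPf]; ring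
        rw [hsplit, integral_sub (by
            apply IntervalIntegrable.const_mul
            exact intervalIntegrable_id) ((hP1int s).sub (hP1int2 s)),
          integral_sub (hP1int s) (hP1int2 s), integral_const_mul, integral_id,
          shift_int2 hE, shift_neg2 hE]
        ring
      rw [hPfval]
      field_simp
      ring
    have habs : |∫ w in (0:ℝ)..s, (Pf w + Pf (s - w))| ≤ K * s * s := by
      have := norm_integral_le_of_norm_le_const (a := (0:ℝ)) (b := s) (C := K * s)
        (f := fun w => Pf w + Pf (s - w)) ?_
      · rw [Real.norm_eq_abs] at this
        calc |∫ w in (0:ℝ)..s, (Pf w + Pf (s - w))| ≤ K * s * |s - 0| := this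
          _ = K * s * s := by rw [sub_zero, abs_of_nonneg hs.le]
      · intro w hw
        rw [uIoc_of_le hs.le] at hw
        rw [Real.norm_eq_abs]
        have b1 := hPfb w hw.1.le hw.2
        have b2 := hPfb (s - w) (by linarith [hw.2]) (by linarith [hw.1.le])
        calc |Pf w + Pf (s - w)| ≤ |Pf w| + |Pf (s - w)| := abs_add_le _ _
          _ ≤ w * K + (s - w) * K := by linarith
          _ = K * s := by ring
    rw [hkey] at habs
    have h2s : |2 * s ^ 2 * (f x - (Q2 (x + s) - 2 * Q2 x + Q2 (x - s)) / s ^ 2)|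
        = 2 * s ^ 2 * |f x - (Q2 (x + s) - 2 * Q2 x + Q2 (x - s)) / s ^ 2| := by
      rw [abs_mul, abs_of_pos (by positivity : (0:ℝ) < 2 * s ^ 2)]
    rw [h2s] at habs
    nlinarith [abs_nonneg (f x - (Q2 (x + s) - 2 * Q2 x + Q2 (x - s)) / s ^ 2)]
  · -- |g1| ≤ W / s
    intro x hx
    have hi1 : IntervalIntegrable (fun σ => E (x + σ)) MeasureTheory.volume 0 s :=
      (hE.comp (continuous_const.add continuous_id)).intervalIntegrable _ _
    have hi2 : IntervalIntegrable (fun σ => E (x - σ)) MeasureTheory.volume 0 s :=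
      (hE.comp (continuous_const.sub continuous_id)).intervalIntegrable _ _
    have hrep : Q1 (x + s) - 2 * Q1 x + Q1 (x - s)
        = ∫ σ in (0:ℝ)..s, (E (x + σ) - E (x - σ)) := by
      rw [integral_sub hi1 hi2, shift_int hE, shift_neg hE]
      ring
    have habs : |Q1 (x + s) - 2 * Q1 x + Q1 (x - s)| ≤ W * s := by
      rw [hrep]
      have := norm_integral_le_of_norm_le_const (a := (0:ℝ)) (b := s) (C := W)
        (f := fun σ => E (x + σ) - E (x - σ)) ?_
      · rw [Real.norm_eq_abs] at this
        calc |∫ σ in (0:ℝ)..s, (E (x + σ) - E (x - σ))| ≤ W * |s - 0| := this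
          _ = W * s := by rw [sub_zero, abs_of_nonneg hs.le]
      · intro σ hσ
        rw [uIoc_of_le hs.le] at hσ
        rw [Real.norm_eq_abs]
        exact hKp x hx σ hσ.1.le hσ.2
    rw [abs_div, abs_of_pos hs2]
    rw [div_le_div_iff₀ hs2 hs]
    calc |Q1 (x + s) - 2 * Q1 x + Q1 (x - s)| * s ≤ (W * s) * s := by
          have := mul_le_mul_of_nonneg_right habs hs.le
          linarith
      _ = W * s ^ 2 := by ring
  · -- |g2| ≤ K / s²
    intro x hx
    have hb := hKd x hx s hs.le le_rfl
    show |(E (x + s) - 2 * E x + E (x - s)) / s ^ 2| ≤ K / s ^ 2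
    rw [show E (x + s) - 2 * E x + E (x - s) = E (x + s) - 2 * f x + E (x - s) by
      rw [hEeq x hx], abs_div, abs_of_pos hs2]
    gcongr


end Ext

lemma supOn_le (hab : a ≤ b) {φ : ℝ → ℝ} {M : ℝ} (hφ : ∀ x ∈ Icc a b, |φ x| ≤ M) :
    supOn a b φ ≤ M := by
  have hne : Nonempty (Icc a b) := ⟨⟨a, left_mem_Icc.mpr hab⟩⟩
  exact ciSup_le fun x => hφ x x.2

lemma le_supOn (hf : ContinuousOn f (Icc a b)) {x : ℝ} (hx : x ∈ Icc a b) :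
    |f x| ≤ supOn a b f := by
  obtain ⟨M, _, hM⟩ := f_bound hf
  have hbdd : BddAbove (range fun y : Icc a b => |f y|) := by
    refine ⟨M, ?_⟩
    rintro v ⟨y, rfl⟩
    exact hM y y.2
  exact le_ciSup hbdd (⟨x, hx⟩ : Icc a b)


end S16

theorem stmt16 {F : Type*} [NormedAddCommGroup F] (a b : ℝ) (hab : a < b)
    (H : (ℝ → ℝ) → F) (γ α β₀ β₁ β₂ : ℝ)
    (hγ : 0 ≤ γ) (hα : 0 ≤ α) (hβ₀ : 0 ≤ β₀) (hβ₁ : 0 ≤ β₁) (hβ₂ : 0 ≤ β₂)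
    (ha : ∀ f g : ℝ → ℝ, ContinuousOn f (Set.Icc a b) → ContinuousOn g (Set.Icc a b) →
      ‖H (f + g)‖ ≤ γ * (‖H f‖ + ‖H g‖))
    (hb : ∀ f : ℝ → ℝ, ContinuousOn f (Set.Icc a b) → ‖H f‖ ≤ α * supOn a b f)
    (hc : ∀ g g' g'' : ℝ → ℝ, IsC2On a b g g' g'' →
      ‖H g‖ ≤ β₀ * supOn a b g + β₁ * supOn a b g' + β₂ * supOn a b g'') :
    ∀ f : ℝ → ℝ, ContinuousOn f (Set.Icc a b) → ∀ h : ℝ, 0 < h → h ≤ (b - a) / 2 →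
      ‖H f‖ ≤ γ * (β₀ * supOn a b f + (2 * β₁ / h) * omega1 a b f h +
        (3 / 4) * (α + β₀ + 2 * β₁ / h + 2 * β₂ / h ^ 2) * omega2 a b f h) := by
  intro f hf h h0 hh
  have habl : a ≤ b := hab.le
  set ω2 := omega2 a b f h with hω2def
  set ω1 := omega1 a b f h with hω1def
  set Sf := supOn a b f with hSfdef
  have hω2nn : 0 ≤ ω2 := S16.omega2_nonneg habl h0.le hf
  have hω1nn : 0 ≤ ω1 := S16.omega1_nonneg habl h0.le hf
  apply le_of_forall_pos_le_add
  intro η hη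
  -- Whitney lines
  obtain ⟨uL, vL, hL⟩ := S16.whitney habl hf h0 (c := a) le_rfl (by linarith)
  obtain ⟨uR, vR, hR'⟩ := S16.whitney habl hf h0 (c := b - 2 * h) (by linarith) (by linarith)
  have hbb : b - 2 * h + 2 * h = b := by ring
  rw [hbb] at hR'
  set C₁ : ℝ := γ * (α / 2 + β₀ / 2 + β₁ / h + β₂ / h ^ 2) + 1 with hC₁def
  have hC₁aux : 0 ≤ γ * (α / 2 + β₀ / 2 + β₁ / h + β₂ / h ^ 2) := by
    apply mul_nonneg hγ
    have h1 : 0 ≤ β₁ / h := by positivity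
    have h2 : 0 ≤ β₂ / h ^ 2 := by positivity
    linarith
  have hC₁pos : 0 < C₁ := by rw [hC₁def]; linarith
  set ε := η / (2 * C₁) with hεdef
  have hεpos : 0 < ε := by rw [hεdef]; positivity
  -- uniform continuity
  obtain ⟨δ₀, hδ₀pos, hδ₀⟩ := Metric.uniformContinuousOn_iff_le.mp
    (isCompact_Icc.uniformContinuousOn_of_continuous hf) ε hεpos
  set V := |vL| + |vR| with hVdef
  have hVnn : 0 ≤ V := by rw [hVdef]; positivity
  set δ := min δ₀ (η / (2 * C₁ * (V + 1))) with hδdef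
  have hδpos : 0 < δ := lt_min hδ₀pos (by positivity)
  have hδf : ∀ p ∈ Set.Icc a b, ∀ q ∈ Set.Icc a b, |p - q| ≤ δ → |f p - f q| ≤ ε := by
    intro p hp q hq hpq
    have := hδ₀ p hp q hq (by rw [Real.dist_eq]; exact hpq.trans (min_le_left _ _))
    rwa [Real.dist_eq] at this
  set K := 3 / 2 * ω2 + ε + V * δ with hKdef
  have hKnn : 0 ≤ K := by
    rw [hKdef]
    have h1 : 0 ≤ V * δ := mul_nonneg hVnn hδpos.le
    have h32 : (0:ℝ) ≤ 3 / 2 * ω2 := by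
      apply mul_nonneg (by norm_num) hω2nn
    exact add_nonneg (add_nonneg h32 hεpos.le) h1
  -- extension and its bounds
  set E := S16.ext a b δ uL vL uR vR f with hEdef
  have hE : Continuous E := S16.ext_continuous habl hf
  have hEeq : ∀ y ∈ Set.Icc a b, E y = f y := fun y hy => S16.ext_eq habl hδpos hy
  have hKd : ∀ x ∈ Set.Icc a b, ∀ t : ℝ, 0 ≤ t → t ≤ h →
      |E (x + t) - 2 * f x + E (x - t)| ≤ K := by
    intro x hx t ht0 hth
    exact S16.delta_bound habl hf h0 (by linarith) hδpos hεpos.le hδf hL hR' hx ht0 hth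
  have hKp : ∀ x ∈ Set.Icc a b, ∀ t : ℝ, 0 ≤ t → t ≤ h →
      |E (x + t) - E (x - t)| ≤ 2 * ω1 + K := by
    intro x hx t ht0 hth
    exact S16.pair_bound habl hf h0 (by linarith) hδpos hεpos.le hδf hL hR' hx ht0 hth
  obtain ⟨g, g1, g2, hg, hg1, hg2c, hgc, hfg, hg1b, hg2b⟩ :=
    S16.steklov a b h K (2 * ω1 + K) f h0 hE hEeq hKd hKp
  -- apply the hypotheses
  have hgcont : ContinuousOn g (Set.Icc a b) := hgc.continuousOn
  have hfgcont : ContinuousOn (fun x => f x - g x) (Set.Icc a b) := hf.sub hgcont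
  have hC2 : IsC2On a b g g1 g2 :=
    ⟨fun x _ => (hg x).hasDerivWithinAt, fun x _ => (hg1 x).hasDerivWithinAt,
      hg2c.continuousOn⟩
  have hfeq : f = (fun x => f x - g x) + g := by funext x; simp
  have hsplit : ‖H f‖ ≤ γ * (‖H (fun x => f x - g x)‖ + ‖H g‖) := by
    nth_rewrite 1 [hfeq]
    exact ha _ g hfgcont hgcont
  have hHfg : ‖H (fun x => f x - g x)‖ ≤ α * (K / 2) := by
    refine (hb _ hfgcont).trans ?_
    exact mul_le_mul_of_nonneg_left (S16.supOn_le habl hfg) hα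
  have hsupg : supOn a b g ≤ Sf + K / 2 := by
    apply S16.supOn_le habl
    intro x hx
    have h1 : |f x| ≤ Sf := S16.le_supOn hf hx
    have h2 : |f x - g x| ≤ K / 2 := hfg x hx
    have := abs_sub_abs_le_abs_sub (g x) (f x)
    have h3 : |g x - f x| = |f x - g x| := abs_sub_comm _ _
    linarith
  have hHg : ‖H g‖ ≤ β₀ * (Sf + K / 2) + β₁ * ((2 * ω1 + K) / h) + β₂ * (K / h ^ 2) := by
    refine (hc g g1 g2 hC2).trans ?_
    have b1 := mul_le_mul_of_nonneg_left hsupg hβ₀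
    have b2 := mul_le_mul_of_nonneg_left (S16.supOn_le habl hg1b) hβ₁
    have b3 := mul_le_mul_of_nonneg_left (S16.supOn_le habl hg2b) hβ₂
    linarith
  have htotal : ‖H f‖ ≤ γ * (α * (K / 2) + (β₀ * (Sf + K / 2)
      + β₁ * ((2 * ω1 + K) / h) + β₂ * (K / h ^ 2))) := by
    refine hsplit.trans ?_
    apply mul_le_mul_of_nonneg_left _ hγ
    linarith
  -- algebraic rearrangement
  have hid : γ * (α * (K / 2) + (β₀ * (Sf + K / 2)
      + β₁ * ((2 * ω1 + K) / h) + β₂ * (K / h ^ 2)))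
      = γ * (β₀ * Sf + (2 * β₁ / h) * ω1 +
        (3 / 4) * (α + β₀ + 2 * β₁ / h + 2 * β₂ / h ^ 2) * ω2)
        + γ * (ε + V * δ) * (α / 2 + β₀ / 2 + β₁ / h + β₂ / h ^ 2) := by
    rw [hKdef]
    field_simp
    ring
  -- slack estimate
  have hslack : γ * (ε + V * δ) * (α / 2 + β₀ / 2 + β₁ / h + β₂ / h ^ 2) ≤ η := by
    have hfac : γ * (α / 2 + β₀ / 2 + β₁ / h + β₂ / h ^ 2) ≤ C₁ := by
      rw [hC₁def]; linarith
    have hεC : ε * C₁ = η / 2 := by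
      rw [hεdef]
      field_simp [hC₁pos.ne']
    have hδle : δ ≤ η / (2 * C₁ * (V + 1)) := min_le_right _ _
    have hVδ : V * δ * C₁ ≤ η / 2 := by
      have h1 : C₁ * (V + 1) * δ ≤ C₁ * (V + 1) * (η / (2 * C₁ * (V + 1))) := by
        apply mul_le_mul_of_nonneg_left hδle
        positivity
      have h2 : C₁ * (V + 1) * (η / (2 * C₁ * (V + 1))) = η / 2 := by
        field_simp
      nlinarith [mul_nonneg (mul_nonneg hC₁pos.le hVnn) hδpos.le, hC₁pos, hδpos.le]
    have hσnn : 0 ≤ ε + V * δ := by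
      have : 0 ≤ V * δ := mul_nonneg hVnn hδpos.le
      linarith
    calc γ * (ε + V * δ) * (α / 2 + β₀ / 2 + β₁ / h + β₂ / h ^ 2)
        = (ε + V * δ) * (γ * (α / 2 + β₀ / 2 + β₁ / h + β₂ / h ^ 2)) := by ring
      _ ≤ (ε + V * δ) * C₁ := mul_le_mul_of_nonneg_left hfac hσnn
      _ = ε * C₁ + V * δ * C₁ := by ring
      _ ≤ η / 2 + η / 2 := by linarith
      _ = η := by ring
  rw [hid] at htotal
  linarith
end

section
/- For every f ∈ C[a,b] and 0 < t ≤ (b-a)/2, K(f; t²; C[a,b], C²[a,b]) ≤ (9/4) ω₂(f; t), where K(f; t²) = inf { ‖f-g‖_∞ + t²‖g''‖_∞ : g ∈ C²[a,b] } and ω₂ is the second modulus of smoothness. -/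
open Set intervalIntegral

lemma zhuk_bdd (a b t : ℝ) (f : ℝ → ℝ) (hf : ContinuousOn f (Set.Icc a b)) :
    BddAbove {v : ℝ | ∃ x s : ℝ, 0 ≤ s ∧ s ≤ t ∧ x - s ∈ Set.Icc a b ∧ x + s ∈ Set.Icc a b ∧
      v = |f (x + s) - 2 * f x + f (x - s)|} := by
  obtain ⟨C, hC⟩ := isCompact_Icc.exists_bound_of_continuousOn hf
  refine ⟨4 * C, ?_⟩
  rintro v ⟨y, s, h0, hst, hm1, hm2, rfl⟩
  have hy : y ∈ Set.Icc a b := ⟨by have := hm1.1; linarith, by have := hm2.2; linarith⟩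
  have n1 := hC _ hm1
  have n2 := hC _ hm2
  have n3 := hC _ hy
  rw [Real.norm_eq_abs] at n1 n2 n3
  have t1 : |f (y + s) - 2 * f y + f (y - s)| ≤ |f (y + s) - 2 * f y| + |f (y - s)| :=
    abs_add_le _ _
  have t2 : |f (y + s) - 2 * f y| ≤ |f (y + s)| + |2 * f y| := abs_sub _ _
  have t3 : |2 * f y| = 2 * |f y| := by rw [abs_mul]; norm_num
  linarith


lemma zhuk_sd0 (a b t : ℝ) (f : ℝ → ℝ) (hf : ContinuousOn f (Set.Icc a b))
    (x s : ℝ) (hs0 : 0 ≤ s) (hst : s ≤ t) (h1 : x - s ∈ Set.Icc a b)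
    (h2 : x + s ∈ Set.Icc a b) :
    |f (x + s) - 2 * f x + f (x - s)| ≤ omega2 a b f t :=
  le_csSup (zhuk_bdd a b t f hf) ⟨x, s, hs0, hst, h1, h2, rfl⟩


lemma zhuk_omega2_nonneg (a b t : ℝ) (f : ℝ → ℝ) (hab : a ≤ b) (ht0 : 0 ≤ t)
    (hf : ContinuousOn f (Set.Icc a b)) : 0 ≤ omega2 a b f t := by
  have h := zhuk_sd0 a b t f hf a 0 le_rfl ht0
    (by simpa using Set.left_mem_Icc.mpr hab) (by simpa using Set.left_mem_Icc.mpr hab)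
  have : |f (a + 0) - 2 * f a + f (a - 0)| = 0 := by
    rw [add_zero, sub_zero, show f a - 2 * f a + f a = 0 from by ring, abs_zero]
  linarith


lemma zhuk_sd (a b t : ℝ) (f : ℝ → ℝ) (hf : ContinuousOn f (Set.Icc a b))
    (p q r : ℝ) (hmid : p + r = 2 * q) (hstep : |r - p| ≤ 2 * t)
    (hp : p ∈ Set.Icc a b) (hr : r ∈ Set.Icc a b) :
    |f r - 2 * f q + f p| ≤ omega2 a b f t := by
  rcases le_total p r with h | h
  · have h1 : q + (r - p) / 2 = r := by linarith
    have h2 : q - (r - p) / 2 = p := by linarith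
    have := zhuk_sd0 a b t f hf q ((r - p) / 2) (by linarith)
      (by rw [abs_of_nonneg (by linarith : (0:ℝ) ≤ r - p)] at hstep; linarith)
      (by rw [h2]; exact hp) (by rw [h1]; exact hr)
    rwa [h1, h2] at this
  · have h1 : q + (p - r) / 2 = p := by linarith
    have h2 : q - (p - r) / 2 = r := by linarith
    have := zhuk_sd0 a b t f hf q ((p - r) / 2) (by linarith)
      (by rw [abs_sub_comm, abs_of_nonneg (by linarith : (0:ℝ) ≤ p - r)] at hstep; linarith)
      (by rw [h2]; exact hr) (by rw [h1]; exact hp)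
    rw [h1, h2] at this
    rwa [show f p - 2 * f q + f r = f r - 2 * f q + f p from by ring] at this

lemma zhuk_pair_core (a b t : ℝ) (f : ℝ → ℝ) (hf : ContinuousOn f (Set.Icc a b))
    (ι : ℝ → ℝ) (hmid : ∀ u v p q : ℝ, u + v = p + q → ι u + ι v = ι p + ι q)
    (hdist : ∀ u v : ℝ, |ι u - ι v| = |u - v|)
    (hmap : ∀ y, 0 ≤ y → y ≤ 2 * t → ι y ∈ Set.Icc a b)
    (d w w' : ℝ) (hd0 : 0 ≤ d) (hdt : d ≤ t) (hw0 : 0 ≤ w) (hw1 : w ≤ t - d)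
    (hw0' : 0 ≤ w') (hw1' : w' ≤ t - d) (hww : w ≤ w') :
    |(f (ι (2 * w + d)) - 2 * f (ι w)) - (f (ι (2 * w' + d)) - 2 * f (ι w'))| ≤
      3 * omega2 a b f t := by
  have ht0 : 0 ≤ t := le_trans hd0 hdt
  have m1 := zhuk_sd a b t f hf (ι w) (ι w') (ι (2 * w' - w))
    (by have := hmid w (2 * w' - w) w' w' (by ring); linarith)
    (by rw [hdist]; rw [show 2 * w' - w - w = 2 * (w' - w) by ring,
          abs_of_nonneg (by linarith : (0:ℝ) ≤ 2 * (w' - w))]; linarith)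
    (hmap w hw0 (by linarith)) (hmap (2 * w' - w) (by linarith) (by linarith))
  have m2 := zhuk_sd a b t f hf (ι w) (ι (w' + (w + d) / 2)) (ι (2 * w' + d))
    (by have := hmid w (2 * w' + d) (w' + (w + d) / 2) (w' + (w + d) / 2) (by ring); linarith)
    (by rw [hdist, abs_of_nonneg (by linarith : (0:ℝ) ≤ 2 * w' + d - w)]; linarith)
    (hmap w hw0 (by linarith)) (hmap (2 * w' + d) (by linarith) (by linarith))
  have m3 := zhuk_sd a b t f hf (ι (2 * w + d)) (ι (w' + (w + d) / 2)) (ι (2 * w' - w))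
    (by have := hmid (2 * w + d) (2 * w' - w) (w' + (w + d) / 2) (w' + (w + d) / 2) (by ring)
        linarith)
    (by rw [hdist]; rw [abs_le]; constructor <;> linarith)
    (hmap (2 * w + d) (by linarith) (by linarith))
    (hmap (2 * w' - w) (by linarith) (by linarith))
  have e1 := abs_le.mp m1
  have e2 := abs_le.mp m2
  have e3 := abs_le.mp m3
  rw [abs_le]
  constructor <;> [linarith [e1.1, e2.1, e3.1, e1.2, e2.2, e3.2];
    linarith [e1.1, e2.1, e3.1, e1.2, e2.2, e3.2]]


lemma zhuk_pair (a b t : ℝ) (f : ℝ → ℝ) (hf : ContinuousOn f (Set.Icc a b))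
    (ι : ℝ → ℝ) (hmid : ∀ u v p q : ℝ, u + v = p + q → ι u + ι v = ι p + ι q)
    (hdist : ∀ u v : ℝ, |ι u - ι v| = |u - v|)
    (hmap : ∀ y, 0 ≤ y → y ≤ 2 * t → ι y ∈ Set.Icc a b)
    (d w w' : ℝ) (hd0 : 0 ≤ d) (hdt : d ≤ t) (hw0 : 0 ≤ w) (hw1 : w ≤ t - d)
    (hw0' : 0 ≤ w') (hw1' : w' ≤ t - d) :
    |(f (ι (2 * w + d)) - 2 * f (ι w)) - (f (ι (2 * w' + d)) - 2 * f (ι w'))| ≤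
      3 * omega2 a b f t := by
  rcases le_total w w' with h | h
  · exact zhuk_pair_core a b t f hf ι hmid hdist hmap d w w' hd0 hdt hw0 hw1 hw0' hw1' h
  · rw [abs_sub_comm]
    exact zhuk_pair_core a b t f hf ι hmid hdist hmap d w' w hd0 hdt hw0' hw1' hw0 hw1 h


lemma zhuk_supcont (t : ℝ) (B : ℝ → ℝ → ℝ)
    (hBc : ∀ d, Continuous (B d))
    (hUC : ∀ ε, 0 < ε → ∃ δ, 0 < δ ∧ ∀ d w d' w', |d - d'| ≤ δ → |w - w'| ≤ δ →
      |B d w - B d' w'| ≤ ε) :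
    ContinuousOn (fun d => sSup (B d '' Set.Icc 0 (t - d))) (Set.Iic t) := by
  intro d hd
  rw [Metric.continuousWithinAt_iff]
  intro ε hε
  obtain ⟨δ, hδ0, hδ⟩ := hUC (ε / 2) (by positivity)
  have claim : ∀ u v : ℝ, u ≤ t → v ≤ t → |u - v| ≤ δ →
      sSup (B u '' Set.Icc 0 (t - u)) ≤ sSup (B v '' Set.Icc 0 (t - v)) + ε / 2 := by
    intro u v hu hv huv
    apply csSup_le ((Set.nonempty_Icc.mpr (by linarith)).image _)
    rintro x ⟨w, hw, rfl⟩
    have hw0 : 0 ≤ w := hw.1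
    have hw1 : w ≤ t - u := hw.2
    set w' := min w (t - v) with hw'def
    have hw'mem : w' ∈ Set.Icc 0 (t - v) :=
      ⟨le_min hw0 (by linarith), min_le_right _ _⟩
    have hww' : |w - w'| ≤ δ := by
      rcases le_total w (t - v) with hc | hc
      · rw [hw'def, min_eq_left hc]; simpa using hδ0.le
      · rw [hw'def, min_eq_right hc, abs_le]
        have := abs_le.mp huv
        constructor <;> linarith [this.1, this.2]
    have h1 : B u w ≤ B v w' + ε / 2 := by
      have := hδ u w v w' huv hww'
      have := abs_le.mp this
      linarith [this.2]
    have h2 : B v w' ≤ sSup (B v '' Set.Icc 0 (t - v)) :=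
      le_csSup (isCompact_Icc.bddAbove_image (hBc v).continuousOn)
        (Set.mem_image_of_mem _ hw'mem)
    linarith
  refine ⟨δ, hδ0, fun x hx hdist => ?_⟩
  rw [Real.dist_eq] at hdist ⊢
  have hx' : x ≤ t := hx
  have c1 := claim x d hx' hd (le_of_lt hdist)
  have c2 := claim d x hd hx' (by rw [abs_sub_comm]; exact le_of_lt hdist)
  rw [abs_lt]
  constructor <;> [linarith; linarith]

lemma zhuk_sideE (a b t W : ℝ) (f fh : ℝ → ℝ) (hab : a ≤ b)
    (hf : ContinuousOn f (Set.Icc a b)) (ht0 : 0 < t)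
    (hW : W = omega2 a b f t) (hW0 : 0 ≤ W)
    (hfh : ∀ x ∈ Set.Icc a b, fh x = f x) (hfhc : Continuous fh)
    (hfhu : UniformContinuous fh)
    (ι : ℝ → ℝ) (hmid : ∀ u v p q : ℝ, u + v = p + q → ι u + ι v = ι p + ι q)
    (hdist : ∀ u v : ℝ, |ι u - ι v| = |u - v|)
    (hmap : ∀ y, 0 ≤ y → y ≤ 2 * t → ι y ∈ Set.Icc a b) :
    ∃ E : ℝ → ℝ, ContinuousOn E (Set.Iic t) ∧ E 0 = f (ι 0) ∧
      ∀ d w, 0 ≤ d → d ≤ t → 0 ≤ w → w ≤ t - d →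
        |E d + (fh (ι (2 * w + d)) - 2 * fh (ι w))| ≤ 3 / 2 * W := by
  have hιc : Continuous ι := by
    have : LipschitzWith 1 ι := by
      rw [lipschitzWith_iff_dist_le_mul]
      intro u v
      rw [Real.dist_eq, Real.dist_eq, hdist]
      simp
    exact this.continuous
  obtain ⟨AV, hAV⟩ : ∃ AV : ℝ → ℝ → ℝ,
      AV = fun d w => fh (ι (2 * w + d)) - 2 * fh (ι w) := ⟨_, rfl⟩
  have hAVc : ∀ d, Continuous (AV d) := by
    intro d
    rw [hAV]
    exact (hfhc.comp (hιc.comp (by continuity))).sub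
      (continuous_const.mul (hfhc.comp hιc))
  have hAVuc : ∀ ε, 0 < ε → ∃ δ, 0 < δ ∧ ∀ d w d' w', |d - d'| ≤ δ → |w - w'| ≤ δ →
      |AV d w - AV d' w'| ≤ ε := by
    intro ε hε
    obtain ⟨δ', hδ'0, hδ'⟩ := Metric.uniformContinuous_iff.mp hfhu (ε / 4) (by positivity)
    refine ⟨δ' / 4, by positivity, ?_⟩
    intro d w d' w' h1 h2
    have k1 : |fh (ι (2 * w + d)) - fh (ι (2 * w' + d'))| ≤ ε / 4 := by
      have hd : dist (ι (2 * w + d)) (ι (2 * w' + d')) < δ' := by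
        rw [Real.dist_eq, hdist, show 2 * w + d - (2 * w' + d') = 2 * (w - w') + (d - d')
          from by ring]
        have a1 : |2 * (w - w') + (d - d')| ≤ |2 * (w - w')| + |d - d'| := abs_add_le _ _
        have a2 : |2 * (w - w')| = 2 * |w - w'| := by rw [abs_mul]; norm_num
        linarith
      have := hδ' hd
      rw [Real.dist_eq] at this
      linarith
    have k2 : |fh (ι w) - fh (ι w')| ≤ ε / 4 := by
      have hd : dist (ι w) (ι w') < δ' := by
        rw [Real.dist_eq, hdist]; linarith
      have := hδ' hd
      rw [Real.dist_eq] at this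
      linarith
    have expand : AV d w - AV d' w' =
        (fh (ι (2 * w + d)) - fh (ι (2 * w' + d'))) - 2 * (fh (ι w) - fh (ι w')) := by
      rw [hAV]; ring
    rw [expand]
    have a1 : |(fh (ι (2 * w + d)) - fh (ι (2 * w' + d'))) - 2 * (fh (ι w) - fh (ι w'))| ≤
        |fh (ι (2 * w + d)) - fh (ι (2 * w' + d'))| + |2 * (fh (ι w) - fh (ι w'))| :=
      abs_sub _ _
    have a2 : |2 * (fh (ι w) - fh (ι w'))| = 2 * |fh (ι w) - fh (ι w')| := by
      rw [abs_mul]; norm_num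
    linarith
  have hAVf : ∀ d w, 0 ≤ d → d ≤ t → 0 ≤ w → w ≤ t - d →
      AV d w = f (ι (2 * w + d)) - 2 * f (ι w) := by
    intro d w h1 h2 h3 h4
    rw [hAV]
    dsimp only
    rw [hfh _ (hmap _ (by linarith) (by linarith)), hfh _ (hmap _ (by linarith) (by linarith))]
  have hpairAV : ∀ d w w', 0 ≤ d → d ≤ t → 0 ≤ w → w ≤ t - d → 0 ≤ w' → w' ≤ t - d →
      |AV d w - AV d w'| ≤ 3 * W := by
    intro d w w' h1 h2 h3 h4 h5 h6
    rw [hAVf d w h1 h2 h3 h4, hAVf d w' h1 h2 h5 h6, hW]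
    exact zhuk_pair a b t f hf ι hmid hdist hmap d w w' h1 h2 h3 h4 h5 h6
  obtain ⟨S1, hS1⟩ : ∃ S1 : ℝ → ℝ, S1 = fun d => sSup (AV d '' Set.Icc 0 (t - d)) := ⟨_, rfl⟩
  obtain ⟨S2, hS2⟩ : ∃ S2 : ℝ → ℝ,
      S2 = fun d => sSup ((fun w => -(3 / 2 * W) - AV d w) '' Set.Icc 0 (t - d)) := ⟨_, rfl⟩
  obtain ⟨E, hE⟩ : ∃ E : ℝ → ℝ,
      E = fun d => max (S2 d) (min (f (ι 0)) (3 / 2 * W - S1 d)) := ⟨_, rfl⟩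
  have hS1c : ContinuousOn S1 (Set.Iic t) := by
    rw [hS1]; exact zhuk_supcont t AV hAVc hAVuc
  have hS2c : ContinuousOn S2 (Set.Iic t) := by
    rw [hS2]
    apply zhuk_supcont t _ (fun d => continuous_const.sub (hAVc d))
    intro ε hε
    obtain ⟨δ, hδ0, hδ⟩ := hAVuc ε hε
    refine ⟨δ, hδ0, fun d w d' w' h1 h2 => ?_⟩
    show |-(3 / 2 * W) - AV d w - (-(3 / 2 * W) - AV d' w')| ≤ ε
    rw [show -(3 / 2 * W) - AV d w - (-(3 / 2 * W) - AV d' w') = -(AV d w - AV d' w')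
      from by ring, abs_neg]
    exact hδ d w d' w' h1 h2
  have hEc : ContinuousOn E (Set.Iic t) := by
    rw [hE]
    exact fun d hd => (hS2c d hd).max
      (continuousWithinAt_const.min (continuousWithinAt_const.sub (hS1c d hd)))
  have hne : ∀ d : ℝ, d ≤ t → (AV d '' Set.Icc 0 (t - d)).Nonempty :=
    fun d hd => (Set.nonempty_Icc.mpr (by linarith)).image _
  have hne2 : ∀ d : ℝ, d ≤ t →
      ((fun w => -(3 / 2 * W) - AV d w) '' Set.Icc 0 (t - d)).Nonempty :=
    fun d hd => (Set.nonempty_Icc.mpr (by linarith)).image _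
  have hbdd1 : ∀ d : ℝ, BddAbove (AV d '' Set.Icc 0 (t - d)) :=
    fun d => isCompact_Icc.bddAbove_image (hAVc d).continuousOn
  have hbdd2 : ∀ d : ℝ, BddAbove ((fun w => -(3 / 2 * W) - AV d w) '' Set.Icc 0 (t - d)) :=
    fun d => isCompact_Icc.bddAbove_image (continuous_const.sub (hAVc d)).continuousOn
  have hS1ub : ∀ d w, w ∈ Set.Icc 0 (t - d) → AV d w ≤ S1 d := by
    intro d w hw
    rw [hS1]
    exact le_csSup (hbdd1 d) (Set.mem_image_of_mem _ hw)
  have hS2ub : ∀ d w, w ∈ Set.Icc 0 (t - d) → -(3 / 2 * W) - AV d w ≤ S2 d := by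
    intro d w hw
    rw [hS2]
    exact le_csSup (hbdd2 d) (Set.mem_image_of_mem _ hw)
  have hS1le : ∀ d w, 0 ≤ d → d ≤ t → w ∈ Set.Icc 0 (t - d) → S1 d ≤ 3 * W + AV d w := by
    intro d w h0 h1 hw
    rw [hS1]
    apply csSup_le (hne d h1)
    rintro y ⟨w', hw', rfl⟩
    have := (abs_le.mp (hpairAV d w' w h0 h1 hw'.1 hw'.2 hw.1 hw.2)).2
    linarith
  have hS2le : ∀ d, 0 ≤ d → d ≤ t → S2 d ≤ 3 / 2 * W - S1 d := by
    intro d h0 h1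
    rw [hS2]
    apply csSup_le (hne2 d h1)
    rintro x ⟨w, hw, rfl⟩
    have := hS1le d w h0 h1 hw
    show -(3 / 2 * W) - AV d w ≤ 3 / 2 * W - S1 d
    linarith
  refine ⟨E, hEc, ?_, ?_⟩
  · -- E 0 = f (ι 0)
    have hsd : ∀ w : ℝ, 0 ≤ w → w ≤ t →
        |f (ι (2 * w + 0)) - 2 * f (ι w) + f (ι 0)| ≤ omega2 a b f t := by
      intro w hw0 hw1
      exact zhuk_sd a b t f hf (ι 0) (ι w) (ι (2 * w + 0))
        (by have := hmid 0 (2 * w + 0) w w (by ring); linarith)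
        (by rw [hdist, show 2 * w + 0 - 0 = 2 * w from by ring,
            abs_of_nonneg (by linarith : (0:ℝ) ≤ 2 * w)]; linarith)
        (hmap 0 le_rfl (by linarith)) (hmap (2 * w + 0) (by linarith) (by linarith))
    have hup : S1 0 ≤ W - f (ι 0) := by
      rw [hS1]
      apply csSup_le (hne 0 ht0.le)
      rintro x ⟨w, hw, rfl⟩
      obtain ⟨hw0, hw1⟩ := hw
      rw [hAVf 0 w le_rfl ht0.le hw0 hw1, hW]
      have := (abs_le.mp (hsd w hw0 (by linarith))).2
      linarith
    have hlo : S2 0 ≤ f (ι 0) := by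
      rw [hS2]
      apply csSup_le (hne2 0 ht0.le)
      rintro x ⟨w, hw, rfl⟩
      obtain ⟨hw0, hw1⟩ := hw
      show -(3 / 2 * W) - AV 0 w ≤ f (ι 0)
      rw [hAVf 0 w le_rfl ht0.le hw0 hw1]
      have h5 := (abs_le.mp (hsd w hw0 (by linarith))).1
      rw [← hW] at h5
      linarith
    rw [hE]
    show max (S2 0) (min (f (ι 0)) (3 / 2 * W - S1 0)) = f (ι 0)
    rw [min_eq_left (by linarith : f (ι 0) ≤ 3 / 2 * W - S1 0), max_eq_right hlo]
  · -- the main bound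
    intro d w h1 h2 h3 h4
    have hwmem : w ∈ Set.Icc 0 (t - d) := ⟨h3, h4⟩
    have hEle : E d ≤ 3 / 2 * W - S1 d := by
      rw [hE]
      exact max_le (hS2le d h1 h2) (min_le_right _ _)
    have hEge : S2 d ≤ E d := by
      rw [hE]
      exact le_max_left _ _
    have hone := hS1ub d w hwmem
    have htwo := hS2ub d w hwmem
    have hAVeq : AV d w = fh (ι (2 * w + d)) - 2 * fh (ι w) := by rw [hAV]
    rw [← hAVeq, abs_le]
    constructor <;> linarith

theorem stmt18 (a b : ℝ) (hab : a < b) (f : ℝ → ℝ)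
    (hf : ContinuousOn f (Set.Icc a b)) (t : ℝ) (ht0 : 0 < t) (ht : t ≤ (b - a) / 2) :
    KF a b (t ^ 2) f ≤ (9 / 4) * omega2 a b f t := by
  obtain ⟨W, hW⟩ : ∃ W : ℝ, W = omega2 a b f t := ⟨_, rfl⟩
  have hab' : a ≤ b := hab.le
  have h2t : a + 2 * t ≤ b := by linarith
  have hW0 : 0 ≤ W := by rw [hW]; exact zhuk_omega2_nonneg a b t f hab' ht0.le hf
  rw [← hW]
  -- the clamped extension of f to ℝ
  obtain ⟨fh, hfhdef⟩ : ∃ fh : ℝ → ℝ,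
      fh = (Set.Icc a b).restrict f ∘ Set.projIcc a b hab' := ⟨_, rfl⟩
  have hfhu : UniformContinuous fh := by
    rw [hfhdef]
    haveI : CompactSpace ↥(Set.Icc a b) := isCompact_iff_compactSpace.mp isCompact_Icc
    exact (CompactSpace.uniformContinuous_of_continuous hf.restrict).comp
      (LipschitzWith.projIcc hab').uniformContinuous
  have hfhc : Continuous fh := hfhu.continuous
  have hfh : ∀ x ∈ Set.Icc a b, fh x = f x := by
    intro x hx
    rw [hfhdef]
    show f (Set.projIcc a b hab' x : ℝ) = f x
    rw [Set.projIcc_of_mem hab' hx]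
  -- the two boundary extension functions
  obtain ⟨EL, hELc, hEL0', hELp⟩ := zhuk_sideE a b t W f fh hab' hf ht0 hW hW0 hfh hfhc hfhu
    (fun y => a + y)
    (by intro u v p q h; show a + u + (a + v) = a + p + (a + q); linarith)
    (by intro u v; rw [show a + u - (a + v) = u - v from by ring])
    (by intro y h1 h2; show a + y ∈ Set.Icc a b; exact ⟨by linarith, by linarith⟩)
  obtain ⟨ER, hERc, hER0', hERp⟩ := zhuk_sideE a b t W f fh hab' hf ht0 hW hW0 hfh hfhc hfhu
    (fun y => b - y)
    (by intro u v p q h; show b - u + (b - v) = b - p + (b - q); linarith)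
    (by intro u v; rw [show b - u - (b - v) = -(u - v) from by ring, abs_neg])
    (by intro y h1 h2; show b - y ∈ Set.Icc a b; exact ⟨by linarith, by linarith⟩)
  have hEL0 : EL 0 = f a := by
    have h : EL 0 = f (a + 0) := hEL0'
    rwa [add_zero] at h
  have hER0 : ER 0 = f b := by
    have h : ER 0 = f (b - 0) := hER0'
    rwa [sub_zero] at h
  -- the glued extension fe
  obtain ⟨fe, hfe⟩ : ∃ fe : ℝ → ℝ,
      fe = fun y => if y ≤ a then EL (min (a - y) t)
        else if y ≤ b then fh y else ER (min (y - b) t) := ⟨_, rfl⟩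
  have hbrL : Continuous (fun y : ℝ => EL (min (a - y) t)) :=
    hELc.comp_continuous ((continuous_const.sub continuous_id).min continuous_const)
      (fun y => Set.mem_Iic.mpr (min_le_right _ _))
  have hbrR : Continuous (fun y : ℝ => ER (min (y - b) t)) :=
    hERc.comp_continuous ((continuous_id.sub continuous_const).min continuous_const)
      (fun y => Set.mem_Iic.mpr (min_le_right _ _))
  have hfec : Continuous fe := by
    rw [hfe]
    apply Continuous.if_le hbrL _ continuous_id continuous_const
    · intro y hy
      have hy' : y = a := hy
      rw [hy', sub_self, min_eq_left ht0.le, hEL0, if_pos hab',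
        hfh a (Set.left_mem_Icc.mpr hab')]
    · apply Continuous.if_le hfhc hbrR continuous_id continuous_const
      intro y hy
      have hy' : y = b := hy
      rw [hy', sub_self, min_eq_left ht0.le, hER0, hfh b (Set.right_mem_Icc.mpr hab')]
  have feL : ∀ y, y ≤ a → fe y = EL (min (a - y) t) := by
    intro y hy; simp only [hfe]; rw [if_pos hy]
  have feM : ∀ y, a < y → y ≤ b → fe y = fh y := by
    intro y h1 h2; simp only [hfe]; rw [if_neg (not_le.mpr h1), if_pos h2]
  have feR : ∀ y, b < y → fe y = ER (min (y - b) t) := by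
    intro y h1; simp only [hfe]
    rw [if_neg (not_le.mpr (lt_of_le_of_lt hab' h1)), if_neg (not_le.mpr h1)]
  have feEq : ∀ y ∈ Set.Icc a b, fe y = f y := by
    intro y hy
    rcases le_or_gt y a with h | h
    · have hya : y = a := le_antisymm h hy.1
      rw [hya, feL a le_rfl, sub_self, min_eq_left ht0.le, hEL0]
    · rw [feM y h hy.2, hfh y hy]
  -- the central second-difference bound
  have hfeD : ∀ x ∈ Set.Icc a b, ∀ s, 0 ≤ s → s ≤ t →
      |fe (x + s) - 2 * f x + fe (x - s)| ≤ 3 / 2 * W := by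
    intro x hx s hs0 hst
    by_cases hL : x - s < a
    · -- left boundary case
      have hspos : 0 < s := by
        rcases lt_or_eq_of_le hs0 with h | h
        · exact h
        · exfalso; rw [← h] at hL; simp at hL; linarith [hx.1]
      have hxb : x + s ≤ b := by linarith [hx.1]
      have h1 : (0:ℝ) ≤ a - x + s := by linarith
      have h2 : a - x + s ≤ t := by linarith [hx.1]
      have h3 : (0:ℝ) ≤ x - a := by linarith [hx.1]
      have h4 : x - a ≤ t - (a - x + s) := by linarith
      have h := hELp (a - x + s) (x - a) h1 h2 h3 h4
      have h' : |EL (a - x + s) + (fh (a + (2 * (x - a) + (a - x + s))) -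
          2 * fh (a + (x - a)))| ≤ 3 / 2 * W := h
      rw [show a + (2 * (x - a) + (a - x + s)) = x + s from by ring,
        show a + (x - a) = x from by ring, hfh x hx] at h'
      have e1 : fe (x - s) = EL (a - x + s) := by
        rw [feL (x - s) hL.le, show a - (x - s) = a - x + s from by ring,
          min_eq_left h2]
      have e2 : fe (x + s) = fh (x + s) := by
        have : a < x + s := by linarith [hx.1]
        rw [feM (x + s) this hxb]
      rw [e1, e2, show fh (x + s) - 2 * f x + EL (a - x + s) =
        EL (a - x + s) + (fh (x + s) - 2 * f x) from by ring]
      exact h'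
    · by_cases hR : b < x + s
      · -- right boundary case
        have hspos : 0 < s := by
          rcases lt_or_eq_of_le hs0 with h | h
          · exact h
          · exfalso; rw [← h] at hR; simp at hR; linarith [hx.2]
        have hxa : a ≤ x - s := by linarith [hx.2]
        have h1 : (0:ℝ) ≤ x + s - b := by linarith
        have h2 : x + s - b ≤ t := by linarith [hx.2]
        have h3 : (0:ℝ) ≤ b - x := by linarith [hx.2]
        have h4 : b - x ≤ t - (x + s - b) := by linarith
        have h := hERp (x + s - b) (b - x) h1 h2 h3 h4
        have h' : |ER (x + s - b) + (fh (b - (2 * (b - x) + (x + s - b))) -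
            2 * fh (b - (b - x)))| ≤ 3 / 2 * W := h
        rw [show b - (2 * (b - x) + (x + s - b)) = x - s from by ring,
          show b - (b - x) = x from by ring, hfh x hx] at h'
        have e1 : fe (x + s) = ER (x + s - b) := by
          rw [feR (x + s) hR, min_eq_left h2]
        have e2 : fe (x - s) = fh (x - s) := by
          rw [feEq (x - s) ⟨hxa, by linarith⟩, hfh (x - s) ⟨hxa, by linarith⟩]
        rw [e1, e2, show ER (x + s - b) - 2 * f x + fh (x - s) =
          ER (x + s - b) + (fh (x - s) - 2 * f x) from by ring]
        exact h'
      · -- interior case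
        push_neg at hL hR
        have m1 : x - s ∈ Set.Icc a b := ⟨hL, by linarith [hx.2]⟩
        have m2 : x + s ∈ Set.Icc a b := ⟨by linarith [hx.1], hR⟩
        rw [feEq _ m1, feEq _ m2]
        have := zhuk_sd0 a b t f hf x s hs0 hst m1 m2
        rw [← hW] at this
        linarith
  -- primitives
  have ht2 : (0:ℝ) < t ^ 2 := by positivity
  have ht2ne : (t:ℝ) ^ 2 ≠ 0 := ne_of_gt ht2
  obtain ⟨F, hF⟩ : ∃ F : ℝ → ℝ, F = fun y => ∫ u in a..y, fe u := ⟨_, rfl⟩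
  have hFd : ∀ y, HasDerivAt F (fe y) y := by
    intro y
    rw [hF]
    exact intervalIntegral.integral_hasDerivAt_right (hfec.intervalIntegrable a y)
      (hfec.stronglyMeasurableAtFilter MeasureTheory.volume (nhds y)) hfec.continuousAt
  have hFc : Continuous F := continuous_iff_continuousAt.mpr fun y => (hFd y).continuousAt
  obtain ⟨G, hG⟩ : ∃ G : ℝ → ℝ, G = fun y => ∫ u in a..y, F u := ⟨_, rfl⟩
  have hGd : ∀ y, HasDerivAt G (F y) y := by
    intro y
    rw [hG]
    exact intervalIntegral.integral_hasDerivAt_right (hFc.intervalIntegrable a y)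
      (hFc.stronglyMeasurableAtFilter MeasureTheory.volume (nhds y)) hFc.continuousAt
  -- the smooth approximant g and its derivatives
  obtain ⟨g, hg⟩ : ∃ g : ℝ → ℝ,
      g = fun x => (t ^ 2)⁻¹ * (G (x + t) - 2 * G x + G (x - t)) := ⟨_, rfl⟩
  obtain ⟨g1, hg1⟩ : ∃ g1 : ℝ → ℝ,
      g1 = fun x => (t ^ 2)⁻¹ * (F (x + t) - 2 * F x + F (x - t)) := ⟨_, rfl⟩
  obtain ⟨g2, hg2⟩ : ∃ g2 : ℝ → ℝ,
      g2 = fun x => (t ^ 2)⁻¹ * (fe (x + t) - 2 * fe x + fe (x - t)) := ⟨_, rfl⟩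
  have hgd : ∀ x, HasDerivAt g (g1 x) x := by
    intro x
    have h1 : HasDerivAt (fun y : ℝ => G (y + t)) (F (x + t) * 1) x :=
      (hGd (x + t)).comp x ((hasDerivAt_id x).add_const t)
    have h2 : HasDerivAt (fun y : ℝ => 2 * G y) (2 * F x) x := (hGd x).const_mul 2
    have h3 : HasDerivAt (fun y : ℝ => G (y - t)) (F (x - t) * 1) x :=
      (hGd (x - t)).comp x ((hasDerivAt_id x).sub_const t)
    have H : HasDerivAt (fun y : ℝ => (t ^ 2)⁻¹ * (G (y + t) - 2 * G y + G (y - t)))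
        ((t ^ 2)⁻¹ * (F (x + t) * 1 - 2 * F x + F (x - t) * 1)) x :=
      ((h1.sub h2).add h3).const_mul ((t ^ 2)⁻¹)
    rw [hg]
    have : g1 x = (t ^ 2)⁻¹ * (F (x + t) * 1 - 2 * F x + F (x - t) * 1) := by
      simp only [hg1]; ring
    rw [this]
    exact H
  have hg1d : ∀ x, HasDerivAt g1 (g2 x) x := by
    intro x
    have h1 : HasDerivAt (fun y : ℝ => F (y + t)) (fe (x + t) * 1) x :=
      (hFd (x + t)).comp x ((hasDerivAt_id x).add_const t)
    have h2 : HasDerivAt (fun y : ℝ => 2 * F y) (2 * fe x) x := (hFd x).const_mul 2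
    have h3 : HasDerivAt (fun y : ℝ => F (y - t)) (fe (x - t) * 1) x :=
      (hFd (x - t)).comp x ((hasDerivAt_id x).sub_const t)
    have H : HasDerivAt (fun y : ℝ => (t ^ 2)⁻¹ * (F (y + t) - 2 * F y + F (y - t)))
        ((t ^ 2)⁻¹ * (fe (x + t) * 1 - 2 * fe x + fe (x - t) * 1)) x :=
      ((h1.sub h2).add h3).const_mul ((t ^ 2)⁻¹)
    rw [hg1]
    have : g2 x = (t ^ 2)⁻¹ * (fe (x + t) * 1 - 2 * fe x + fe (x - t) * 1) := by
      simp only [hg2]; ring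
    rw [this]
    exact H
  have hg2c : Continuous g2 := by
    rw [hg2]
    exact continuous_const.mul (((hfec.comp (continuous_id.add continuous_const)).sub
      (continuous_const.mul hfec)).add (hfec.comp (continuous_id.sub continuous_const)))
  -- sup bounds
  haveI hnei : Nonempty ↥(Set.Icc a b) := Set.Nonempty.to_subtype (Set.nonempty_Icc.mpr hab')
  have hsup2 : supOn a b g2 ≤ (t ^ 2)⁻¹ * (3 / 2 * W) := by
    apply ciSup_le
    rintro ⟨x, hx⟩
    show |g2 x| ≤ _
    have e : g2 x = (t ^ 2)⁻¹ * (fe (x + t) - 2 * f x + fe (x - t)) := by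
      simp only [hg2]
      rw [feEq x hx]
    rw [e, abs_mul, abs_of_pos (inv_pos.mpr ht2)]
    exact mul_le_mul_of_nonneg_left (hfeD x hx t ht0.le le_rfl) (inv_pos.mpr ht2).le
  have hsup1 : supOn a b (fun x => f x - g x) ≤ 3 / 4 * W := by
    apply ciSup_le
    rintro ⟨x, hx⟩
    show |f x - g x| ≤ 3 / 4 * W
    -- the Taylor-type argument
    obtain ⟨Ph, hPh⟩ : ∃ Ph : ℝ → ℝ,
        Ph = fun u => G (x + u) - 2 * G x + G (x - u) - u ^ 2 * f x := ⟨_, rfl⟩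
    obtain ⟨Ph1, hPh1⟩ : ∃ Ph1 : ℝ → ℝ,
        Ph1 = fun u => F (x + u) - F (x - u) - 2 * (u * f x) := ⟨_, rfl⟩
    obtain ⟨Ph2, hPh2⟩ : ∃ Ph2 : ℝ → ℝ,
        Ph2 = fun u => fe (x + u) + fe (x - u) - 2 * f x := ⟨_, rfl⟩
    have hPhd : ∀ u, HasDerivAt Ph (Ph1 u) u := by
      intro u
      have h1 : HasDerivAt (fun u : ℝ => G (x + u)) (F (x + u) * 1) u :=
        (hGd (x + u)).comp u ((hasDerivAt_id u).const_add x)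
      have h2 : HasDerivAt (fun _ : ℝ => 2 * G x) 0 u := hasDerivAt_const u (2 * G x)
      have h3 : HasDerivAt (fun u : ℝ => G (x - u)) (F (x - u) * (-1)) u :=
        (hGd (x - u)).comp u ((hasDerivAt_id u).const_sub x)
      have h4 : HasDerivAt (fun u : ℝ => u ^ 2 * f x) (2 * u * f x) u := by
        simpa using (hasDerivAt_pow 2 u).mul_const (f x)
      have H : HasDerivAt (fun u : ℝ => G (x + u) - 2 * G x + G (x - u) - u ^ 2 * f x)
          (F (x + u) * 1 - 0 + F (x - u) * (-1) - 2 * u * f x) u :=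
        ((h1.sub h2).add h3).sub h4
      rw [hPh]
      have : Ph1 u = F (x + u) * 1 - 0 + F (x - u) * (-1) - 2 * u * f x := by
        simp only [hPh1]; ring
      rw [this]
      exact H
    have hPh1d : ∀ u, HasDerivAt Ph1 (Ph2 u) u := by
      intro u
      have h1 : HasDerivAt (fun u : ℝ => F (x + u)) (fe (x + u) * 1) u :=
        (hFd (x + u)).comp u ((hasDerivAt_id u).const_add x)
      have h3 : HasDerivAt (fun u : ℝ => F (x - u)) (fe (x - u) * (-1)) u :=
        (hFd (x - u)).comp u ((hasDerivAt_id u).const_sub x)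
      have h4 : HasDerivAt (fun u : ℝ => 2 * (u * f x)) (2 * (1 * f x)) u :=
        (((hasDerivAt_id u).mul_const (f x))).const_mul 2
      have H : HasDerivAt (fun u : ℝ => F (x + u) - F (x - u) - 2 * (u * f x))
          (fe (x + u) * 1 - fe (x - u) * (-1) - 2 * (1 * f x)) u :=
        (h1.sub h3).sub h4
      rw [hPh1]
      have : Ph2 u = fe (x + u) * 1 - fe (x - u) * (-1) - 2 * (1 * f x) := by
        simp only [hPh2]; ring
      rw [this]
      exact H
    have hPh1c : Continuous Ph1 := by
      rw [hPh1]
      exact ((hFc.comp (continuous_const.add continuous_id)).sub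
        (hFc.comp (continuous_const.sub continuous_id))).sub
        (continuous_const.mul (continuous_id.mul continuous_const))
    have hPh2c : Continuous Ph2 := by
      rw [hPh2]
      exact ((hfec.comp (continuous_const.add continuous_id)).add
        (hfec.comp (continuous_const.sub continuous_id))).sub continuous_const
    have key1 : ∀ u ∈ Set.Icc (0:ℝ) t, |Ph1 u| ≤ 3 / 2 * W * u := by
      intro u hu
      have h0 : Ph1 0 = 0 := by simp [hPh1]
      have hftc : ∫ v in (0:ℝ)..u, Ph2 v = Ph1 u - Ph1 0 :=
        intervalIntegral.integral_eq_sub_of_hasDerivAt (fun v _ => hPh1d v)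
          (hPh2c.intervalIntegrable 0 u)
      have e : Ph1 u = ∫ v in (0:ℝ)..u, Ph2 v := by rw [hftc, h0, sub_zero]
      rw [e]
      have hb : ∀ v ∈ Set.uIoc (0:ℝ) u, ‖Ph2 v‖ ≤ 3 / 2 * W := by
        intro v hv
        rw [Set.uIoc_of_le hu.1] at hv
        rw [Real.norm_eq_abs]
        have : Ph2 v = fe (x + v) - 2 * f x + fe (x - v) := by simp only [hPh2]; ring
        rw [this]
        exact hfeD x hx v hv.1.le (le_trans hv.2 hu.2)
      have := intervalIntegral.norm_integral_le_of_norm_le_const hb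
      rw [Real.norm_eq_abs, sub_zero, abs_of_nonneg hu.1] at this
      exact this
    have key2 : |Ph t| ≤ 3 / 4 * W * t ^ 2 := by
      have hPh0 : Ph 0 = 0 := by
        simp only [hPh, add_zero, sub_zero]; ring
      have hftc : ∫ u in (0:ℝ)..t, Ph1 u = Ph t - Ph 0 :=
        intervalIntegral.integral_eq_sub_of_hasDerivAt (fun u _ => hPhd u)
          (hPh1c.intervalIntegrable 0 t)
      have e : Ph t = ∫ u in (0:ℝ)..t, Ph1 u := by rw [hftc, hPh0, sub_zero]
      have s1 : |∫ u in (0:ℝ)..t, Ph1 u| ≤ ∫ u in (0:ℝ)..t, |Ph1 u| :=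
        intervalIntegral.abs_integral_le_integral_abs ht0.le
      have s2 : ∫ u in (0:ℝ)..t, |Ph1 u| ≤ ∫ u in (0:ℝ)..t, 3 / 2 * W * u := by
        apply intervalIntegral.integral_mono_on ht0.le
          (hPh1c.abs.intervalIntegrable 0 t)
          ((continuous_const.mul continuous_id).intervalIntegrable 0 t)
        exact key1
      have s3 : ∫ u in (0:ℝ)..t, 3 / 2 * W * u = 3 / 4 * W * t ^ 2 := by
        rw [intervalIntegral.integral_const_mul, integral_id]
        ring
      rw [e]
      linarith
    have hgx : g x - f x = (t ^ 2)⁻¹ * Ph t := by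
      simp only [hg, hPh]
      field_simp
    have e : f x - g x = -((t ^ 2)⁻¹ * Ph t) := by linarith
    rw [e, abs_neg, abs_mul, abs_of_pos (inv_pos.mpr ht2)]
    have := mul_le_mul_of_nonneg_left key2 (inv_pos.mpr ht2).le
    have e2 : (t ^ 2)⁻¹ * (3 / 4 * W * t ^ 2) = 3 / 4 * W := by
      field_simp
    linarith
  -- conclusion
  have hmem : supOn a b (fun x => f x - g x) + t ^ 2 * supOn a b g2 ∈
      {v : ℝ | ∃ g g' g'', IsC2On a b g g' g'' ∧
        v = supOn a b (fun x => f x - g x) + t ^ 2 * supOn a b g''} :=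
    ⟨g, g1, g2, ⟨fun x _ => (hgd x).hasDerivWithinAt, fun x _ => (hg1d x).hasDerivWithinAt,
      hg2c.continuousOn⟩, rfl⟩
  have hbdd : BddBelow {v : ℝ | ∃ g g' g'', IsC2On a b g g' g'' ∧
      v = supOn a b (fun x => f x - g x) + t ^ 2 * supOn a b g''} := by
    refine ⟨0, ?_⟩
    rintro v ⟨g0, g0', g0'', _, rfl⟩
    have n1 : 0 ≤ supOn a b (fun x => f x - g0 x) :=
      Real.iSup_nonneg fun i => abs_nonneg _
    have n2 : 0 ≤ supOn a b g0'' := Real.iSup_nonneg fun i => abs_nonneg _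
    positivity
  have hKF : KF a b (t ^ 2) f ≤ supOn a b (fun x => f x - g x) + t ^ 2 * supOn a b g2 :=
    csInf_le hbdd hmem
  have hprod : t ^ 2 * supOn a b g2 ≤ 3 / 2 * W := by
    have h := mul_le_mul_of_nonneg_left hsup2 ht2.le
    have e : t ^ 2 * ((t ^ 2)⁻¹ * (3 / 2 * W)) = 3 / 2 * W := by
      field_simp
    linarith
  linarith
end
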